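/- arXiv:2001.03710 — 8 statements merged into one kernel-verified Lean document; each statement's English description precedes it below -/
import Mathlib

section
/- Consider the unsupervised setting: a collection 𝒫 of probability measures on 𝒳^∞ together with a measurable loss ℓ : 𝒫 × 𝒳^* × 𝒴 → {0,1}. If there exists a nesting {𝒫_i : i ≥ 1} of 𝒫 such that for every i ≥ 1 and every η > 0 the pair (𝒫_i, ℓ) is η-predictable, then (𝒫, ℓ) is e.a.s.-predictable. -/
open MeasureTheory Set ENNReal

namespace Stmt1

variable {X Y : Type*} [MeasurableSpace X]

/-- In the unsupervised setting, with loss `ℓ : 𝒫 × 𝒳^* × 𝒴 → {0,1}` (Bool-valued, `true` =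
loss 1), `ErrAt ℓ p Φ ω n` says that the predictor `Φ` incurs a loss at time `n+1` on the sample
path `ω` when the model `p` is in force. -/
def ErrAt (ℓ : Measure (ℕ → X) → (n : ℕ) → (Fin n → X) → Y → Bool)
    (p : Measure (ℕ → X)) (Φ : (n : ℕ) → (Fin n → X) → Y) (ω : ℕ → X) (n : ℕ) : Prop :=
  ℓ p (n + 1) (fun i => ω i.val) (Φ n (fun i => ω i.val)) = true

/-- `(𝒫, ℓ)` is `η`-predictable: there are a predictor `Φ` and a sample size `N` such that for
every `p ∈ 𝒫`, the probability that `Φ` incurs any loss from time `N` on is at most `η`. -/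
def EtaPredictable (P : Set (Measure (ℕ → X)))
    (ℓ : Measure (ℕ → X) → (n : ℕ) → (Fin n → X) → Y → Bool) (η : ℝ≥0∞) : Prop :=
  ∃ (Φ : (n : ℕ) → (Fin n → X) → Y) (N : ℕ), ∀ p ∈ P,
    p {ω | ∃ n, N ≤ n ∧ ErrAt ℓ p Φ ω n} ≤ η

/-- `(𝒫, ℓ)` is e.a.s.-predictable: there is a predictor `Φ` such that for every `p ∈ 𝒫`,
with probability 1 only finitely many losses are incurred. -/
def EASPredictable (P : Set (Measure (ℕ → X)))
    (ℓ : Measure (ℕ → X) → (n : ℕ) → (Fin n → X) → Y → Bool) : Prop :=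
  ∃ Φ : (n : ℕ) → (Fin n → X) → Y, ∀ p ∈ P,
    p {ω | {n | ErrAt ℓ p Φ ω n}.Finite} = 1

/-- In the unsupervised setting, if there is a nesting `{𝒫_i}` of `𝒫` such that
each `(𝒫_i, ℓ)` is `η`-predictable for every `η > 0`, then `(𝒫, ℓ)` is e.a.s.-predictable. -/
theorem easPredictable_of_nesting_etaPredictable
    (P : Set (Measure (ℕ → X))) (hP : ∀ p ∈ P, IsProbabilityMeasure p)
    (ℓ : Measure (ℕ → X) → (n : ℕ) → (Fin n → X) → Y → Bool)
    (Q : ℕ → Set (Measure (ℕ → X)))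
    (hmono : ∀ i, Q i ⊆ Q (i + 1)) (hunion : (⋃ i, Q i) = P)
    (hη : ∀ i, ∀ η : ℝ≥0∞, 0 < η → EtaPredictable (Q i) ℓ η) :
    EASPredictable P ℓ := by
  classical
  choose Φs Ns hΦ using fun i => hη i ((2 : ℝ≥0∞)⁻¹ ^ i) (ENNReal.pow_pos (ENNReal.inv_pos.mpr ENNReal.ofNat_ne_top) i)
  set M : ℕ → ℕ := fun i => Nat.rec (Ns 0) (fun k Mk => max (Mk + 1) (Ns (k + 1))) i with hMdef
  have hMsucc : ∀ i, M (i + 1) = max (M i + 1) (Ns (i + 1)) := fun i => rfl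
  have hMmono : StrictMono M := strictMono_nat_of_lt_succ (fun i => by
    rw [hMsucc]; exact lt_of_lt_of_le (Nat.lt_succ_self _) (le_max_left _ _))
  have hMN : ∀ i, Ns i ≤ M i := by
    intro i
    cases i with
    | zero => exact le_refl _
    | succ k => rw [hMsucc]; exact le_max_right _ _
  set idx : ℕ → ℕ := fun n => Nat.findGreatest (fun i => M i ≤ n) n with hidx
  refine ⟨fun n x => Φs (idx n) n x, ?_⟩
  intro p hp
  have hprob := hP p hp
  obtain ⟨j, hj⟩ : ∃ j, p ∈ Q j := by rw [← hunion] at hp; exact mem_iUnion.mp hp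
  have hQ : ∀ i, j ≤ i → p ∈ Q i := by
    intro i hi
    induction hi with
    | refl => exact hj
    | step _ ih => exact hmono _ ih
  set E : ℕ → Set (ℕ → X) := fun i => {ω | ∃ n, Ns i ≤ n ∧ ErrAt ℓ p (Φs i) ω n} with hE
  have hEbound : ∀ i, j ≤ i → p (E i) ≤ (2 : ℝ≥0∞)⁻¹ ^ i := fun i hi => hΦ i p (hQ i hi)
  have hlimsup : p (Filter.limsup (fun k => E (j + k)) Filter.atTop) = 0 := by
    apply measure_limsup_atTop_eq_zero
    have hle : ∑' k, p (E (j + k)) ≤ ∑' k : ℕ, (2 : ℝ≥0∞)⁻¹ ^ k := by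
      refine ENNReal.tsum_le_tsum fun k => ?_
      calc p (E (j + k)) ≤ (2 : ℝ≥0∞)⁻¹ ^ (j + k) := hEbound _ (Nat.le_add_right _ _)
        _ ≤ (2 : ℝ≥0∞)⁻¹ ^ k :=
          pow_le_pow_of_le_one (zero_le) (ENNReal.inv_le_one.mpr one_le_two)
            (Nat.le_add_left _ _)
    refine ne_top_of_le_ne_top ?_ hle
    rw [ENNReal.tsum_geometric, ENNReal.one_sub_inv_two, inv_inv]
    exact ENNReal.ofNat_ne_top
  have hsub : {ω : ℕ → X | ¬ ({n | ErrAt ℓ p (fun n x => Φs (idx n) n x) ω n}).Finite} ⊆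
      Filter.limsup (fun k => E (j + k)) Filter.atTop := by
    intro ω hω
    rw [Filter.limsup_eq_iInf_iSup_of_nat]
    simp only [iInf_eq_iInter, iSup_eq_iUnion, Set.mem_iInter, Set.mem_iUnion]
    intro K
    have hinf : {n | ErrAt ℓ p (fun n x => Φs (idx n) n x) ω n}.Infinite := hω
    obtain ⟨n, hnT, hlt⟩ := hinf.exists_gt (M (j + K))
    have hMKn : M (j + K) ≤ n := hlt.le
    have hjKn : j + K ≤ n := le_trans hMmono.le_apply hMKn
    have hKi : j + K ≤ idx n := Nat.le_findGreatest hjKn hMKn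
    have hMin : M (idx n) ≤ n := Nat.findGreatest_spec (P := fun i => M i ≤ n) (n := n) hjKn hMKn
    have hNi : Ns (idx n) ≤ n := le_trans (hMN _) hMin
    refine ⟨idx n - j, by omega, ?_⟩
    have hji : j + (idx n - j) = idx n := by omega
    rw [hji]
    exact ⟨n, hNi, hnT⟩
  have hbad : p {ω : ℕ → X | ¬ ({n | ErrAt ℓ p (fun n x => Φs (idx n) n x) ω n}).Finite} = 0 :=
    le_antisymm (le_trans (measure_mono hsub) hlimsup.le) (zero_le)
  refine le_antisymm prob_le_one ?_
  have hcover : p Set.univ ≤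
      p {ω : ℕ → X | ({n | ErrAt ℓ p (fun n x => Φs (idx n) n x) ω n}).Finite} +
      p {ω : ℕ → X | ¬ ({n | ErrAt ℓ p (fun n x => Φs (idx n) n x) ω n}).Finite} := by
    refine le_trans (measure_mono ?_) (measure_union_le _ _)
    intro ω _
    by_cases h : ({n | ErrAt ℓ p (fun n x => Φs (idx n) n x) ω n}).Finite
    · exact Or.inl h
    · exact Or.inr h
  rw [hbad, add_zero, measure_univ] at hcover
  exact hcover


end Stmt1
end

section
/- Back and forth lemma: Let 𝒫_1, 𝒫_2, … be countably many collections of probability measures on 𝒳^∞, each e.a.s.-predictable with respect to the same supervised loss ℓ : 𝒳^* × 𝒴 → {0,1}. Then the union 𝒫 = ⋃_{i=1}^∞ 𝒫_i is also e.a.s.-predictable with loss ℓ. -/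
open MeasureTheory Set ENNReal

namespace Stmt3

variable {X Y : Type*} [MeasurableSpace X]

/-- In the supervised setting, with loss `ℓ : 𝒳^* × 𝒴 → {0,1}` (Bool-valued, `true` = loss 1),
`ErrAt ℓ Φ ω n` says that the predictor `Φ` incurs a loss at time `n+1` on the sample path `ω`. -/
def ErrAt (ℓ : (n : ℕ) → (Fin n → X) → Y → Bool)
    (Φ : (n : ℕ) → (Fin n → X) → Y) (ω : ℕ → X) (n : ℕ) : Prop :=
  ℓ (n + 1) (fun i => ω i.val) (Φ n (fun i => ω i.val)) = true

/-- `(𝒫, ℓ)` is e.a.s.-predictable: there is a predictor `Φ` such that for every `p ∈ 𝒫`,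
with probability 1 only finitely many losses are incurred. -/
def EASPredictable (P : Set (Measure (ℕ → X)))
    (ℓ : (n : ℕ) → (Fin n → X) → Y → Bool) : Prop :=
  ∃ Φ : (n : ℕ) → (Fin n → X) → Y, ∀ p ∈ P,
    p {ω | {n | ErrAt ℓ Φ ω n}.Finite} = 1

/-- Whether predictor `Φ` errs at time `m` on the finite history `h` of length `n` (needs
`m < n` so that the relevant prefix is inside the history). -/
def errB (ℓ : (n : ℕ) → (Fin n → X) → Y → Bool)
    (Φ : (n : ℕ) → (Fin n → X) → Y) (n : ℕ) (h : Fin n → X) (m : ℕ) : Prop :=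
  ∃ hm : m < n,
    ℓ (m + 1) (fun k => h ⟨k.val, lt_of_le_of_lt (Nat.lt_succ_iff.mp k.isLt) hm⟩)
      (Φ m (fun k => h ⟨k.val, lt_trans k.isLt hm⟩)) = true

open Classical in
/-- Number of errors of `Φ` on the finite history `h`. -/
noncomputable def cnt (ℓ : (n : ℕ) → (Fin n → X) → Y → Bool)
    (Φ : (n : ℕ) → (Fin n → X) → Y) (n : ℕ) (h : Fin n → X) : ℕ :=
  ((Finset.range n).filter (errB ℓ Φ n h)).card

lemma errB_restrict (ℓ : (n : ℕ) → (Fin n → X) → Y → Bool)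
    (Φ : (n : ℕ) → (Fin n → X) → Y) (ω : ℕ → X) (n m : ℕ) :
    errB ℓ Φ n (fun i : Fin n => ω i.val) m ↔ m < n ∧ ErrAt ℓ Φ ω m := by
  constructor
  · rintro ⟨hm, h⟩; exact ⟨hm, h⟩
  · rintro ⟨hm, h⟩; exact ⟨hm, h⟩

open Classical in
lemma cnt_restrict (ℓ : (n : ℕ) → (Fin n → X) → Y → Bool)
    (Φ : (n : ℕ) → (Fin n → X) → Y) (ω : ℕ → X) (n : ℕ) :
    cnt ℓ Φ n (fun i : Fin n => ω i.val)
      = ((Finset.range n).filter fun m => ErrAt ℓ Φ ω m).card := by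
  unfold cnt
  congr 1
  apply Finset.filter_congr
  intro m hm
  simp only [Finset.mem_range] at hm
  simp [errB_restrict, hm]

/-- **Back and forth lemma.** A countable union of e.a.s.-predictable classes,
all with the same supervised loss `ℓ`, is e.a.s.-predictable. -/
theorem easPredictable_iUnion
    (P : ℕ → Set (Measure (ℕ → X))) (hP : ∀ i, ∀ p ∈ P i, IsProbabilityMeasure p)
    (ℓ : (n : ℕ) → (Fin n → X) → Y → Bool)
    (heas : ∀ i, EASPredictable (P i) ℓ) :
    EASPredictable (⋃ i, P i) ℓ := by
  classical
  choose Φs hΦs using heas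
  -- the penalized score of expert `i` on a history
  set score : ℕ → (n : ℕ) → (Fin n → X) → ℕ :=
    fun i n h => cnt ℓ (Φs i) n h + i with hscore
  have hex : ∀ (n : ℕ) (h : Fin n → X),
      ∃ i, score i n h = sInf (Set.range fun i => score i n h) :=
    fun n h => Nat.sInf_mem (Set.range_nonempty _)
  -- the leader: least expert achieving the minimal penalized score
  set L : (n : ℕ) → (Fin n → X) → ℕ := fun n h => Nat.find (hex n h) with hLdef
  have hLmin : ∀ (n : ℕ) (h : Fin n → X) (i : ℕ), score (L n h) n h ≤ score i n h := by
    intro n h i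
    have h1 : score (L n h) n h = sInf (Set.range fun i => score i n h) :=
      Nat.find_spec (hex n h)
    rw [h1]
    exact Nat.sInf_le ⟨i, rfl⟩
  refine ⟨fun n h => Φs (L n h) n h, ?_⟩
  rintro p hp
  simp only [mem_iUnion] at hp
  obtain ⟨j, hpj⟩ := hp
  haveI := hP j p hpj
  have h1 := hΦs j p hpj
  set Φ : (n : ℕ) → (Fin n → X) → Y := fun n h => Φs (L n h) n h with hΦdef
  have hsub : {ω | {n | ErrAt ℓ (Φs j) ω n}.Finite}
      ⊆ {ω | {n | ErrAt ℓ Φ ω n}.Finite} := by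
    intro ω hω
    simp only [mem_setOf_eq] at hω ⊢
    -- number of errors of expert `i` up to time `n` on path `ω`
    set C : ℕ → ℕ → ℕ :=
      fun i n => ((Finset.range n).filter fun m => ErrAt ℓ (Φs i) ω m).card with hCdef
    have hCcnt : ∀ i n, cnt ℓ (Φs i) n (fun k : Fin n => ω k.val) = C i n :=
      fun i n => cnt_restrict ℓ (Φs i) ω n
    -- bound on expert j's errors
    set V : ℕ := hω.toFinset.card + j with hVdef
    have hCj : ∀ n, C j n ≤ hω.toFinset.card := by
      intro n
      apply Finset.card_le_card
      intro m hm
      simp only [Finset.mem_filter] at hm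
      simpa using hm.2
    -- the leader at time n on ω's history
    set lead : ℕ → ℕ := fun n => L n (fun k : Fin n => ω k.val) with hleaddef
    have hlead : ∀ n, C (lead n) n + lead n ≤ V := by
      intro n
      have := hLmin n (fun k : Fin n => ω k.val) j
      simp only [hscore, hCcnt] at this
      calc C (lead n) n + lead n ≤ C j n + j := this
        _ ≤ V := by have := hCj n; simp only [hVdef]; omega
    -- an error of the combined predictor at time n is an error of the leader
    have herr : ∀ n, ErrAt ℓ Φ ω n → ErrAt ℓ (Φs (lead n)) ω n := fun n h => h
    -- monotonicity of C
    have hCmono : ∀ i n n', n ≤ n' → C i n ≤ C i n' := by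
      intro i n n' hn
      apply Finset.card_le_card
      exact Finset.filter_subset_filter _ (Finset.range_subset_range.mpr hn)
    have hCsucc : ∀ i n, ErrAt ℓ (Φs i) ω n → C i n + 1 ≤ C i (n + 1) := by
      intro i n hn
      have : (Finset.range (n + 1)).filter (fun m => ErrAt ℓ (Φs i) ω m)
          = insert n ((Finset.range n).filter fun m => ErrAt ℓ (Φs i) ω m) := by
        rw [Finset.range_add_one, Finset.filter_insert, if_pos hn]
      simp only [hCdef, this]
      rw [Finset.card_insert_of_notMem (by simp)]
    -- the error set injects into a finite set of pairs
    have key : ∀ n n', n < n' → ErrAt ℓ Φ ω n → ErrAt ℓ Φ ω n' →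
        (lead n, C (lead n) n) = (lead n', C (lead n') n') → False := by
      intro n n' hlt hn hn' hfe
      simp only [Prod.mk.injEq] at hfe
      obtain ⟨hfe1, hfe2⟩ := hfe
      have he : ErrAt ℓ (Φs (lead n)) ω n := herr n hn
      have h2 : C (lead n) n + 1 ≤ C (lead n) n' :=
        le_trans (hCsucc _ n he) (hCmono _ _ _ (by omega))
      rw [hfe1] at hfe2 h2
      omega
    have hinj : Set.InjOn (fun n => (lead n, C (lead n) n)) {n | ErrAt ℓ Φ ω n} := by
      intro n hn n' hn' hfe
      rcases lt_trichotomy n n' with h | h | h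
      · exact (key n n' h hn hn' hfe).elim
      · exact h
      · exact (key n' n h hn' hn hfe.symm).elim
    have himg : (fun n => (lead n, C (lead n) n)) '' {n | ErrAt ℓ Φ ω n}
        ⊆ ↑(Finset.range (V + 1) ×ˢ Finset.range (V + 1)) := by
      rintro ⟨a, b⟩ ⟨n, _, hn⟩
      simp only [Prod.mk.injEq] at hn
      have := hlead n
      simp only [Finset.coe_product, Finset.coe_range, Set.mem_prod, Set.mem_Iio]
      omega
    exact Set.Finite.of_finite_image
      ((Finset.range (V + 1) ×ˢ Finset.range (V + 1)).finite_toSet.subset himg) hinj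
  exact le_antisymm prob_le_one (h1 ▸ measure_mono hsub)

end Stmt3
end

section
/- Let 𝒫_1 ⊆ 𝒫_2 ⊆ ⋯ be countably many nested collections of probability measures on 𝒳^∞ such that for every i, the pair (𝒫_i, ℓ) is 2^{−i}-predictable with respect to the loss ℓ. Then 𝒫 = ⋃_{i∈ℕ} 𝒫_i is e.a.s.-predictable with loss ℓ. -/
open MeasureTheory Set ENNReal Filter

namespace Stmt4

variable {X Y : Type*} [MeasurableSpace X]

/-- In the unsupervised setting, with loss `ℓ : 𝒫 × 𝒳^* × 𝒴 → {0,1}` (Bool-valued, `true` =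
loss 1), `ErrAt ℓ p Φ ω n` says that the predictor `Φ` incurs a loss at time `n+1` on the sample
path `ω` when the model `p` is in force. -/
def ErrAt (ℓ : Measure (ℕ → X) → (n : ℕ) → (Fin n → X) → Y → Bool)
    (p : Measure (ℕ → X)) (Φ : (n : ℕ) → (Fin n → X) → Y) (ω : ℕ → X) (n : ℕ) : Prop :=
  ℓ p (n + 1) (fun i => ω i.val) (Φ n (fun i => ω i.val)) = true

/-- `(𝒫, ℓ)` is `η`-predictable: there are a predictor `Φ` and a sample size `N` such that for
every `p ∈ 𝒫`, the probability that `Φ` incurs any loss from time `N` on is at most `η`. -/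
def EtaPredictable (P : Set (Measure (ℕ → X)))
    (ℓ : Measure (ℕ → X) → (n : ℕ) → (Fin n → X) → Y → Bool) (η : ℝ≥0∞) : Prop :=
  ∃ (Φ : (n : ℕ) → (Fin n → X) → Y) (N : ℕ), ∀ p ∈ P,
    p {ω | ∃ n, N ≤ n ∧ ErrAt ℓ p Φ ω n} ≤ η

/-- `(𝒫, ℓ)` is e.a.s.-predictable: there is a predictor `Φ` such that for every `p ∈ 𝒫`,
with probability 1 only finitely many losses are incurred. -/
def EASPredictable (P : Set (Measure (ℕ → X)))
    (ℓ : Measure (ℕ → X) → (n : ℕ) → (Fin n → X) → Y → Bool) : Prop :=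
  ∃ Φ : (n : ℕ) → (Fin n → X) → Y, ∀ p ∈ P,
    p {ω | {n | ErrAt ℓ p Φ ω n}.Finite} = 1

/-- If `𝒫_1 ⊆ 𝒫_2 ⊆ ⋯` are nested classes such that each `(𝒫_i, ℓ)` is
`2⁻ⁱ`-predictable, then `𝒫 = ⋃_i 𝒫_i` is e.a.s.-predictable with loss `ℓ`. -/
theorem easPredictable_of_nested_geometric
    (Q : ℕ → Set (Measure (ℕ → X)))
    (hprob : ∀ i, ∀ p ∈ Q i, IsProbabilityMeasure p)
    (ℓ : Measure (ℕ → X) → (n : ℕ) → (Fin n → X) → Y → Bool)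
    (hmono : ∀ i, Q i ⊆ Q (i + 1))
    (hη : ∀ i, EtaPredictable (Q i) ℓ ((2 : ℝ≥0∞)⁻¹ ^ i)) :
    EASPredictable (⋃ i, Q i) ℓ := by
  choose Φ N hΦ using hη
  -- switching times
  set M : ℕ → ℕ := fun j => j + (Finset.range (j + 1)).sup N with hM
  have hjM : ∀ j, j ≤ M j := fun j => Nat.le_add_right _ _
  have hNM : ∀ j, N j ≤ M j := fun j =>
    le_trans (Finset.le_sup (Finset.self_mem_range_succ j)) (Nat.le_add_left _ _)
  -- index used at time n
  set J : ℕ → ℕ := fun n => sSup {j | M j ≤ n} with hJ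
  have hbdd : ∀ n : ℕ, BddAbove {j | M j ≤ n} := by
    intro n
    exact ⟨n, fun j hj => le_trans (hjM j) hj⟩
  have hJge : ∀ j n, M j ≤ n → j ≤ J n := fun j n h => le_csSup (hbdd n) h
  have hJmem : ∀ j n, M j ≤ n → M (J n) ≤ n := by
    intro j n h
    have hne : Set.Nonempty {j | M j ≤ n} := ⟨j, h⟩
    exact Nat.sSup_mem hne (hbdd n)
  -- the combined predictor
  refine ⟨fun n => Φ (J n) n, ?_⟩
  rintro p hp
  rw [Set.mem_iUnion] at hp
  obtain ⟨i, hpi⟩ := hp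
  haveI : IsProbabilityMeasure p := hprob i p hpi
  -- p belongs to all later classes
  have hpk : ∀ k, i ≤ k → p ∈ Q k := by
    intro k hk
    induction k with
    | zero => simpa [Nat.le_zero.mp hk] using hpi
    | succ k ih =>
      rcases Nat.lt_or_ge i (k + 1) with h | h
      · exact hmono k (ih (Nat.lt_succ_iff.mp h))
      · have : i = k + 1 := le_antisymm hk h
        simpa [← this] using hpi
  set A : ℕ → Set (ℕ → X) := fun k => {ω | ∃ n, N k ≤ n ∧ ErrAt ℓ p (Φ k) ω n} with hA
  have hpA : ∀ k, i ≤ k → p (A k) ≤ (2 : ℝ≥0∞)⁻¹ ^ k := fun k hk => hΦ k p (hpk k hk)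
  -- Borel–Cantelli on the shifted sequence
  set B : ℕ → Set (ℕ → X) := fun k => A (k + i) with hB
  have hsum : ∑' k, p (B k) ≠ ∞ := by
    have hle : ∀ k, p (B k) ≤ (2 : ℝ≥0∞)⁻¹ ^ k := by
      intro k
      calc p (B k) ≤ (2 : ℝ≥0∞)⁻¹ ^ (k + i) := hpA (k + i) (Nat.le_add_left _ _)
        _ ≤ (2 : ℝ≥0∞)⁻¹ ^ k := by
            exact pow_le_pow_of_le_one zero_le (by norm_num) (Nat.le_add_right _ _)
    have : ∑' k, p (B k) ≤ ∑' k : ℕ, (2 : ℝ≥0∞)⁻¹ ^ k := ENNReal.tsum_le_tsum hle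
    refine ne_top_of_le_ne_top ?_ this
    rw [ENNReal.tsum_geometric, ENNReal.one_sub_inv_two, inv_inv]
    exact ENNReal.ofNat_ne_top
  have hlimsup : p (limsup B atTop) = 0 := measure_limsup_atTop_eq_zero hsum
  -- infinite error set implies membership in limsup
  have hsub : {ω : ℕ → X | ¬ {n | ErrAt ℓ p (fun n => Φ (J n) n) ω n}.Finite} ⊆ limsup B atTop := by
    intro ω hω
    rw [limsup_eq_iInf_iSup_of_nat]
    simp only [iInf_eq_iInter, iSup_eq_iUnion, Set.mem_iInter, Set.mem_iUnion]
    intro m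
    have hinf : {n | ErrAt ℓ p (fun n => Φ (J n) n) ω n}.Infinite := hω
    obtain ⟨n, hn, hnge⟩ := hinf.exists_gt (M (m + i))
    have hMn : M (m + i) ≤ n := le_of_lt hnge
    have h1 : m + i ≤ J n := hJge _ _ hMn
    have h2 : M (J n) ≤ n := hJmem _ _ hMn
    have h3 : N (J n) ≤ n := le_trans (hNM _) h2
    have hωA : ω ∈ A (J n) := ⟨n, h3, hn⟩
    refine ⟨J n - i, ?_, ?_⟩
    · omega
    · show ω ∈ B (J n - i)
      have hJi : J n - i + i = J n := by omega
      have : B (J n - i) = A (J n - i + i) := rfl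
      rw [this, hJi]
      exact hωA
  have h0 : p {ω : ℕ → X | ¬ {n | ErrAt ℓ p (fun n => Φ (J n) n) ω n}.Finite} = 0 :=
    measure_mono_null hsub hlimsup
  -- conclude measure 1
  set S := {ω : ℕ → X | {n | ErrAt ℓ p (fun n => Φ (J n) n) ω n}.Finite} with hS
  have hScompl : Sᶜ = {ω : ℕ → X | ¬ {n | ErrAt ℓ p (fun n => Φ (J n) n) ω n}.Finite} := rfl
  have hunion : (1 : ℝ≥0∞) = p univ := (measure_univ).symm
  have : p univ ≤ p S + p Sᶜ := by
    rw [← Set.union_compl_self S]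
    exact measure_union_le _ _
  rw [hScompl, h0, add_zero] at this
  exact le_antisymm prob_le_one (hunion ▸ this)


end Stmt4
end

section
/- Fix ε > 0 and a probability distribution μ on ℝ^d. In the game where nature fixes a measurable binary function h on ℝ^d, samples x_1, x_2, … are drawn i.i.d. from μ with labels h(x_n) revealed, and at each step the learner outputs a measurable function g_n on ℝ^d incurring loss 1{μ({x : h(x) ≠ g_n(x)}) > ε}, the class of ALL measurable binary functions on ℝ^d is e.a.s.-learnable. -/
open MeasureTheory Set ENNReal Finset ProbabilityTheory

namespace Stmt10

/-- `P` is the law of an i.i.d. sequence of samples from `p`: every finite-dimensional marginal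
of `P` along the first `n` coordinates is the `n`-fold product of `p`. -/
def IsIidLaw {α : Type*} [MeasurableSpace α] (p : Measure α) (P : Measure (ℕ → α)) : Prop :=
  ∀ n : ℕ, P.map (fun ω (i : Fin n) => ω i.val) = Measure.pi (fun _ : Fin n => p)


open MeasureTheory Set ENNReal Finset ProbabilityTheory

section cheb
variable {X : Type*} [MeasurableSpace X] (μ : Measure X) [IsProbabilityMeasure μ]

-- product collapse helper
lemma prod_two {β : Type*} [CommMonoid β] {N : ℕ} (F : Fin N → β) (k k' : Fin N) (hkk : k ≠ k')
    (h1 : ∀ m, m ≠ k → m ≠ k' → F m = 1) : ∏ m, F m = F k * F k' := by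
  rw [← Finset.mul_prod_erase Finset.univ F (Finset.mem_univ k),
      ← Finset.mul_prod_erase _ F (Finset.mem_erase.2 ⟨Ne.symm hkk, Finset.mem_univ k'⟩)]
  rw [Finset.prod_eq_one (fun m hm => ?_), mul_one]
  simp only [Finset.mem_erase] at hm
  exact h1 m hm.2.1 hm.1

lemma prod_one {β : Type*} [CommMonoid β] {N : ℕ} (F : Fin N → β) (k : Fin N)
    (h1 : ∀ m, m ≠ k → F m = 1) : ∏ m, F m = F k := by
  rw [← Finset.mul_prod_erase Finset.univ F (Finset.mem_univ k),
      Finset.prod_eq_one (fun m hm => h1 m (Finset.mem_erase.1 hm).1), mul_one]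

lemma key_one {N : ℕ} {D : Set X} (hD : MeasurableSet D) (k : Fin N) :
    ∫ v : Fin N → X, D.indicator (fun _ => (1:ℝ)) (v k) ∂(Measure.pi fun _ => μ)
      = (μ D).toReal := by
  letI : MeasureSpace X := ⟨μ⟩
  have hvol : (Measure.pi fun _ : Fin N => μ) = (volume : Measure (Fin N → X)) :=
    (MeasureTheory.volume_pi).symm
  rw [hvol]
  set ind := D.indicator (fun _ => (1:ℝ)) with hind
  have h1 : ∀ v : Fin N → X, ind (v k) = ∏ m, (if m = k then ind else fun _ => 1) (v m) := by
    intro v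
    rw [prod_one _ k (fun m hm => by simp [hm])]
    simp
  calc ∫ v : Fin N → X, ind (v k)
      = ∫ v : Fin N → X, ∏ m, (if m = k then ind else fun _ => 1) (v m) := by
        exact integral_congr_ae (Filter.Eventually.of_forall h1)
    _ = ∏ m, ∫ x : X, (if m = k then ind else fun _ => 1) x := by
        exact MeasureTheory.integral_fintype_prod_eq_prod _
    _ = (μ D).toReal := by
        rw [prod_one _ k (fun m hm => by simp [hm])]
        rw [if_pos rfl]
        rw [MeasureTheory.integral_indicator_const (1:ℝ) hD]; simp; rfl
end cheb

section cheb2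
variable {X : Type*} [MeasurableSpace X] (μ : Measure X) [IsProbabilityMeasure μ]

lemma key_two {N : ℕ} {D : Set X} (hD : MeasurableSet D) (k k' : Fin N) (hkk : k ≠ k') :
    ∫ v : Fin N → X, D.indicator (fun _ => (1:ℝ)) (v k) * D.indicator (fun _ => (1:ℝ)) (v k')
        ∂(Measure.pi fun _ => μ) = (μ D).toReal * (μ D).toReal := by
  letI : MeasureSpace X := ⟨μ⟩
  have hvol : (Measure.pi fun _ : Fin N => μ) = (volume : Measure (Fin N → X)) :=
    (MeasureTheory.volume_pi).symm
  rw [hvol]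
  set ind := D.indicator (fun _ => (1:ℝ)) with hind
  have h1 : ∀ v : Fin N → X, ind (v k) * ind (v k')
      = ∏ m, (if m = k ∨ m = k' then ind else fun _ => 1) (v m) := by
    intro v
    rw [prod_two _ k k' hkk (fun m hm hm' => by simp [hm, hm'])]
    simp
  have hInd : ∫ x : X, ind x ∂(volume : Measure X) = (μ D).toReal := by
    rw [show (volume : Measure X) = μ from rfl, hind,
      MeasureTheory.integral_indicator_const (1:ℝ) hD]; simp; rfl
  calc ∫ v : Fin N → X, ind (v k) * ind (v k')
      = ∫ v : Fin N → X, ∏ m, (if m = k ∨ m = k' then ind else fun _ => 1) (v m) :=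
        integral_congr_ae (Filter.Eventually.of_forall h1)
    _ = ∏ m, ∫ x : X, (if m = k ∨ m = k' then ind else fun _ => 1) x :=
        MeasureTheory.integral_fintype_prod_eq_prod _
    _ = (μ D).toReal * (μ D).toReal := by
        rw [prod_two _ k k' hkk (fun m hm hm' => by simp [hm, hm'])]
        rw [if_pos (Or.inl rfl), if_pos (Or.inr rfl), hInd]
end cheb2

section cheb3
variable {X : Type*} [MeasurableSpace X] (μ : Measure X) [IsProbabilityMeasure μ]

lemma cheb {Lb N : ℕ} (e : Fin Lb → Fin N) (hinj : Function.Injective e)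
    {D : Set X} (hD : MeasurableSet D) {a : ℝ} (ha : 0 < a) :
    (Measure.pi fun _ : Fin N => μ)
      {v | a ≤ |(∑ i : Fin Lb, D.indicator (fun _ => (1:ℝ)) (v (e i)))
        - Lb * (μ D).toReal|} ≤ ENNReal.ofReal (Lb / a^2) := by
  classical
  set ρ := (μ D).toReal with hρ
  have hρ0 : 0 ≤ ρ := ENNReal.toReal_nonneg
  have hρ1 : ρ ≤ 1 := by
    have := ENNReal.toReal_mono ENNReal.one_ne_top (prob_le_one (μ := μ) (s := D))
    simpa using this
  set P := (Measure.pi fun _ : Fin N => μ) with hP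
  haveI : IsProbabilityMeasure P := by rw [hP]; infer_instance
  set ind := D.indicator (fun _ => (1:ℝ)) with hind
  have hindm : Measurable ind := measurable_const.indicator hD
  have hind0 : ∀ z, 0 ≤ ind z := by
    intro z; by_cases h : z ∈ D <;> simp [hind, Set.indicator_apply, h]
  have hind1 : ∀ z, ind z ≤ 1 := by
    intro z; by_cases h : z ∈ D <;> simp [hind, Set.indicator_apply, h]
  have hindsq : ∀ z, ind z * ind z = ind z := by
    intro z; by_cases h : z ∈ D <;> simp [hind, Set.indicator_apply, h]
  set S := fun v : Fin N → X => ∑ i : Fin Lb, ind (v (e i)) with hS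
  have hSmeas : Measurable S :=
    Finset.measurable_sum _ (fun i _ => hindm.comp (measurable_pi_apply (e i)))
  have hSbd : ∀ v, ‖S v‖ ≤ Lb := by
    intro v
    rw [Real.norm_eq_abs, abs_le]
    constructor
    · have : (0:ℝ) ≤ S v := Finset.sum_nonneg (fun i _ => hind0 _)
      have hL : (0:ℝ) ≤ Lb := Nat.cast_nonneg _
      linarith
    · calc S v ≤ ∑ _i : Fin Lb, (1:ℝ) := Finset.sum_le_sum (fun i _ => hind1 _)
        _ = Lb := by simp
  have hS2 : MemLp S 2 P :=
    MemLp.of_bound hSmeas.aestronglyMeasurable _ (Filter.Eventually.of_forall hSbd)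
  have bdd_int : ∀ (f : (Fin N → X) → ℝ) (C : ℝ), Measurable f → (∀ v, ‖f v‖ ≤ C) →
      Integrable f P := by
    intro f C hf hb
    exact memLp_one_iff_integrable.mp
      (MemLp.of_bound hf.aestronglyMeasurable C (Filter.Eventually.of_forall hb))
  have term_int : ∀ k : Fin N, Integrable (fun v : Fin N → X => ind (v k)) P := by
    intro k
    exact bdd_int _ 1 (hindm.comp (measurable_pi_apply k))
      (fun v => by rw [Real.norm_eq_abs, abs_of_nonneg (hind0 _)]; exact hind1 _)
  have ES : ∫ v, S v ∂P = Lb * ρ := by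
    rw [hS, integral_finset_sum _ (fun i _ => term_int (e i))]
    have : ∀ i : Fin Lb, ∫ v, ind (v (e i)) ∂P = ρ := fun i => key_one μ hD (e i)
    rw [Finset.sum_congr rfl (fun i _ => this i)]
    simp [mul_comm]
  have ES2 : ∫ v, S v * S v ∂P = Lb * ρ + ((Lb:ℝ) * Lb - Lb) * (ρ * ρ) := by
    have hexp : ∀ v, S v * S v = ∑ i : Fin Lb, ∑ j : Fin Lb, ind (v (e i)) * ind (v (e j)) := by
      intro v; rw [hS, Finset.sum_mul_sum]
    rw [integral_congr_ae (Filter.Eventually.of_forall hexp)]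
    have pair_int : ∀ i j : Fin Lb,
        Integrable (fun v : Fin N → X => ind (v (e i)) * ind (v (e j))) P := by
      intro i j
      refine bdd_int _ 1 ((hindm.comp (measurable_pi_apply (e i))).mul
        (hindm.comp (measurable_pi_apply (e j)))) (fun v => ?_)
      rw [Real.norm_eq_abs, abs_of_nonneg (mul_nonneg (hind0 _) (hind0 _))]
      calc ind (v (e i)) * ind (v (e j)) ≤ 1 * 1 :=
            mul_le_mul (hind1 _) (hind1 _) (hind0 _) zero_le_one
        _ = 1 := mul_one 1
    rw [integral_finset_sum _ (fun i _ => integrable_finset_sum _ (fun j _ => pair_int i j))]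
    have inner : ∀ i : Fin Lb, ∫ v, (∑ j : Fin Lb, ind (v (e i)) * ind (v (e j))) ∂P
        = Lb * (ρ * ρ) + (ρ - ρ * ρ) := by
      intro i
      rw [integral_finset_sum _ (fun j _ => pair_int i j)]
      have hval : ∀ j : Fin Lb, ∫ v, ind (v (e i)) * ind (v (e j)) ∂P
          = if j = i then ρ else ρ * ρ := by
        intro j
        by_cases h : j = i
        · subst h
          rw [if_pos rfl]
          have heq : (fun v : Fin N → X => ind (v (e j)) * ind (v (e j)))
              = fun v => ind (v (e j)) := funext fun v => hindsq _
          rw [heq]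
          exact key_one μ hD (e j)
        · rw [if_neg h]
          exact key_two μ hD (e i) (e j) (fun he => h (hinj he.symm))
      rw [Finset.sum_congr rfl (fun j _ => hval j)]
      have : ∀ j : Fin Lb, (if j = i then ρ else ρ * ρ)
          = ρ * ρ + (if j = i then ρ - ρ * ρ else 0) := by
        intro j; by_cases h : j = i <;> simp [h]
      rw [Finset.sum_congr rfl (fun j _ => this j), Finset.sum_add_distrib,
        Finset.sum_ite_eq' Finset.univ i (fun _ => ρ - ρ * ρ)]
      simp [mul_comm]
    rw [Finset.sum_congr rfl (fun i _ => inner i)]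
    simp only [Finset.sum_const, Finset.card_univ, Fintype.card_fin, nsmul_eq_mul]
    ring
  have hvar : variance S P ≤ Lb := by
    have hv := variance_eq_sub hS2
    have hsq : (fun v => (S v) ^ 2) = fun v => S v * S v := by funext v; ring
    rw [hv]
    have h1 : P[S ^ 2] = Lb * ρ + ((Lb:ℝ) * Lb - Lb) * (ρ * ρ) := by
      rw [← ES2]; congr 1
    rw [h1, ES]
    nlinarith [Nat.cast_nonneg (α := ℝ) Lb, hρ0, hρ1]
  have hcheb := meas_ge_le_variance_div_sq (μ := P) hS2 ha
  rw [ES] at hcheb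
  calc P {v | a ≤ |S v - Lb * ρ|} ≤ ENNReal.ofReal (variance S P / a ^ 2) := hcheb
    _ ≤ ENNReal.ofReal (Lb / a ^ 2) := by
        apply ENNReal.ofReal_le_ofReal
        gcongr
end cheb3
open MeasureTheory Set ENNReal Finset ProbabilityTheory


lemma meas_ne {X : Type*} [MeasurableSpace X] {h g : X → Bool}
    (hh : Measurable h) (hg : Measurable g) : MeasurableSet {y | h y ≠ g y} := by
  have hset : {y | h y ≠ g y}
      = (h ⁻¹' {true} ∩ g ⁻¹' {false}) ∪ (h ⁻¹' {false} ∩ g ⁻¹' {true}) := by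
    ext y
    cases hy : h y <;> cases hgy : g y <;> simp [hy, hgy]
  rw [hset]
  have htriv : ∀ s : Set Bool, MeasurableSet s := fun s => trivial
  exact ((hh (htriv _)).inter (hg (htriv _))).union ((hh (htriv _)).inter (hg (htriv _)))

lemma dense_class {d : ℕ} (μ : Measure (Fin d → ℝ)) [IsProbabilityMeasure μ] :
    ∃ g : ℕ → (Fin d → ℝ) → Bool, (∀ j, Measurable (g j)) ∧
      ∀ h : (Fin d → ℝ) → Bool, Measurable h → ∀ δ : ℝ, 0 < δ →
        ∃ j, μ {y | h y ≠ g j y} < ENNReal.ofReal δ := by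
  classical
  obtain ⟨𝒜, hcnt, hdense⟩ := MeasureTheory.exists_countable_measureDense (μ := μ)
  obtain ⟨A, hA⟩ := hcnt.exists_eq_range hdense.nonempty
  refine ⟨fun j y => if y ∈ A j then true else false, fun j => ?_, fun h hh δ hδ => ?_⟩
  · have hAj : MeasurableSet (A j) := hdense.measurable (A j) (by rw [hA]; exact mem_range_self j)
    exact Measurable.ite hAj measurable_const measurable_const
  · have hS : MeasurableSet (h ⁻¹' {true}) := hh trivial
    obtain ⟨t, ht, hlt⟩ := hdense.approx (h ⁻¹' {true}) hS (measure_ne_top μ _) δ hδ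
    rw [hA] at ht
    obtain ⟨j, rfl⟩ := ht
    refine ⟨j, ?_⟩
    have hset : {y | h y ≠ (fun j y => if y ∈ A j then true else false) j y}
        = symmDiff (h ⁻¹' {true}) (A j) := by
      ext y
      by_cases hy : y ∈ A j <;> cases hhy : h y <;>
        simp [Set.mem_symmDiff, hy, hhy]
    rw [hset]
    exact hlt

open MeasureTheory Set ENNReal Finset ProbabilityTheory


section aux
variable {d : ℕ}

/-- Extend a finite observation vector to an infinite sequence. -/
def extend (n : ℕ) (obs : Fin n → (Fin d → ℝ) × Bool) : ℕ → (Fin d → ℝ) × Bool :=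
  fun t => if ht : t < n then obs ⟨t, ht⟩ else ⟨fun _ => 0, false⟩

variable (g : ℕ → (Fin d → ℝ) → Bool) (L sB c : ℕ → ℕ) (ε : ℝ)

/-- Number of disagreements between labels and candidate `c j` on block `j`. -/
def cnt (j : ℕ) (w : ℕ → (Fin d → ℝ) × Bool) : ℝ :=
  ∑ i : Fin (L j), (if (w (sB j + i.1)).2 ≠ g (c j) ((w (sB j + i.1)).1) then (1:ℝ) else 0)

def pass (j : ℕ) (w : ℕ → (Fin d → ℝ) × Bool) : Prop :=
  cnt g L sB c j w ≤ 3/4 * ε * (L j)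

def fires (n : ℕ) (w : ℕ → (Fin d → ℝ) × Bool) : Prop :=
  ∃ j, sB (j+1) ≤ n ∧ pass g L sB c ε j w

open scoped Classical in
noncomputable def tau (n : ℕ) (obs : Fin n → (Fin d → ℝ) × Bool) : Bool :=
  if fires g L sB c ε n (extend n obs) then true else false

open scoped Classical in
noncomputable def sel (n : ℕ) (w : ℕ → (Fin d → ℝ) × Bool) : ℕ :=
  if hq : fires g L sB c ε n w then Nat.find hq else 0

noncomputable def Gdef (n : ℕ) (obs : Fin n → (Fin d → ℝ) × Bool) : (Fin d → ℝ) → Bool :=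
  g (c (sel g L sB c ε n (extend n obs)))

lemma tau_eq_true_iff (n : ℕ) (obs : Fin n → (Fin d → ℝ) × Bool) :
    tau g L sB c ε n obs = true ↔ fires g L sB c ε n (extend n obs) := by
  classical
  unfold tau
  split_ifs with h <;> simp [h]

lemma cnt_congr (j : ℕ) {w w' : ℕ → (Fin d → ℝ) × Bool}
    (hw : ∀ t, t < sB j + L j → w t = w' t) :
    cnt g L sB c j w = cnt g L sB c j w' := by
  unfold cnt
  refine Finset.sum_congr rfl (fun i _ => ?_)
  rw [hw (sB j + i.1) (by omega)]

lemma pass_congr (j : ℕ) {w w' : ℕ → (Fin d → ℝ) × Bool}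
    (hw : ∀ t, t < sB j + L j → w t = w' t) :
    pass g L sB c ε j w ↔ pass g L sB c ε j w' := by
  unfold pass
  rw [cnt_congr g L sB c j hw]

open scoped Classical in
lemma sel_spec (n : ℕ) (w : ℕ → (Fin d → ℝ) × Bool) (hq : fires g L sB c ε n w) :
    sB (sel g L sB c ε n w + 1) ≤ n ∧ pass g L sB c ε (sel g L sB c ε n w) w := by
  unfold sel
  rw [dif_pos hq]
  exact Nat.find_spec hq

lemma Gdef_apply (n : ℕ) (obs : Fin n → (Fin d → ℝ) × Bool) :
    Gdef g L sB c ε n obs = g (c (sel g L sB c ε n (extend n obs))) := rfl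

lemma cnt_w_eq (h : (Fin d → ℝ) → Bool) (j : ℕ) (x : ℕ → Fin d → ℝ) :
    cnt g L sB c j (fun t => (x t, h (x t)))
      = ∑ i : Fin (L j),
          ({y | h y ≠ g (c j) y}).indicator (fun _ => (1:ℝ)) (x (sB j + i.1)) := by
  unfold cnt
  refine Finset.sum_congr rfl (fun i _ => ?_)
  by_cases hy : h (x (sB j + i.1)) ≠ g (c j) (x (sB j + i.1))
  · rw [if_pos hy]
    exact (Set.indicator_of_mem
      (show x (sB j + i.1) ∈ {y | h y ≠ g (c j) y} from hy) (fun _ => (1:ℝ))).symm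
  · rw [if_neg hy]
    exact (Set.indicator_of_notMem
      (show x (sB j + i.1) ∉ {y | h y ≠ g (c j) y} from hy) (fun _ => (1:ℝ))).symm

end aux




/-- Fix `ε > 0` and a distribution `μ` on `ℝ^d`. In the game where the learner,
after seeing the labeled samples `(x_1, h(x_1)), …, (x_n, h(x_n))` (with `x_i` i.i.d. `∼ μ`),
outputs a measurable function `g_n` and incurs loss `1{μ{x : h(x) ≠ g_n(x)} > ε}`, the class of
ALL measurable binary functions on `ℝ^d` is e.a.s.-learnable: for every `η > 0` there are a
strategy `G` (outputting measurable functions) and a stopping rule `τ` such that for every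
measurable `h`, the stopping rule fires eventually a.s., and the probability that any loss is
incurred at or after the first firing time is less than `η`. -/
theorem pac_eas_learnable {d : ℕ}
    (μ : Measure (Fin d → ℝ)) [IsProbabilityMeasure μ]
    (Pμ : Measure (ℕ → Fin d → ℝ)) (hPμ : IsIidLaw μ Pμ)
    (ε : ℝ) (hε : 0 < ε) :
    ∀ η : ℝ≥0∞, 0 < η →
      ∃ (G : (n : ℕ) → (Fin n → (Fin d → ℝ) × Bool) → (Fin d → ℝ) → Bool)
        (τ : (n : ℕ) → (Fin n → (Fin d → ℝ) × Bool) → Bool),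
        (∀ n obs, Measurable (G n obs)) ∧
        ∀ h : (Fin d → ℝ) → Bool, Measurable h →
          Pμ {x | ∃ n, τ n (fun i => (x i.val, h (x i.val))) = true} = 1 ∧
          Pμ {x | ∃ n, (τ n (fun i => (x i.val, h (x i.val))) = true ∧
                ∀ m < n, τ m (fun i => (x i.val, h (x i.val))) = false) ∧
              ∃ k, n ≤ k ∧
                ENNReal.ofReal ε <
                  μ {y | h y ≠ G k (fun i => (x i.val, h (x i.val))) y}} < η := by
  intro η hη
  classical
  obtain ⟨g, hgmeas, hgdense⟩ := dense_class μ
  -- constants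
  set η' : ℝ≥0∞ := min η 1 with hη'def
  have hη'0 : 0 < η' := lt_min hη zero_lt_one
  have hη'top : η' ≠ ⊤ := ne_top_of_le_ne_top ENNReal.one_ne_top (min_le_right _ _)
  set r : ℝ := η'.toReal with hrdef
  have hr : 0 < r := ENNReal.toReal_pos hη'0.ne' hη'top
  obtain ⟨K, hK⟩ := exists_nat_gt (64 / (ε^2 * r))
  have hKposR : (0:ℝ) < K := lt_trans (by positivity) hK
  have hKpos : 0 < K := Nat.cast_pos.mp hKposR
  set L : ℕ → ℕ := fun j => K * 2^j with hLdef
  have hLpos : ∀ j, 0 < L j := fun j => Nat.mul_pos hKpos (pow_pos (by norm_num) j)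
  have hLcast : ∀ j, (0:ℝ) < (L j : ℝ) := fun j => Nat.cast_pos.mpr (hLpos j)
  set sB : ℕ → ℕ := fun j => ∑ i ∈ Finset.range j, L i with hsBdef
  have hsBs : ∀ j, sB (j+1) = sB j + L j := fun j => Finset.sum_range_succ L j
  set c : ℕ → ℕ := fun j => (Nat.unpair j).1 with hcdef
  have hcinf : ∀ i M : ℕ, ∃ j, M ≤ j ∧ c j = i := by
    intro i M
    exact ⟨Nat.pair i M, Nat.right_le_pair i M, by simp [hcdef]⟩
  refine ⟨Gdef g L sB c ε, tau g L sB c ε, fun n obs => hgmeas _, ?_⟩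
  intro h hh
  -- disagreement sets
  set D : ℕ → Set (Fin d → ℝ) := fun j => {y | h y ≠ g (c j) y} with hDdef
  have hD : ∀ j, MeasurableSet (D j) := fun j => meas_ne hh (hgmeas _)
  have hDne : ∀ j, μ (D j) ≠ ⊤ := fun j => measure_ne_top μ _
  set ρ : ℕ → ℝ := fun j => (μ (D j)).toReal with hρdef
  have hρ0 : ∀ j, 0 ≤ ρ j := fun j => ENNReal.toReal_nonneg
  -- consistency of pass under extension
  have hpass_ext : ∀ (j n : ℕ) (x : ℕ → Fin d → ℝ), sB (j+1) ≤ n →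
      (pass g L sB c ε j (extend n (fun i : Fin n => (x i.1, h (x i.1)))) ↔
        pass g L sB c ε j (fun t => (x t, h (x t)))) := by
    intro j n x hjn
    refine pass_congr g L sB c ε j (fun t ht => ?_)
    have htn : t < n := by rw [hsBs j] at hjn; omega
    simp [extend, dif_pos htn]
  -- pass sets
  set PS : ℕ → Set (ℕ → Fin d → ℝ) :=
    fun j => {x | pass g L sB c ε j (fun t => (x t, h (x t)))} with hPSdef
  -- projections and block events
  have he : ∀ (j : ℕ) (i : Fin (L j)), sB j + i.1 < sB (j+1) := by
    intro j i
    rw [hsBs j]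
    omega
  set e : (j : ℕ) → Fin (L j) → Fin (sB (j+1)) := fun j i => ⟨sB j + i.1, he j i⟩ with hedef
  have heinj : ∀ j, Function.Injective (e j) := by
    intro j i i' hii
    have : sB j + i.1 = sB j + i'.1 := congrArg Fin.val hii
    exact Fin.ext (by omega)
  set S : (j : ℕ) → (Fin (sB (j+1)) → Fin d → ℝ) → ℝ :=
    fun j v => ∑ i : Fin (L j), (D j).indicator (fun _ => (1:ℝ)) (v (e j i)) with hSdef
  have hSmeas : ∀ j, Measurable (S j) := by
    intro j
    exact Finset.measurable_sum _ (fun i _ =>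
      (measurable_const.indicator (hD j)).comp (measurable_pi_apply (e j i)))
  set Cs : (j : ℕ) → Set (Fin (sB (j+1)) → Fin d → ℝ) :=
    fun j => {v | S j v ≤ 3/4 * ε * (L j)} with hCdef
  have hCmeas : ∀ j, MeasurableSet (Cs j) := fun j =>
    measurableSet_le (hSmeas j) measurable_const
  have hprojmeas : ∀ N : ℕ, Measurable (fun (x : ℕ → Fin d → ℝ) (i : Fin N) => x i.1) :=
    fun N => measurable_pi_lambda _ (fun i => measurable_pi_apply i.1)
  have hproj : ∀ j, PS j = (fun (x : ℕ → Fin d → ℝ) (i : Fin (sB (j+1))) => x i.1) ⁻¹' (Cs j) := by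
    intro j
    ext x
    simp only [hPSdef, hCdef, Set.mem_setOf_eq, Set.mem_preimage]
    unfold pass
    rw [cnt_w_eq g L sB c h j x]
  have hPSmeas : ∀ j, MeasurableSet (PS j) := by
    intro j
    rw [hproj j]
    exact (hprojmeas _) (hCmeas j)
  have hPS_eq : ∀ j, Pμ (PS j) = (Measure.pi fun _ : Fin (sB (j+1)) => μ) (Cs j) := by
    intro j
    rw [hproj j, ← hPμ (sB (j+1)), Measure.map_apply (hprojmeas _) (hCmeas j)]
  have hPSc_eq : ∀ j, Pμ ((PS j)ᶜ) = (Measure.pi fun _ : Fin (sB (j+1)) => μ) ((Cs j)ᶜ) := by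
    intro j
    rw [hproj j, ← Set.preimage_compl, ← hPμ (sB (j+1)),
      Measure.map_apply (hprojmeas _) (hCmeas j).compl]
  -- Chebyshev application
  have hcheb : ∀ (j : ℕ) {a : ℝ}, 0 < a →
      (Measure.pi fun _ : Fin (sB (j+1)) => μ) {v | a ≤ |S j v - (L j) * ρ j|}
        ≤ ENNReal.ofReal ((L j) / a^2) := by
    intro j a ha
    exact cheb μ (e j) (heinj j) (hD j) ha
  -- bad blocks
  have hBAD : ∀ j, ENNReal.ofReal ε < μ (D j) →
      Pμ (PS j) ≤ ENNReal.ofReal (16 / (ε^2 * L j)) := by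
    intro j hbad
    have hρj : ε < ρ j := by
      rw [hρdef]
      exact ((ENNReal.ofReal_lt_iff_lt_toReal hε.le (hDne j)).mp hbad)
    have hsub : Cs j ⊆ {v | ε/4 * (L j) ≤ |S j v - (L j) * ρ j|} := by
      intro v hv
      simp only [hCdef, Set.mem_setOf_eq] at hv ⊢
      have h1 : ε/4 * (L j) ≤ (L j) * ρ j - S j v := by nlinarith [hLcast j]
      calc ε/4 * (L j) ≤ (L j) * ρ j - S j v := h1
        _ ≤ |(L j) * ρ j - S j v| := le_abs_self _
        _ = |S j v - (L j) * ρ j| := abs_sub_comm _ _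
    have ha : (0:ℝ) < ε/4 * (L j) := by positivity
    calc Pμ (PS j) = (Measure.pi fun _ : Fin (sB (j+1)) => μ) (Cs j) := hPS_eq j
      _ ≤ (Measure.pi fun _ : Fin (sB (j+1)) => μ) {v | ε/4 * (L j) ≤ |S j v - (L j) * ρ j|} :=
          measure_mono hsub
      _ ≤ ENNReal.ofReal ((L j) / (ε/4 * (L j))^2) := hcheb j ha
      _ = ENNReal.ofReal (16 / (ε^2 * L j)) := by
          congr 1
          field_simp
          ring
  -- good blocks
  have hGOOD : ∀ j, ρ j ≤ ε/4 →
      Pμ ((PS j)ᶜ) ≤ ENNReal.ofReal (4 / (ε^2 * L j)) := by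
    intro j hgood
    have hsub : (Cs j)ᶜ ⊆ {v | ε/2 * (L j) ≤ |S j v - (L j) * ρ j|} := by
      intro v hv
      simp only [hCdef, Set.mem_compl_iff, Set.mem_setOf_eq, not_le] at hv
      simp only [Set.mem_setOf_eq]
      have h1 : ε/2 * (L j) ≤ S j v - (L j) * ρ j := by nlinarith [hLcast j]
      calc ε/2 * (L j) ≤ S j v - (L j) * ρ j := h1
        _ ≤ |S j v - (L j) * ρ j| := le_abs_self _
    have ha : (0:ℝ) < ε/2 * (L j) := by positivity
    calc Pμ ((PS j)ᶜ) = (Measure.pi fun _ : Fin (sB (j+1)) => μ) ((Cs j)ᶜ) := hPSc_eq j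
      _ ≤ (Measure.pi fun _ : Fin (sB (j+1)) => μ) {v | ε/2 * (L j) ≤ |S j v - (L j) * ρ j|} :=
          measure_mono hsub
      _ ≤ ENNReal.ofReal ((L j) / (ε/2 * (L j))^2) := hcheb j ha
      _ = ENNReal.ofReal (4 / (ε^2 * L j)) := by
          congr 1
          field_simp
          ring
  -- total mass of Pμ
  have hPμuniv : Pμ univ = 1 := by
    have h0 := hPμ 0
    have hm : Measurable (fun (ω : ℕ → Fin d → ℝ) (i : Fin 0) => ω i.1) := hprojmeas 0
    have := congrArg (fun m : Measure (Fin 0 → Fin d → ℝ) => m univ) h0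
    rw [Measure.map_apply hm MeasurableSet.univ] at this
    simp only [Set.preimage_univ] at this
    rw [this]
    exact measure_univ
  -- the good candidate
  constructor
  · -- eventual firing
    have hFsub : ∀ j, PS j ⊆
        {x : ℕ → Fin d → ℝ | ∃ n, tau g L sB c ε n (fun i : Fin n => (x i.1, h (x i.1))) = true} := by
      intro j x hx
      refine ⟨sB (j+1), ?_⟩
      rw [tau_eq_true_iff]
      exact ⟨j, le_refl _, (hpass_ext j (sB (j+1)) x le_rfl).mpr hx⟩
    refine le_antisymm (le_trans (measure_mono (subset_univ _)) (le_of_eq hPμuniv)) ?_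
    apply ENNReal.le_of_forall_pos_le_add
    intro δ hδ _
    obtain ⟨i0, hi0⟩ := hgdense h hh (ε/4) (by positivity)
    obtain ⟨M, hM⟩ := exists_nat_gt (4 / (ε^2 * (δ:ℝ)))
    obtain ⟨j, hjM, hcj⟩ := hcinf i0 M
    have hDj : D j = {y | h y ≠ g i0 y} := by rw [hDdef]; simp only [hcj]
    have hgoodj : ρ j ≤ ε/4 := by
      rw [hρdef]
      have : μ (D j) < ENNReal.ofReal (ε/4) := by rw [hDj]; exact hi0
      exact le_of_lt (ENNReal.toReal_lt_of_lt_ofReal this)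
    have hδR : (0:ℝ) < (δ:ℝ) := hδ
    have hLj : (4 / (ε^2 * (δ:ℝ))) < (L j : ℝ) := by
      have h1 : (j:ℝ) < (L j : ℝ) := by
        have h2 : j < 2^j := Nat.lt_two_pow_self
        have h3 : 2^j ≤ K * 2^j := Nat.le_mul_of_pos_left _ hKpos
        exact_mod_cast lt_of_lt_of_le h2 h3
      have h4 : (M:ℝ) ≤ (j:ℝ) := Nat.cast_le.mpr hjM
      linarith
    have h4le : ENNReal.ofReal (4 / (ε^2 * L j)) ≤ (δ : ℝ≥0∞) := by
      rw [← ENNReal.ofReal_coe_nnreal]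
      apply ENNReal.ofReal_le_ofReal
      rw [div_le_iff₀ (by positivity)]
      rw [div_lt_iff₀ (by positivity)] at hLj
      nlinarith [hLcast j]
    calc (1:ℝ≥0∞) = Pμ univ := hPμuniv.symm
      _ = Pμ (PS j ∪ (PS j)ᶜ) := by rw [Set.union_compl_self]
      _ ≤ Pμ (PS j) + Pμ ((PS j)ᶜ) := measure_union_le _ _
      _ ≤ Pμ {x : ℕ → Fin d → ℝ | ∃ n, tau g L sB c ε n
            (fun i : Fin n => (x i.1, h (x i.1))) = true} + (δ:ℝ≥0∞) :=
          add_le_add (measure_mono (hFsub j)) ((hGOOD j hgoodj).trans h4le)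
  · -- no loss after firing
    set Bad : ℕ → Set (ℕ → Fin d → ℝ) :=
      fun j => if ENNReal.ofReal ε < μ (D j) then PS j else ∅ with hBaddef
    have hEsub : {x : ℕ → Fin d → ℝ | ∃ n, (tau g L sB c ε n
          (fun i : Fin n => (x i.1, h (x i.1))) = true ∧
          ∀ m < n, tau g L sB c ε m (fun i : Fin m => (x i.1, h (x i.1))) = false) ∧
        ∃ k, n ≤ k ∧ ENNReal.ofReal ε <
          μ {y | h y ≠ Gdef g L sB c ε k (fun i : Fin k => (x i.1, h (x i.1))) y}}
        ⊆ ⋃ j, Bad j := by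
      intro x hx
      obtain ⟨n, ⟨hτ, _⟩, k, hnk, herr⟩ := hx
      rw [tau_eq_true_iff] at hτ
      obtain ⟨j0, hj0, hp0⟩ := hτ
      have hp0w := (hpass_ext j0 n x hj0).mp hp0
      have hQk : fires g L sB c ε k (extend k (fun i : Fin k => (x i.1, h (x i.1)))) :=
        ⟨j0, hj0.trans hnk, (hpass_ext j0 k x (hj0.trans hnk)).mpr hp0w⟩
      set J := sel g L sB c ε k (extend k (fun i : Fin k => (x i.1, h (x i.1)))) with hJdef
      obtain ⟨hJ1, hJ2⟩ := sel_spec g L sB c ε k _ hQk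
      have hpJw := (hpass_ext J k x hJ1).mp hJ2
      have herr' : ENNReal.ofReal ε < μ (D J) := by
        have hGk : Gdef g L sB c ε k (fun i : Fin k => (x i.1, h (x i.1))) = g (c J) :=
          Gdef_apply g L sB c ε k _
        rw [hGk] at herr
        exact herr
      refine Set.mem_iUnion.2 ⟨J, ?_⟩
      rw [hBaddef]
      simp only [if_pos herr']
      exact hpJw
    have hBadBound : ∀ j, Pμ (Bad j) ≤ ENNReal.ofReal (16 / (ε^2 * L j)) := by
      intro j
      rw [hBaddef]
      by_cases hb : ENNReal.ofReal ε < μ (D j)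
      · simp only [if_pos hb]
        exact hBAD j hb
      · simp only [if_neg hb, measure_empty]
        positivity
    have hterm : ∀ j : ℕ, (16 : ℝ) / (ε^2 * L j) = (16 / (ε^2 * K)) * (1/2)^j := by
      intro j
      have h2 : ((2:ℝ))^j ≠ 0 := by positivity
      have hLj : (L j : ℝ) = (K:ℝ) * 2^j := by
        rw [hLdef]
        push_cast
        ring
      rw [hLj, one_div, inv_pow]
      field_simp
    have hsum : ∑' j, ENNReal.ofReal (16 / (ε^2 * L j))
        = ENNReal.ofReal (32 / (ε^2 * K)) := by
      have h16 : (0:ℝ) ≤ 16 / (ε^2 * K) := by positivity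
      calc ∑' j, ENNReal.ofReal (16 / (ε^2 * L j))
          = ∑' j, ENNReal.ofReal ((16 / (ε^2 * K)) * (1/2)^j) := by
            congr 1
            funext j
            rw [hterm j]
        _ = ∑' j, ENNReal.ofReal (16 / (ε^2 * K)) * (ENNReal.ofReal (1/2))^j := by
            congr 1
            funext j
            rw [ENNReal.ofReal_mul h16, ENNReal.ofReal_pow (by norm_num)]
        _ = ENNReal.ofReal (16 / (ε^2 * K)) * (1 - ENNReal.ofReal (1/2))⁻¹ := by
            rw [ENNReal.tsum_mul_left, ENNReal.tsum_geometric]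
        _ = ENNReal.ofReal (16 / (ε^2 * K)) * 2 := by
            congr 1
            have : ENNReal.ofReal (1/2) = 2⁻¹ := by
              rw [ENNReal.ofReal_div_of_pos (by norm_num)]
              simp [ENNReal.ofReal_one, ENNReal.ofReal_ofNat]
            rw [this, ENNReal.one_sub_inv_two, inv_inv]
        _ = ENNReal.ofReal (32 / (ε^2 * K)) := by
            rw [show ((2:ℝ≥0∞)) = ENNReal.ofReal 2 by simp [ENNReal.ofReal_ofNat],
              ← ENNReal.ofReal_mul h16]
            congr 1
            field_simp
            ring
    have hfinal : ENNReal.ofReal (32 / (ε^2 * K)) < η := by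
      have h1 : 32 / (ε^2 * K) < r := by
        rw [div_lt_iff₀ (by positivity)]
        rw [div_lt_iff₀ (by positivity)] at hK
        nlinarith
      have h2 : ENNReal.ofReal (32 / (ε^2 * K)) < ENNReal.ofReal r :=
        (ENNReal.ofReal_lt_ofReal_iff hr).mpr h1
      have h3 : ENNReal.ofReal r = η' := ENNReal.ofReal_toReal hη'top
      rw [h3] at h2
      exact lt_of_lt_of_le h2 (min_le_left _ _)
    calc Pμ {x : ℕ → Fin d → ℝ | ∃ n, (tau g L sB c ε n
            (fun i : Fin n => (x i.1, h (x i.1))) = true ∧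
            ∀ m < n, tau g L sB c ε m (fun i : Fin m => (x i.1, h (x i.1))) = false) ∧
          ∃ k, n ≤ k ∧ ENNReal.ofReal ε <
            μ {y | h y ≠ Gdef g L sB c ε k (fun i : Fin k => (x i.1, h (x i.1))) y}}
        ≤ Pμ (⋃ j, Bad j) := measure_mono hEsub
      _ ≤ ∑' j, Pμ (Bad j) := measure_iUnion_le _
      _ ≤ ∑' j, ENNReal.ofReal (16 / (ε^2 * L j)) := ENNReal.tsum_le_tsum hBadBound
      _ = ENNReal.ofReal (32 / (ε^2 * K)) := hsum
      _ < η := hfinal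



end Stmt10
end

section
/- Insurance problem, predictability: Let 𝒫 be a class of probability distributions over ℕ, sampled i.i.d., with insurance loss ℓ(p, x_1^n, y) = 1{x_n > y} for predictions y ∈ ℕ. Then (𝒫, ℓ) is e.a.s.-predictable if and only if there are countably many tight classes 𝒫_1, 𝒫_2, … of distributions with 𝒫 = ⋃_{i=1}^∞ 𝒫_i. -/
open MeasureTheory Set ENNReal

namespace Stmt13

/-- `P` is the law of an i.i.d. sequence of samples from `p`: every finite-dimensional marginal
of `P` along the first `n` coordinates is the `n`-fold product of `p`. -/
def IsIidLaw {α : Type*} [MeasurableSpace α] (p : Measure α) (P : Measure (ℕ → α)) : Prop :=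
  ∀ n : ℕ, P.map (fun ω (i : Fin n) => ω i.val) = Measure.pi (fun _ : Fin n => p)

/-- The insurance loss: having observed `X_1^n`, the predictor proposes `Φ n (X_1^n) ∈ ℕ` and
incurs a loss iff the next sample exceeds it, i.e. `X_{n+1} > Φ(X_1^n)`. -/
def InsErrAt (Φ : (n : ℕ) → (Fin n → ℕ) → ℕ) (ω : ℕ → ℕ) (n : ℕ) : Prop :=
  Φ n (fun i => ω i.val) < ω n

/-- A class `Q` of distributions on `ℕ` is tight: for every `ε > 0` there is `N` with
`p{x : x ≥ N} ≤ ε` uniformly over `p ∈ Q`. -/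
def TightClass (Q : Set (Measure ℕ)) : Prop :=
  ∀ ε : ℝ≥0∞, 0 < ε → ∃ N : ℕ, ∀ p ∈ Q, p {x | N ≤ x} ≤ ε


open Filter

lemma measurable_proj (n : ℕ) : Measurable (fun ω : ℕ → ℕ => fun i : Fin n => ω i.val) :=
  measurable_pi_lambda _ fun _ => measurable_pi_apply _

lemma marginal {p : Measure ℕ} {Pr : Measure (ℕ → ℕ)} (h : IsIidLaw p Pr) (n : ℕ)
    (T : Set (Fin n → ℕ)) :
    Pr ((fun ω (i : Fin n) => ω i.val) ⁻¹' T) = Measure.pi (fun _ : Fin n => p) T := by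
  rw [← Measure.map_apply (measurable_proj n) MeasurableSet.of_discrete, h n]

lemma proc_univ {p : Measure ℕ} (hp : IsProbabilityMeasure p) {Pr : Measure (ℕ → ℕ)}
    (h : IsIidLaw p Pr) : Pr univ = 1 := by
  have h0 := marginal h 0 univ
  simpa using h0


lemma backward (Proc : Measure ℕ → Measure (ℕ → ℕ))
    (hProc : ∀ p : Measure ℕ, IsProbabilityMeasure p → IsIidLaw p (Proc p))
    (P : Set (Measure ℕ)) (hP : ∀ p ∈ P, IsProbabilityMeasure p)
    (Pi : ℕ → Set (Measure ℕ)) (hU : (⋃ i, Pi i) = P) (hT : ∀ i, TightClass (Pi i)) :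
    ∃ Φ : (n : ℕ) → (Fin n → ℕ) → ℕ,
      ∀ p ∈ P, Proc p {ω | {n | InsErrAt Φ ω n}.Finite} = 1 := by
  have hpos : ∀ k : ℕ, (0 : ℝ≥0∞) < 2⁻¹ ^ k := fun k =>
    ENNReal.pow_pos (ENNReal.inv_pos.mpr (by norm_num)) k
  choose N hN using fun i k => hT i (2⁻¹ ^ k) (hpos k)
  refine ⟨fun n _ => (Finset.range (n + 1)).sup (fun i => N i n), ?_⟩
  intro p hpP
  have hp : IsProbabilityMeasure p := hP p hpP
  have hiid := hProc p hp
  rw [← hU] at hpP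
  obtain ⟨i, hi⟩ := mem_iUnion.mp hpP
  set s : ℕ → Set (ℕ → ℕ) := fun n => {ω | N i n < ω n} with hs
  -- measure of s n
  have hms : ∀ n, Proc p (s n) ≤ 2⁻¹ ^ n := by
    intro n
    have hpre : s n = (fun ω (j : Fin (n + 1)) => ω j.val) ⁻¹'
        {x : Fin (n + 1) → ℕ | N i n < x ⟨n, n.lt_succ_self⟩} := rfl
    have hTset : {x : Fin (n + 1) → ℕ | N i n < x ⟨n, n.lt_succ_self⟩} =
        Set.pi univ (fun j : Fin (n + 1) =>
          if j = ⟨n, n.lt_succ_self⟩ then {a | N i n < a} else univ) := by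
      ext x
      simp only [mem_setOf_eq, Set.mem_pi, mem_univ, forall_true_left]
      constructor
      · intro hx j
        by_cases hj : j = ⟨n, n.lt_succ_self⟩
        · subst hj; simp [hx]
        · simp [hj]
      · intro hx
        have := hx ⟨n, n.lt_succ_self⟩
        simpa using this
    rw [hpre, marginal hiid, hTset, Measure.pi_pi]
    have hprod : (∏ j : Fin (n + 1), p (if j = ⟨n, n.lt_succ_self⟩ then {a | N i n < a} else univ))
        = p {a | N i n < a} := by
      rw [Finset.prod_eq_single (⟨n, n.lt_succ_self⟩ : Fin (n + 1))]
      · simp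
      · intro b _ hb; simp [hb]
      · simp
    rw [hprod]
    exact le_trans (measure_mono (show {a | N i n < a} ⊆ {x | N i n ≤ x} from
      fun a (ha : N i n < a) => le_of_lt ha)) (hN i n p hi)
  have hsum : (∑' n, Proc p (s n)) ≠ ∞ := by
    refine ne_top_of_le_ne_top ?_ (ENNReal.tsum_le_tsum hms)
    rw [ENNReal.tsum_geometric]
    simp [ENNReal.one_sub_inv_two]
  have hae := MeasureTheory.ae_finite_setOf_mem (μ := Proc p) hsum
  have hsub : {ω : ℕ → ℕ | {n | ω ∈ s n}.Finite} ⊆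
      {ω | {n | InsErrAt (fun n _ => (Finset.range (n + 1)).sup (fun i => N i n)) ω n}.Finite} := by
    intro ω hω
    refine Set.Finite.subset (hω.union (Set.finite_Iio i)) ?_
    intro n hn
    by_cases hni : n < i
    · exact Or.inr hni
    · left
      have herr : (Finset.range (n + 1)).sup (fun j => N j n) < ω n := hn
      have hmem : i ∈ Finset.range (n + 1) := Finset.mem_range.mpr (by omega)
      have hle : N i n ≤ (Finset.range (n + 1)).sup (fun j => N j n) :=
        Finset.le_sup (f := fun j => N j n) hmem
      exact lt_of_le_of_lt hle herr
  have hcompl : Proc p {ω | {n | InsErrAt (fun n _ => (Finset.range (n + 1)).sup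
      (fun i => N i n)) ω n}.Finite}ᶜ = 0 := by
    refine measure_mono_null ?_ (ae_iff.mp hae)
    intro ω hω
    simp only [mem_compl_iff] at hω
    exact fun h => hω (hsub h)
  have huniv : Proc p univ = 1 := proc_univ hp hiid
  set E := {ω : ℕ → ℕ | {n | InsErrAt (fun n _ => (Finset.range (n + 1)).sup
      (fun i => N i n)) ω n}.Finite} with hE
  refine le_antisymm (le_trans (measure_mono (subset_univ _)) huniv.le) ?_
  calc (1 : ℝ≥0∞) = Proc p univ := huniv.symm
    _ = Proc p (E ∪ Eᶜ) := by rw [union_compl_self]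
    _ ≤ Proc p E + Proc p Eᶜ := measure_union_le _ _
    _ = Proc p E := by rw [hcompl, add_zero]


/-- The largest value `Φ n` can output on histories bounded by `b`. -/
def SUP (Φ : (n : ℕ) → (Fin n → ℕ) → ℕ) (n b : ℕ) : ℕ :=
  Finset.sup Finset.univ (fun h : Fin n → Fin (b + 1) => Φ n (fun i => (h i : ℕ)))

/-- Recursive bound on coordinates along error-free trajectories. -/
def D (Φ : (n : ℕ) → (Fin n → ℕ) → ℕ) (m c : ℕ) : ℕ → ℕ
  | 0 => c
  | t + 1 => max (D Φ m c t) (SUP Φ (m + t) (D Φ m c t))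

/-- Error-free from time `m` on, with the first `m` coordinates bounded by `c`. -/
def Em (Φ : (n : ℕ) → (Fin n → ℕ) → ℕ) (m c : ℕ) : Set (ℕ → ℕ) :=
  {ω | (∀ n, m ≤ n → ¬ InsErrAt Φ ω n) ∧ ∀ i, i < m → ω i ≤ c}

lemma key (Φ : (n : ℕ) → (Fin n → ℕ) → ℕ) (m c : ℕ) (ω : ℕ → ℕ)
    (hA : ∀ n, m ≤ n → ¬ InsErrAt Φ ω n) (hc : ∀ i, i < m → ω i ≤ c) :
    ∀ t, ∀ i, i < m + t → ω i ≤ D Φ m c t := by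
  intro t
  induction t with
  | zero => intro i hi; exact hc i (by omega)
  | succ t ih =>
    intro i hi
    rcases Nat.lt_or_ge i (m + t) with h | h
    · exact le_trans (ih i h) (le_max_left _ _)
    · have hieq : i = m + t := by omega
      subst hieq
      have hne := hA (m + t) (by omega)
      rw [InsErrAt, not_lt] at hne
      have hh : ∀ j : Fin (m + t), ω j.val ≤ D Φ m c t := fun j => ih j.val j.isLt
      set g : Fin (m + t) → Fin (D Φ m c t + 1) :=
        fun j => ⟨ω j.val, Nat.lt_succ_of_le (hh j)⟩ with hg
      have hΦ : Φ (m + t) (fun j => ω j.val) ≤ SUP Φ (m + t) (D Φ m c t) :=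
        Finset.le_sup (f := fun h : Fin (m + t) → Fin (D Φ m c t + 1) =>
          Φ (m + t) (fun i => (h i : ℕ))) (Finset.mem_univ g)
      exact le_trans (le_trans hne hΦ) (le_max_right _ _)

lemma em_bound {p : Measure ℕ} (hp : IsProbabilityMeasure p)
    {Pr : Measure (ℕ → ℕ)} (hiid : IsIidLaw p Pr)
    (Φ : (n : ℕ) → (Fin n → ℕ) → ℕ) (m c k : ℕ) :
    Pr (Em Φ m c) ≤ (p {a | a ≤ D Φ m c k}) ^ (m + k) := by
  have hsub : Em Φ m c ⊆ (fun ω (j : Fin (m + k)) => ω j.val) ⁻¹'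
      (Set.pi univ (fun _ : Fin (m + k) => {a | a ≤ D Φ m c k})) := by
    intro ω hω
    simp only [mem_preimage, Set.mem_pi, mem_univ, forall_true_left]
    intro j
    exact key Φ m c ω hω.1 hω.2 k j.val j.isLt
  refine le_trans (measure_mono hsub) ?_
  rw [marginal hiid, Measure.pi_pi]
  simp

lemma classOf_tight (Proc : Measure ℕ → Measure (ℕ → ℕ))
    (hProc : ∀ p : Measure ℕ, IsProbabilityMeasure p → IsIidLaw p (Proc p))
    (P : Set (Measure ℕ)) (hP : ∀ p ∈ P, IsProbabilityMeasure p)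
    (Φ : (n : ℕ) → (Fin n → ℕ) → ℕ) (m c : ℕ) :
    TightClass {p | p ∈ P ∧ 2⁻¹ < Proc p (Em Φ m c)} := by
  intro ε hε
  by_cases hε1 : 1 ≤ ε
  · refine ⟨0, fun p hp => ?_⟩
    have := hP p hp.1
    exact le_trans prob_le_one hε1
  · push_neg at hε1
    have h1 : (1 : ℝ≥0∞) - ε < 1 := ENNReal.sub_lt_self one_ne_top one_ne_zero hε.ne'
    obtain ⟨k, hk⟩ : ∃ k, (1 - ε) ^ k < 2⁻¹ :=
      ((ENNReal.tendsto_pow_atTop_nhds_zero_of_lt_one h1).eventually_lt_const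
        (by norm_num : (0 : ℝ≥0∞) < 2⁻¹)).exists
    refine ⟨D Φ m c k + 1, fun p hp => ?_⟩
    have hprob := hP p hp.1
    by_contra hcon
    push_neg at hcon
    set q := p {a | a ≤ D Φ m c k} with hqdef
    have hcompl : p {x | D Φ m c k + 1 ≤ x} = 1 - q := by
      have hset : {x : ℕ | D Φ m c k + 1 ≤ x} = {a : ℕ | a ≤ D Φ m c k}ᶜ := by
        ext a; simp only [mem_setOf_eq, mem_compl_iff, not_le]; omega
      rw [hset, measure_compl MeasurableSet.of_discrete (measure_ne_top p _), measure_univ]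
    have hq : q ≤ 1 - ε := by
      have hlt : ε < 1 - q := hcompl ▸ hcon
      have hq1 : q ≤ 1 := prob_le_one
      have h2 : ε + q < 1 := by
        calc ε + q < (1 - q) + q :=
              ENNReal.add_lt_add_right (lt_of_le_of_lt hq1 one_lt_top).ne hlt
          _ = 1 := tsub_add_cancel_of_le hq1
      exact ENNReal.le_sub_of_add_le_left (hε1.trans one_lt_top).ne h2.le
    have hchain : Proc p (Em Φ m c) < 2⁻¹ := by
      calc Proc p (Em Φ m c) ≤ q ^ (m + k) := em_bound hprob (hProc p hprob) Φ m c k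
        _ ≤ (1 - ε) ^ (m + k) := pow_le_pow_left' hq _
        _ ≤ (1 - ε) ^ k := pow_le_pow_right_of_le_one' tsub_le_self (by omega)
        _ < 2⁻¹ := hk
    exact absurd hp.2 (not_lt.mpr hchain.le)

lemma cover (Proc : Measure ℕ → Measure (ℕ → ℕ))
    (hProc : ∀ p : Measure ℕ, IsProbabilityMeasure p → IsIidLaw p (Proc p))
    (Φ : (n : ℕ) → (Fin n → ℕ) → ℕ) (p : Measure ℕ) (hprob : IsProbabilityMeasure p)
    (hsucc : Proc p {ω | {n | InsErrAt Φ ω n}.Finite} = 1) :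
    ∃ m c, 2⁻¹ < Proc p (Em Φ m c) := by
  have huniv := proc_univ hprob (hProc p hprob)
  set A : ℕ → Set (ℕ → ℕ) := fun m => {ω | ∀ n, m ≤ n → ¬ InsErrAt Φ ω n} with hA
  have hmono : Monotone A := fun m m' h ω hω n hn => hω n (le_trans h hn)
  have hUA : Proc p (⋃ m, A m) = 1 := by
    refine le_antisymm (le_trans (measure_mono (subset_univ _)) huniv.le) ?_
    rw [← hsucc]
    refine measure_mono ?_
    intro ω hω
    obtain ⟨b, hb⟩ := (hω : ({n | InsErrAt Φ ω n}).Finite).bddAbove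
    exact mem_iUnion.mpr ⟨b + 1, fun n hn herr => absurd (hb herr) (by omega)⟩
  have hsup : 2⁻¹ < ⨆ m, Proc p (A m) := by
    rw [← Directed.measure_iUnion hmono.directed_le, hUA]
    exact ENNReal.inv_lt_one.mpr one_lt_two
  obtain ⟨m, hm⟩ := lt_iSup_iff.mp hsup
  have hmono2 : Monotone (fun c => Em Φ m c) := fun c c' h ω hω =>
    ⟨hω.1, fun i hi => le_trans (hω.2 i hi) h⟩
  have hUE : (⋃ c, Em Φ m c) = A m := by
    ext ω
    constructor
    · rintro hω
      obtain ⟨c, hc⟩ := mem_iUnion.mp hω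
      exact hc.1
    · intro hω
      refine mem_iUnion.mpr ⟨(Finset.range m).sup ω, hω, fun i hi => ?_⟩
      exact Finset.le_sup (Finset.mem_range.mpr hi)
  have hsup2 : 2⁻¹ < ⨆ c, Proc p (Em Φ m c) := by
    rw [← Directed.measure_iUnion hmono2.directed_le, hUE]
    exact hm
  obtain ⟨c, hc⟩ := lt_iSup_iff.mp hsup2
  exact ⟨m, c, hc⟩


/-- The insurance problem `(𝒫, ℓ)` with i.i.d. sampling is e.a.s.-predictable
iff `𝒫` is a countable union of tight classes. -/
theorem insurance_eas_iff_countable_union_tight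
    (Proc : Measure ℕ → Measure (ℕ → ℕ))
    (hProc : ∀ p : Measure ℕ, IsProbabilityMeasure p → IsIidLaw p (Proc p))
    (P : Set (Measure ℕ)) (hP : ∀ p ∈ P, IsProbabilityMeasure p) :
    (∃ Φ : (n : ℕ) → (Fin n → ℕ) → ℕ,
      ∀ p ∈ P, Proc p {ω | {n | InsErrAt Φ ω n}.Finite} = 1) ↔
      ∃ Pi : ℕ → Set (Measure ℕ), (⋃ i, Pi i) = P ∧ ∀ i, TightClass (Pi i) := by
  constructor
  · rintro ⟨Φ, hΦ⟩
    refine ⟨fun n => {p | p ∈ P ∧ 2⁻¹ < Proc p (Em Φ (Nat.unpair n).1 (Nat.unpair n).2)},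
      ?_, ?_⟩
    · ext p
      simp only [mem_iUnion, mem_setOf_eq]
      constructor
      · rintro ⟨n, hn, _⟩; exact hn
      · intro hp
        obtain ⟨m, c, h⟩ := cover Proc hProc Φ p (hP p hp) (hΦ p hp)
        exact ⟨Nat.pair m c, by simpa [Nat.unpair_pair] using ⟨hp, h⟩⟩
    · intro n; exact classOf_tight Proc hProc P hP Φ _ _
  · rintro ⟨Pi, hU, hT⟩
    exact backward Proc hProc P hP Pi hU hT


end Stmt13
end

section
/- Let H_0 and H_1 be collections of probability distributions over ℝ^d that are F_σ-separable under the Kolmogorov–Smirnov distance. Then, under i.i.d. sampling and the classification loss (the learner predicts at each step whether the underlying distribution lies in H_0 or H_1, incurring loss 1 iff wrong), the class H_0 ∪ H_1 is e.a.s.-predictable. -/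
open MeasureTheory Set ENNReal

namespace Stmt15

/-- `P` is the law of an i.i.d. sequence of samples from `p`: every finite-dimensional marginal
of `P` along the first `n` coordinates is the `n`-fold product of `p`. -/
def IsIidLaw {α : Type*} [MeasurableSpace α] (p : Measure α) (P : Measure (ℕ → α)) : Prop :=
  ∀ n : ℕ, P.map (fun ω (i : Fin n) => ω i.val) = Measure.pi (fun _ : Fin n => p)

/-- The CDF of a distribution `p` on `ℝ^d`: `F_p(x) = p(∏_i (−∞, x_i])`. -/
noncomputable def cdf {d : ℕ} (p : Measure (Fin d → ℝ)) (x : Fin d → ℝ) : ℝ :=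
  (p {y | ∀ i, y i ≤ x i}).toReal

/-- The Kolmogorov–Smirnov distance `sup_x |F_p(x) − F_q(x)|`. -/
noncomputable def ksDist {d : ℕ} (p q : Measure (Fin d → ℝ)) : ℝ :=
  ⨆ x : Fin d → ℝ, |cdf p x - cdf q x|

/-- A collection `C` of distributions on `ℝ^d` is closed in KS-distance (within the space of all
probability distributions): every probability measure that is approximated arbitrarily well in
KS-distance by members of `C` belongs to `C`. -/
def KSClosed {d : ℕ} (C : Set (Measure (Fin d → ℝ))) : Prop :=
  ∀ p : Measure (Fin d → ℝ), IsProbabilityMeasure p →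
    (∀ ε : ℝ, 0 < ε → ∃ q ∈ C, ksDist p q < ε) → p ∈ C

variable {d : ℕ}

/-- indicator with value 1 -/
noncomputable def ind (T : Set (Fin d → ℝ)) (z : Fin d → ℝ) : ℝ := T.indicator (fun _ => 1) z

lemma ind_nonneg (T : Set (Fin d → ℝ)) (z) : 0 ≤ ind T z := by
  unfold ind; exact Set.indicator_nonneg (fun _ _ => zero_le_one) z

lemma ind_le_one (T : Set (Fin d → ℝ)) (z) : ind T z ≤ 1 := by
  unfold ind; classical
  rw [Set.indicator_apply]; split <;> norm_num

lemma ind_mono {T T' : Set (Fin d → ℝ)} (h : T ⊆ T') (z) : ind T z ≤ ind T' z := by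
  unfold ind; classical
  rw [Set.indicator_apply, Set.indicator_apply]
  by_cases hz : z ∈ T
  · simp [hz, h hz]
  · simp [hz]; split <;> norm_num

lemma ind_of_mem {T : Set (Fin d → ℝ)} {z} (h : z ∈ T) : ind T z = 1 := by
  simp [ind, Set.indicator_of_mem h]

/-- empirical average of a set over a finite sample -/
noncomputable def avg (n : ℕ) (s : Fin n → (Fin d → ℝ)) (T : Set (Fin d → ℝ)) : ℝ :=
  (∑ i, ind T (s i)) / n

lemma avg_nonneg (n : ℕ) (s : Fin n → (Fin d → ℝ)) (T) : 0 ≤ avg n s T := by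
  unfold avg
  apply div_nonneg (Finset.sum_nonneg fun i _ => ind_nonneg _ _) (by positivity)

lemma avg_le_one (n : ℕ) (s : Fin n → (Fin d → ℝ)) (T) : avg n s T ≤ 1 := by
  unfold avg
  rcases Nat.eq_zero_or_pos n with h | h
  · subst h; simp
  · rw [div_le_one (by exact_mod_cast h)]
    calc (∑ i, ind T (s i)) ≤ ∑ _i : Fin n, (1:ℝ) :=
          Finset.sum_le_sum fun i _ => ind_le_one _ _
      _ = n := by simp


lemma div_nat_mono {n : ℕ} {a b : ℝ} (h : a ≤ b) : a / (n:ℝ) ≤ b / n := by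
  rcases Nat.eq_zero_or_pos n with h0 | h0
  · subst h0; simp
  · exact (div_le_div_iff_of_pos_right (by exact_mod_cast h0)).2 h

lemma avg_mono (n : ℕ) (s : Fin n → (Fin d → ℝ)) {T T'} (h : T ⊆ T') :
    avg n s T ≤ avg n s T' :=
  div_nat_mono (Finset.sum_le_sum fun i _ => ind_mono h _)

lemma avg_subadd (n : ℕ) (s : Fin n → (Fin d → ℝ)) {T' T : Set (Fin d → ℝ)}
    {U : Fin d → Set (Fin d → ℝ)} (h : T' ⊆ T ∪ ⋃ i, U i) :
    avg n s T' ≤ avg n s T + ∑ i, avg n s (U i) := by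
  have key : ∀ z, ind T' z ≤ ind T z + ∑ i, ind (U i) z := by
    intro z
    by_cases hz : z ∈ T'
    · rcases h hz with hT | hU
      · have hs : (0:ℝ) ≤ ∑ i, ind (U i) z :=
          Finset.sum_nonneg (fun i _ => ind_nonneg _ _)
        have h1 := ind_of_mem hT
        have h2 := ind_le_one T' z
        linarith
      · rw [Set.mem_iUnion] at hU
        obtain ⟨i, hi⟩ := hU
        have h1 : (1:ℝ) ≤ ∑ j, ind (U j) z := by
          have h2 := Finset.single_le_sum (f := fun j => ind (U j) z)
            (fun j _ => ind_nonneg _ _) (Finset.mem_univ i)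
          simpa [ind_of_mem hi] using h2
        have h2 := ind_nonneg T z
        have h3 := ind_le_one T' z
        linarith
    · have h1 := ind_nonneg T z
      have h2 : (0:ℝ) ≤ ∑ i, ind (U i) z :=
        Finset.sum_nonneg (fun i _ => ind_nonneg _ _)
      have h3 : ind T' z = 0 := by simp [ind, Set.indicator_of_notMem hz]
      linarith
  unfold avg
  rw [← Finset.sum_div, ← add_div]
  apply div_nat_mono
  calc (∑ i, ind T' (s i)) ≤ ∑ i, (ind T (s i) + ∑ j, ind (U j) (s i)) :=
        Finset.sum_le_sum fun i _ => key (s i)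
    _ = ∑ i, ind T (s i) + ∑ i, ∑ j, ind (U j) (s i) := Finset.sum_add_distrib
    _ = _ := by rw [Finset.sum_comm]

/-- `toReal` of measure -/
noncomputable def pv (p : Measure (Fin d → ℝ)) (T : Set (Fin d → ℝ)) : ℝ := (p T).toReal

lemma pv_nonneg (p : Measure (Fin d → ℝ)) (T) : 0 ≤ pv p T := ENNReal.toReal_nonneg

lemma pv_le_one (p : Measure (Fin d → ℝ)) [IsProbabilityMeasure p] (T) : pv p T ≤ 1 := by
  unfold pv
  rw [← ENNReal.toReal_one]
  exact ENNReal.toReal_mono one_ne_top prob_le_one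

lemma pv_mono (p : Measure (Fin d → ℝ)) [IsProbabilityMeasure p] {T T'} (h : T ⊆ T') :
    pv p T ≤ pv p T' :=
  ENNReal.toReal_mono (measure_ne_top p T') (measure_mono h)

lemma pv_subadd (p : Measure (Fin d → ℝ)) [IsProbabilityMeasure p] {T' T : Set (Fin d → ℝ)}
    {U : Fin d → Set (Fin d → ℝ)} (h : T' ⊆ T ∪ ⋃ i, U i) :
    pv p T' ≤ pv p T + ∑ i, pv p (U i) := by
  have h1 : p T' ≤ p T + ∑ i, p (U i) := by
    calc p T' ≤ p (T ∪ ⋃ i, U i) := measure_mono h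
      _ ≤ p T + p (⋃ i, U i) := measure_union_le _ _
      _ ≤ p T + ∑' i, p (U i) := by gcongr; exact measure_iUnion_le _
      _ = p T + ∑ i, p (U i) := by rw [tsum_fintype]
  have h2 : (p T + ∑ i, p (U i)).toReal = pv p T + ∑ i, pv p (U i) := by
    unfold pv
    rw [ENNReal.toReal_add (measure_ne_top p T) (by
      exact (ENNReal.sum_lt_top.mpr (fun i _ => measure_lt_top p (U i))).ne),
      ENNReal.toReal_sum (fun i _ => measure_ne_top p (U i))]
  calc pv p T' ≤ (p T + ∑ i, p (U i)).toReal :=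
        ENNReal.toReal_mono (by
          exact (ENNReal.add_lt_top.mpr ⟨measure_lt_top p T,
            ENNReal.sum_lt_top.mpr (fun i _ => measure_lt_top p (U i))⟩).ne) h1
    _ = _ := h2

/-- the closed lower quadrant -/
def Quad (x : Fin d → ℝ) : Set (Fin d → ℝ) := {y | ∀ i, y i ≤ x i}

lemma Quad_measurableSet (x : Fin d → ℝ) : MeasurableSet (Quad x) := by
  have : Quad x = Set.pi Set.univ (fun i => Set.Iic (x i)) := by
    ext y; simp only [Quad, Set.mem_univ_pi, Set.mem_Iic, Set.mem_setOf_eq]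
  rw [this]
  exact MeasurableSet.univ_pi fun i => measurableSet_Iic

lemma cdf_eq_pv (p : Measure (Fin d → ℝ)) (x) : cdf p x = pv p (Quad x) := rfl

lemma cdf_nonneg (p : Measure (Fin d → ℝ)) (x) : 0 ≤ cdf p x := ENNReal.toReal_nonneg

lemma cdf_le_one (p : Measure (Fin d → ℝ)) [IsProbabilityMeasure p] (x) : cdf p x ≤ 1 :=
  pv_le_one p _

/-- empirical CDF -/
noncomputable def Fhat (n : ℕ) (s : Fin n → (Fin d → ℝ)) (x : Fin d → ℝ) : ℝ :=
  avg n s (Quad x)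

lemma Fhat_nonneg (n s x) : 0 ≤ @Fhat d n s x := avg_nonneg _ _ _

lemma Fhat_le_one (n s x) : @Fhat d n s x ≤ 1 := avg_le_one _ _ _

/-- sup distance between the empirical CDF and the CDF of `q` -/
noncomputable def DD (n : ℕ) (s : Fin n → (Fin d → ℝ)) (q : Measure (Fin d → ℝ)) : ℝ :=
  ⨆ x : Fin d → ℝ, |Fhat n s x - cdf q x|

lemma DD_bddAbove (n s) (q : Measure (Fin d → ℝ)) [IsProbabilityMeasure q] :
    BddAbove (Set.range fun x => |Fhat n s x - @cdf d q x|) := by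
  refine ⟨2, ?_⟩
  rintro y ⟨x, rfl⟩
  have h1 := Fhat_nonneg n s x
  have h2 := Fhat_le_one n s x
  have h3 := cdf_nonneg q x
  have h4 := cdf_le_one q x
  rw [abs_le]; constructor <;> linarith

lemma le_DD (n s) (q : Measure (Fin d → ℝ)) [IsProbabilityMeasure q] (x) :
    |Fhat n s x - cdf q x| ≤ DD n s q :=
  le_ciSup (DD_bddAbove n s q) x

lemma DD_le (n s) (q : Measure (Fin d → ℝ)) {a : ℝ}
    (h : ∀ x, |Fhat n s x - cdf q x| ≤ a) : DD n s q ≤ a :=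
  ciSup_le h

/-- triangle inequality: KS distance is at most the sum of empirical deviations -/
lemma ksDist_le_DD_add_DD (n s) (p q : Measure (Fin d → ℝ)) [IsProbabilityMeasure p]
    [IsProbabilityMeasure q] : ksDist p q ≤ DD n s p + DD n s q := by
  apply ciSup_le
  intro x
  calc |cdf p x - cdf q x| = |(cdf p x - Fhat n s x) + (Fhat n s x - cdf q x)| := by ring_nf
    _ ≤ |cdf p x - Fhat n s x| + |Fhat n s x - cdf q x| := abs_add_le _ _
    _ = |Fhat n s x - cdf p x| + |Fhat n s x - cdf q x| := by rw [abs_sub_comm]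
    _ ≤ DD n s p + DD n s q := add_le_add (le_DD n s p x) (le_DD n s q x)

section Quantile

variable (p : Measure (Fin d → ℝ)) [IsProbabilityMeasure p]

/-- the `i`-th marginal of `p` -/
noncomputable def margI (i : Fin d) : Measure ℝ := p.map (fun y => y i)

instance (i : Fin d) : IsProbabilityMeasure (margI p i) :=
  Measure.isProbabilityMeasure_map (measurable_pi_apply i).aemeasurable

/-- marginal CDF -/
noncomputable def G (i : Fin d) (t : ℝ) : ℝ := (margI p i (Set.Iic t)).toReal

lemma G_mono (i : Fin d) : Monotone (G p i) := fun a b hab =>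
  ENNReal.toReal_mono (measure_ne_top _ _) (measure_mono (Set.Iic_subset_Iic.2 hab))

lemma toReal_tendsto {μ : Measure ℝ} [IsFiniteMeasure μ] {A : ℕ → Set ℝ} {B : Set ℝ}
    (h : Filter.Tendsto (fun k => μ (A k)) Filter.atTop (nhds (μ B))) :
    Filter.Tendsto (fun k => (μ (A k)).toReal) Filter.atTop (nhds ((μ B).toReal)) :=
  (ENNReal.tendsto_toReal (measure_ne_top _ _)).comp h

lemma exists_G_ge (i : Fin d) {r : ℝ} (hr : r < 1) : ∃ t, r ≤ G p i t := by
  have hU : (⋃ k : ℕ, Set.Iic ((k : ℝ))) = Set.univ := by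
    ext t; simp only [Set.mem_iUnion, Set.mem_Iic, Set.mem_univ, iff_true]
    exact exists_nat_ge t
  have hmono : Monotone (fun k : ℕ => Set.Iic ((k : ℝ))) := fun a b hab =>
    Set.Iic_subset_Iic.2 (by exact_mod_cast hab)
  have h1 : Filter.Tendsto (fun k : ℕ => margI p i (Set.Iic (k : ℝ))) Filter.atTop
      (nhds (margI p i (⋃ k : ℕ, Set.Iic ((k : ℝ))))) :=
    tendsto_measure_iUnion_atTop hmono
  rw [hU] at h1
  have h2 := toReal_tendsto (μ := margI p i) h1
  have h3 : (margI p i Set.univ).toReal = 1 := by simp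
  rw [h3] at h2
  obtain ⟨k, hk⟩ := (h2.eventually (eventually_ge_nhds hr)).exists
  exact ⟨k, hk⟩

lemma exists_G_lt (i : Fin d) {r : ℝ} (hr : 0 < r) : ∃ t, G p i t < r := by
  have hI : (⋂ k : ℕ, Set.Iic (-(k : ℝ))) = ∅ := by
    ext t; simp only [Set.mem_iInter, Set.mem_Iic, Set.mem_empty_iff_false, iff_false, not_forall]
    obtain ⟨k, hk⟩ := exists_nat_gt (-t)
    exact ⟨k, by push_neg; linarith⟩
  have hanti : Antitone (fun k : ℕ => Set.Iic (-(k : ℝ))) := fun a b hab =>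
    Set.Iic_subset_Iic.2 (by exact_mod_cast neg_le_neg (by exact_mod_cast hab : (a:ℝ) ≤ b))
  have h1 : Filter.Tendsto (fun k : ℕ => margI p i (Set.Iic (-(k : ℝ)))) Filter.atTop
      (nhds (margI p i (⋂ k : ℕ, Set.Iic (-(k : ℝ))))) :=
    tendsto_measure_iInter_atTop (fun k => measurableSet_Iic.nullMeasurableSet) hanti
      ⟨0, measure_ne_top _ _⟩
  rw [hI] at h1
  have h2 := toReal_tendsto (μ := margI p i) h1
  simp only [measure_empty, ENNReal.toReal_zero] at h2
  obtain ⟨k, hk⟩ := (h2.eventually (eventually_lt_nhds hr)).exists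
  exact ⟨-(k:ℝ), hk⟩

variable (m : ℕ)

/-- the set whose infimum is the `j/m` quantile of the `i`-th marginal -/
def Sq (i : Fin d) (j : ℕ) : Set ℝ := {t | (j : ℝ) / m ≤ G p i t}

/-- the `j/m` quantile of the `i`-th marginal -/
noncomputable def cq (i : Fin d) (j : ℕ) : ℝ := sInf (Sq p m i j)

lemma Sq_nonempty (i : Fin d) {j : ℕ} (hj : j < m) : (Sq p m i j).Nonempty := by
  have : (j : ℝ) / m < 1 := by
    rw [div_lt_one (by exact_mod_cast Nat.cast_pos.mpr (Nat.zero_lt_of_lt hj) )]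
    exact_mod_cast hj
  obtain ⟨t, ht⟩ := exists_G_ge p i this
  exact ⟨t, ht⟩

lemma Sq_bddBelow (i : Fin d) {j : ℕ} (hj : 1 ≤ j) (hm : 0 < m) : BddBelow (Sq p m i j) := by
  have hr : (0:ℝ) < (j : ℝ) / m := by positivity
  obtain ⟨t₀, ht₀⟩ := exists_G_lt p i hr
  refine ⟨t₀, fun t ht => ?_⟩
  by_contra hlt
  push_neg at hlt
  exact absurd (le_trans ht (G_mono p i hlt.le)) (not_le.2 ht₀)

lemma G_cq_ge (i : Fin d) {j : ℕ} (hj : 1 ≤ j) (hjm : j < m) :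
    (j : ℝ) / m ≤ G p i (cq p m i j) := by
  have hm : 0 < m := Nat.zero_lt_of_lt hjm
  have hbdd := Sq_bddBelow p m i hj hm
  have hne := Sq_nonempty p m i hjm
  -- each approximation from above
  have hev : ∀ k : ℕ, (j : ℝ) / m ≤ G p i (cq p m i j + 1 / (k + 1)) := by
    intro k
    have hlt : cq p m i j < cq p m i j + 1 / (k + 1) := by
      have : (0:ℝ) < 1 / ((k:ℝ) + 1) := by positivity
      linarith
    obtain ⟨t, htS, htlt⟩ := (csInf_lt_iff hbdd hne).1 hlt
    exact le_trans htS (G_mono p i htlt.le)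
  -- continuity from above
  have hInter : (⋂ k : ℕ, Set.Iic (cq p m i j + 1 / (k + 1))) = Set.Iic (cq p m i j) := by
    ext t
    simp only [Set.mem_iInter, Set.mem_Iic]
    constructor
    · intro h
      by_contra hlt
      push_neg at hlt
      obtain ⟨k, hk⟩ := exists_nat_one_div_lt (sub_pos.2 hlt)
      have := h k
      linarith
    · intro h k
      have : (0:ℝ) < 1 / ((k:ℝ) + 1) := by positivity
      linarith
  have hanti : Antitone (fun k : ℕ => Set.Iic (cq p m i j + 1 / ((k:ℝ) + 1))) := by
    intro a b hab
    apply Set.Iic_subset_Iic.2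
    have : 1 / ((b:ℝ) + 1) ≤ 1 / ((a:ℝ) + 1) := by
      apply one_div_le_one_div_of_le (by positivity)
      exact_mod_cast add_le_add_left (Nat.cast_le.2 hab) 1
    linarith
  have h1 : Filter.Tendsto (fun k : ℕ => margI p i (Set.Iic (cq p m i j + 1 / ((k:ℝ) + 1))))
      Filter.atTop (nhds (margI p i (⋂ k : ℕ, Set.Iic (cq p m i j + 1 / ((k:ℝ) + 1))))) :=
    tendsto_measure_iInter_atTop (fun k => measurableSet_Iic.nullMeasurableSet) hanti
      ⟨0, measure_ne_top _ _⟩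
  rw [hInter] at h1
  have h2 := toReal_tendsto (μ := margI p i) h1
  exact ge_of_tendsto' h2 hev |> fun h => h

lemma G_Iio_cq_le (i : Fin d) {j : ℕ} (hj : 1 ≤ j) (hjm : j < m) :
    (margI p i (Set.Iio (cq p m i j))).toReal ≤ (j : ℝ) / m := by
  have hm : 0 < m := Nat.zero_lt_of_lt hjm
  have hbdd := Sq_bddBelow p m i hj hm
  have hUnion : (⋃ k : ℕ, Set.Iic (cq p m i j - 1 / ((k:ℝ) + 1))) = Set.Iio (cq p m i j) := by
    ext t
    simp only [Set.mem_iUnion, Set.mem_Iic, Set.mem_Iio]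
    constructor
    · rintro ⟨k, hk⟩
      have : (0:ℝ) < 1 / ((k:ℝ) + 1) := by positivity
      linarith
    · intro h
      obtain ⟨k, hk⟩ := exists_nat_one_div_lt (sub_pos.2 h)
      exact ⟨k, by linarith⟩
  have hmono : Monotone (fun k : ℕ => Set.Iic (cq p m i j - 1 / ((k:ℝ) + 1))) := by
    intro a b hab
    apply Set.Iic_subset_Iic.2
    have : 1 / ((b:ℝ) + 1) ≤ 1 / ((a:ℝ) + 1) := by
      apply one_div_le_one_div_of_le (by positivity)
      exact_mod_cast add_le_add_left (Nat.cast_le.2 hab) 1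
    linarith
  have h1 : Filter.Tendsto (fun k : ℕ => margI p i (Set.Iic (cq p m i j - 1 / ((k:ℝ) + 1))))
      Filter.atTop (nhds (margI p i (⋃ k : ℕ, Set.Iic (cq p m i j - 1 / ((k:ℝ) + 1))))) :=
    tendsto_measure_iUnion_atTop hmono
  rw [hUnion] at h1
  have h2 := toReal_tendsto (μ := margI p i) h1
  apply le_of_tendsto' h2
  intro k
  have hnot : cq p m i j - 1 / ((k:ℝ) + 1) ∉ Sq p m i j := by
    apply notMem_of_lt_csInf ?_ hbdd
    have : (0:ℝ) < 1 / ((k:ℝ) + 1) := by positivity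
    unfold cq; linarith
  have : ¬ ((j : ℝ) / m ≤ G p i (cq p m i j - 1 / ((k:ℝ) + 1))) := hnot
  exact (not_le.1 this).le

/-- strip sets -/
noncomputable def SsetR (i : Fin d) (j : ℕ) : Set (Fin d → ℝ) :=
  (fun y => y i) ⁻¹' (if j = 0 then Set.Iio (cq p m i 1)
    else if j + 1 < m then Set.Ioo (cq p m i j) (cq p m i (j+1)) else Set.Ioi (cq p m i j))

/-- grid quadrants -/
def QsetR (g : Fin d → ℕ) : Set (Fin d → ℝ) := {y | ∀ i, y i ≤ cq p m i (g i)}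

lemma SsetR_measurableSet (i : Fin d) (j : ℕ) : MeasurableSet (SsetR p m i j) := by
  unfold SsetR
  apply MeasurableSet.preimage ?_ (measurable_pi_apply i)
  split
  · exact measurableSet_Iio
  · split
    · exact measurableSet_Ioo
    · exact measurableSet_Ioi

lemma QsetR_measurableSet (g : Fin d → ℕ) : MeasurableSet (QsetR p m g) := by
  have : QsetR p m g = Set.pi Set.univ (fun i => Set.Iic (cq p m i (g i))) := by
    ext y; simp only [QsetR, Set.mem_univ_pi, Set.mem_Iic, Set.mem_setOf_eq]
  rw [this]
  exact MeasurableSet.univ_pi fun i => measurableSet_Iic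

lemma pv_preimage (i : Fin d) {A : Set ℝ} (hA : MeasurableSet A) :
    pv p ((fun y => y i) ⁻¹' A) = (margI p i A).toReal := by
  unfold pv margI
  rw [Measure.map_apply (measurable_pi_apply i) hA]

lemma pv_SsetR_le (hm : 2 ≤ m) (i : Fin d) {j : ℕ} (hj : j < m) :
    pv p (SsetR p m i j) ≤ 1 / m := by
  have hm0 : (0:ℝ) < m := by exact_mod_cast Nat.lt_of_lt_of_le two_pos hm
  rcases Nat.eq_zero_or_pos j with h0 | h1
  · subst h0
    unfold SsetR
    rw [if_pos rfl, pv_preimage p i measurableSet_Iio]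
    have := G_Iio_cq_le p m i (le_refl 1) (by omega)
    simpa using this
  · unfold SsetR
    rw [if_neg (by omega)]
    by_cases hj2 : j + 1 < m
    · rw [if_pos hj2, pv_preimage p i measurableSet_Ioo]
      set a := cq p m i j
      set b := cq p m i (j+1)
      by_cases hab : a < b
      · have hdisj : Disjoint (Set.Iic a) (Set.Ioo a b) := by
          rw [Set.disjoint_left]
          rintro t ht ⟨h1', _⟩
          exact absurd ht (not_le.2 h1')
        have hunion : Set.Iic a ∪ Set.Ioo a b ⊆ Set.Iio b := by
          rintro t (ht | ht)
          · exact lt_of_le_of_lt ht hab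
          · exact ht.2
        have hadd : margI p i (Set.Iic a) + margI p i (Set.Ioo a b) ≤ margI p i (Set.Iio b) := by
          rw [← measure_union hdisj measurableSet_Ioo]
          exact measure_mono hunion
        have hfin1 : margI p i (Set.Iic a) ≠ ⊤ := measure_ne_top _ _
        have hfin2 : margI p i (Set.Ioo a b) ≠ ⊤ := measure_ne_top _ _
        have htr : (margI p i (Set.Iic a)).toReal + (margI p i (Set.Ioo a b)).toReal
            ≤ (margI p i (Set.Iio b)).toReal := by
          rw [← ENNReal.toReal_add hfin1 hfin2]
          exact ENNReal.toReal_mono (measure_ne_top _ _) hadd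
        have hga : (j:ℝ)/m ≤ G p i a := G_cq_ge p m i h1 (by omega)
        have hgb : (margI p i (Set.Iio b)).toReal ≤ ((j:ℝ)+1)/m := by
          have := G_Iio_cq_le p m i (by omega : 1 ≤ j+1) hj2
          push_cast at this ⊢
          linarith
        have : (margI p i (Set.Ioo a b)).toReal ≤ ((j:ℝ)+1)/m - (j:ℝ)/m := by
          unfold G at hga; linarith
        calc (margI p i (Set.Ioo a b)).toReal ≤ ((j:ℝ)+1)/m - (j:ℝ)/m := this
          _ = 1/m := by field_simp; ring
      · rw [Set.Ioo_eq_empty hab]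
        simp only [measure_empty, ENNReal.toReal_zero]
        positivity
    · rw [if_neg hj2, pv_preimage p i measurableSet_Ioi]
      have hjm : (j:ℝ) = (m:ℝ) - 1 := by
        have : j = m - 1 := by omega
        subst this
        push_cast [Nat.cast_sub (by omega : 1 ≤ m)]
        ring
      have hdisj : Disjoint (Set.Iic (cq p m i j)) (Set.Ioi (cq p m i j)) :=
        Set.Iic_disjoint_Ioi (le_refl _)
      have hunion : Set.Iic (cq p m i j) ∪ Set.Ioi (cq p m i j) = Set.univ := by
        ext t; simp [le_or_gt]
      have hadd : margI p i (Set.Iic (cq p m i j)) + margI p i (Set.Ioi (cq p m i j)) = 1 := by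
        rw [← measure_union hdisj measurableSet_Ioi, hunion, measure_univ]
      have htr : (margI p i (Set.Iic (cq p m i j))).toReal
          + (margI p i (Set.Ioi (cq p m i j))).toReal = 1 := by
        rw [← ENNReal.toReal_add (measure_ne_top _ _) (measure_ne_top _ _), hadd]
        simp
      have hga : (j:ℝ)/m ≤ G p i (cq p m i j) := G_cq_ge p m i h1 hj
      unfold G at hga
      have : (1:ℝ) - (j:ℝ)/m = 1/m := by rw [hjm]; field_simp; ring
      linarith

/-- the key deterministic bracketing lemma -/
lemma bracket (hm : 2 ≤ m) (n : ℕ) (s : Fin n → (Fin d → ℝ)) {u : ℝ} (hu : 0 ≤ u)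
    (hQ : ∀ g : Fin d → Fin m,
      |avg n s (QsetR p m (fun i => (g i : ℕ))) - pv p (QsetR p m (fun i => (g i : ℕ)))| ≤ u)
    (hS : ∀ (i : Fin d) (j : Fin m),
      |avg n s (SsetR p m i (j : ℕ)) - pv p (SsetR p m i (j : ℕ))| ≤ u) :
    ∀ x, |Fhat n s x - cdf p x| ≤ ((d:ℝ) + 1) * (u + 1 / m) := by
  classical
  intro x
  have hm0 : (0:ℝ) < m := by exact_mod_cast Nat.lt_of_lt_of_le two_pos hm
  have hd0 : (0:ℝ) ≤ d := Nat.cast_nonneg d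
  have h1m : (0:ℝ) ≤ 1/m := by positivity
  by_cases hlow : ∃ i, x i < cq p m i 1
  · obtain ⟨i, hi⟩ := hlow
    set z0 : Fin m := ⟨0, by omega⟩ with hz0
    have hsub : Quad x ⊆ SsetR p m i ((z0 : Fin m) : ℕ) := by
      intro y hy
      show y ∈ SsetR p m i 0
      unfold SsetR
      rw [if_pos rfl]
      exact lt_of_le_of_lt (hy i) hi
    have h01 := hS i z0
    have h02 := pv_SsetR_le p m hm i (show ((z0:Fin m):ℕ) < m by omega)
    have h03 : Fhat n s x ≤ avg n s (SsetR p m i ((z0:Fin m):ℕ)) := avg_mono n s hsub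
    have h04 : cdf p x ≤ pv p (SsetR p m i ((z0:Fin m):ℕ)) := pv_mono p hsub
    have h05 := Fhat_nonneg n s x
    have h06 := cdf_nonneg p x
    rw [abs_le] at h01 ⊢
    constructor <;> nlinarith
  · push_neg at hlow
    set P : Fin d → ℕ → Prop := fun i j => 0 < j ∧ cq p m i j ≤ x i with hP
    have hm1 : 1 ≤ m - 1 := by omega
    set jx : Fin d → ℕ := fun i => Nat.findGreatest (P i) (m-1) with hjx
    have hjx1 : ∀ i, 1 ≤ jx i := fun i =>
      Nat.le_findGreatest (P := P i) hm1 (show P i 1 from ⟨one_pos, hlow i⟩)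
    have hjxm : ∀ i, jx i < m := fun i => by
      have h := Nat.findGreatest_le (P := P i) (m-1)
      have h2 : jx i = Nat.findGreatest (P i) (m-1) := rfl
      omega
    have hcle : ∀ i, cq p m i (jx i) ≤ x i := fun i =>
      (Nat.findGreatest_spec (P := P i) hm1 (show P i 1 from ⟨one_pos, hlow i⟩)).2
    have hmax : ∀ i, jx i + 1 < m → x i < cq p m i (jx i + 1) := by
      intro i hlt
      have h : ¬ (0 < jx i + 1 ∧ cq p m i (jx i + 1) ≤ x i) :=
        Nat.findGreatest_is_greatest (lt_add_one (jx i)) (by omega : jx i + 1 ≤ m - 1)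
      push_neg at h
      exact h (by omega)
    set g : Fin d → Fin m := fun i => ⟨jx i, hjxm i⟩ with hg
    have hgnat : ∀ i, ((g i : Fin m) : ℕ) = jx i := fun i => rfl
    set Qg := QsetR p m (fun i => jx i) with hQg
    have hsub1 : Qg ⊆ Quad x := fun y hy i => le_trans (hy i) (hcle i)
    have hcover : Quad x ⊆ Qg ∪ ⋃ i, SsetR p m i (jx i) := by
      intro y hy
      by_cases hq : ∀ i, y i ≤ cq p m i (jx i)
      · exact Or.inl hq
      · push_neg at hq
        obtain ⟨i, hi⟩ := hq
        refine Or.inr (Set.mem_iUnion.2 ⟨i, ?_⟩)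
        unfold SsetR
        rw [if_neg (by have := hjx1 i; omega)]
        by_cases hj2 : jx i + 1 < m
        · rw [if_pos hj2]
          exact ⟨hi, lt_of_le_of_lt (hy i) (hmax i hj2)⟩
        · rw [if_neg hj2]
          exact hi
    -- upper bound on Fhat
    have hQgdev : |avg n s Qg - pv p Qg| ≤ u := hQ g
    have hSdev : ∀ i, |avg n s (SsetR p m i (jx i)) - pv p (SsetR p m i (jx i))| ≤ u :=
      fun i => hS i (g i)
    have hSpv : ∀ i, pv p (SsetR p m i (jx i)) ≤ 1/m := fun i => pv_SsetR_le p m hm i (hjxm i)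
    have hup : Fhat n s x ≤ cdf p x + ((d:ℝ)+1) * u + (d:ℝ)/m := by
      have h1 : Fhat n s x ≤ avg n s Qg + ∑ i, avg n s (SsetR p m i (jx i)) :=
        avg_subadd n s hcover
      have h2 : avg n s Qg ≤ pv p Qg + u := by have := abs_le.1 hQgdev; linarith [this.2]
      have h3 : ∑ i, avg n s (SsetR p m i (jx i)) ≤ ∑ _i : Fin d, (1/(m:ℝ) + u) := by
        apply Finset.sum_le_sum
        intro i _
        have ha := abs_le.1 (hSdev i)
        have hb := hSpv i
        linarith [ha.2]
      have h4 : (∑ _i : Fin d, (1/(m:ℝ) + u)) = (d:ℝ) * (1/m + u) := by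
        rw [Finset.sum_const]; simp [mul_comm]; ring
      have h5 : pv p Qg ≤ cdf p x := pv_mono p hsub1
      rw [h4] at h3
      calc Fhat n s x ≤ avg n s Qg + ∑ i, avg n s (SsetR p m i (jx i)) := h1
        _ ≤ (pv p Qg + u) + (d:ℝ) * (1/m + u) := add_le_add h2 h3
        _ ≤ cdf p x + ((d:ℝ)+1) * u + (d:ℝ)/m := by
            have : (d:ℝ) * (1/m + u) = (d:ℝ)/m + (d:ℝ)*u := by ring
            nlinarith
    have hdown : cdf p x ≤ Fhat n s x + u + ((d:ℝ)+1)/m := by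
      have h1 : pv p (Quad x) ≤ pv p Qg + ∑ i, pv p (SsetR p m i (jx i)) :=
        pv_subadd p hcover
      have h2 : avg n s Qg ≤ Fhat n s x := avg_mono n s hsub1
      have h3 : pv p Qg ≤ avg n s Qg + u := by have := abs_le.1 hQgdev; linarith [this.1]
      have h4 : ∑ i, pv p (SsetR p m i (jx i)) ≤ ∑ _i : Fin d, (1/(m:ℝ)) :=
        Finset.sum_le_sum fun i _ => hSpv i
      have h5 : (∑ _i : Fin d, (1/(m:ℝ))) = (d:ℝ)/m := by
        rw [Finset.sum_const]; simp [mul_comm]; ring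
      rw [h5] at h4
      have h6 : cdf p x = pv p (Quad x) := rfl
      rw [h6]
      have : ((d:ℝ)+1)/m = (d:ℝ)/m + 1/m := by ring
      nlinarith
    have hexp : ((d:ℝ)+1)*(u+1/m) = ((d:ℝ)+1)*u + (d:ℝ)/m + 1/m := by ring
    have hdu : (0:ℝ) ≤ (d:ℝ)*u := mul_nonneg hd0 hu
    have hexp2 : ((d:ℝ)+1)/m = (d:ℝ)/m + 1/m := by ring
    rw [abs_le]
    constructor <;> linarith

end Quantile

section Prob

variable {P : Measure (ℕ → (Fin d → ℝ))} {p : Measure (Fin d → ℝ)} [IsProbabilityMeasure p]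

/-- projection to the first N coordinates -/
def projN (N : ℕ) : (ℕ → (Fin d → ℝ)) → (Fin N → (Fin d → ℝ)) := fun ω i => ω i.val

lemma projN_measurable (N : ℕ) : Measurable (projN (d := d) N) :=
  measurable_pi_lambda _ fun i => measurable_pi_apply i.val

variable (hP : ∀ N : ℕ, P.map (projN N) = Measure.pi (fun _ : Fin N => p))

include hP

lemma cylinder_measure {N : ℕ} {T : Set (Fin N → (Fin d → ℝ))} (hT : MeasurableSet T) :
    P (projN N ⁻¹' T) = Measure.pi (fun _ : Fin N => p) T := by
  rw [← hP N, Measure.map_apply (projN_measurable N) hT]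

lemma P_univ : P Set.univ = 1 := by
  have h := cylinder_measure (P := P) (p := p) hP (N := 0) MeasurableSet.univ
  simpa using h

lemma P_isProb : IsProbabilityMeasure P := ⟨P_univ hP⟩

lemma single_measure {N : ℕ} (i : Fin N) {S : Set (Fin d → ℝ)} (hS : MeasurableSet S) :
    P {ω | ω i.val ∈ S} = p S := by
  classical
  have hset : {ω : ℕ → (Fin d → ℝ) | ω i.val ∈ S}
      = projN N ⁻¹' (Set.pi Set.univ (fun t => if t = i then S else Set.univ)) := by
    ext ω
    simp only [Set.mem_preimage, Set.mem_univ_pi, Set.mem_setOf_eq, projN]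
    constructor
    · intro h t; split
      · next ht => subst ht; exact h
      · exact Set.mem_univ _
    · intro h; have := h i; rwa [if_pos rfl] at this
  rw [hset, cylinder_measure hP (MeasurableSet.univ_pi fun t => by split <;>
    [exact hS; exact MeasurableSet.univ]), Measure.pi_pi]
  have : ∀ t : Fin N, p (if t = i then S else Set.univ) = if t = i then p S else 1 := by
    intro t; split <;> simp
  rw [Finset.prod_congr rfl (fun t _ => this t), Finset.prod_ite_eq' Finset.univ i fun _ => p S]
  simp

lemma pair_measure {N : ℕ} {i j : Fin N} (hij : i ≠ j) {S : Set (Fin d → ℝ)}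
    (hS : MeasurableSet S) :
    P ({ω | ω i.val ∈ S} ∩ {ω | ω j.val ∈ S}) = p S * p S := by
  classical
  have hset : ({ω : ℕ → (Fin d → ℝ) | ω i.val ∈ S} ∩ {ω | ω j.val ∈ S})
      = projN N ⁻¹' (Set.pi Set.univ
          (fun t => if t = i then S else if t = j then S else Set.univ)) := by
    ext ω
    simp only [Set.mem_preimage, Set.mem_univ_pi, Set.mem_inter_iff, Set.mem_setOf_eq, projN]
    constructor
    · rintro ⟨h1, h2⟩ t
      split
      · next ht => subst ht; exact h1
      · split
        · next ht => subst ht; exact h2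
        · exact Set.mem_univ _
    · intro h
      constructor
      · have := h i; rwa [if_pos rfl] at this
      · have := h j; rw [if_neg (Ne.symm hij), if_pos rfl] at this; exact this
  rw [hset, cylinder_measure hP (MeasurableSet.univ_pi fun t => by
    split
    · exact hS
    · split; · exact hS
      · exact MeasurableSet.univ), Measure.pi_pi]
  have hfe : ∀ t : Fin N, p (if t = i then S else if t = j then S else Set.univ)
      = if t = i then p S else if t = j then p S else 1 := by
    intro t; split
    · rfl
    · split <;> simp
  rw [Finset.prod_congr rfl (fun t _ => hfe t)]
  rw [← Finset.mul_prod_erase Finset.univ _ (Finset.mem_univ i), if_pos rfl]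
  have herase : ∀ t ∈ Finset.univ.erase i,
      (if t = i then p S else if t = j then p S else 1) = (if t = j then p S else 1) := by
    intro t ht
    rw [if_neg (Finset.mem_erase.1 ht).1]
  rw [Finset.prod_congr rfl herase, Finset.prod_ite_eq' (Finset.univ.erase i) j fun _ => p S,
    if_pos (Finset.mem_erase.2 ⟨Ne.symm hij, Finset.mem_univ j⟩)]

/-- Chebyshev's inequality for the empirical measure of a set. -/
lemma chebyshev {N : ℕ} (hN : 1 ≤ N) {S : Set (Fin d → ℝ)} (hS : MeasurableSet S)
    {u : ℝ} (hu : 0 < u) :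
    P {ω | u ≤ |avg N (fun i => ω i.val) S - pv p S|}
      ≤ ENNReal.ofReal (1 / (4 * N * u ^ 2)) := by
  classical
  haveI : IsProbabilityMeasure P := P_isProb hP
  set μS : ℝ := pv p S with hμS
  have hμ0 : 0 ≤ μS := pv_nonneg p S
  have hμ1 : μS ≤ 1 := pv_le_one p S
  set T : Fin N → Set (ℕ → (Fin d → ℝ)) := fun i => {ω | ω i.val ∈ S} with hT
  have hTmeas : ∀ i, MeasurableSet (T i) := fun i => (measurable_pi_apply i.val) hS
  have hind : ∀ (i : Fin N) (ω : ℕ → (Fin d → ℝ)),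
      ind S (ω i.val) = (T i).indicator (fun _ => (1:ℝ)) ω := by
    intro i ω
    simp only [ind, Set.indicator_apply, hT, Set.mem_setOf_eq]
  -- integrability of indicators
  have hint : ∀ (W : Set (ℕ → (Fin d → ℝ))), MeasurableSet W →
      Integrable ((W.indicator (fun _ => (1:ℝ)))) P := by
    intro W hW
    rw [integrable_indicator_iff hW]
    exact integrableOn_const (measure_ne_top P W)
  have hintone : ∀ (W : Set (ℕ → (Fin d → ℝ))), MeasurableSet W →
      ∫ ω, W.indicator (fun _ => (1:ℝ)) ω ∂P = (P W).toReal := fun W hW =>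
    integral_indicator_one hW
  -- the summand functions
  set f : Fin N → (ℕ → (Fin d → ℝ)) → ℝ :=
    fun i ω => (T i).indicator (fun _ => (1:ℝ)) ω - μS with hf
  have hfint : ∀ i, Integrable (f i) P := fun i => (hint _ (hTmeas i)).sub (integrable_const μS)
  have hfij_eq : ∀ i j : Fin N, (fun ω => f i ω * f j ω)
      = fun ω => (T i ∩ T j).indicator (fun _ => (1:ℝ)) ω
          - μS * (T i).indicator (fun _ => (1:ℝ)) ω
          - μS * (T j).indicator (fun _ => (1:ℝ)) ω + μS ^ 2 := by
    intro i j
    funext ω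
    simp only [hf]
    by_cases h1 : ω ∈ T i <;> by_cases h2 : ω ∈ T j <;>
      simp [Set.indicator_of_mem, Set.indicator_of_notMem, h1, h2,
        Set.mem_inter_iff] <;> ring
  have hfijint : ∀ i j : Fin N, Integrable (fun ω => f i ω * f j ω) P := by
    intro i j
    rw [hfij_eq i j]
    exact ((((hint _ ((hTmeas i).inter (hTmeas j))).sub
      ((hint _ (hTmeas i)).const_mul μS)).sub
      ((hint _ (hTmeas j)).const_mul μS)).add (integrable_const _))
  have hTval : ∀ i, (P (T i)).toReal = μS := by
    intro i
    rw [hT]; rw [single_measure hP i hS]; rfl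
  have hTTval : ∀ i j : Fin N, i ≠ j → (P (T i ∩ T j)).toReal = μS * μS := by
    intro i j hij
    rw [hT]
    show (P _).toReal = _
    rw [pair_measure hP hij hS, ENNReal.toReal_mul]
    rfl
  -- integral of each product
  have hfij_int_eq : ∀ i j : Fin N, ∫ ω, f i ω * f j ω ∂P
      = (P (T i ∩ T j)).toReal - μS ^ 2 := by
    intro i j
    rw [hfij_eq i j]
    rw [integral_add, integral_sub, integral_sub, integral_const_mul, integral_const_mul,
      hintone _ ((hTmeas i).inter (hTmeas j)),
      hintone _ (hTmeas i), hintone _ (hTmeas j),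
      integral_const, hTval i, hTval j]
    · simp only [measure_univ, probReal_univ, ENNReal.toReal_one, smul_eq_mul, one_mul]
      ring
    · exact hint _ ((hTmeas i).inter (hTmeas j))
    · exact (hint _ (hTmeas i)).const_mul μS
    · exact (hint _ ((hTmeas i).inter (hTmeas j))).sub ((hint _ (hTmeas i)).const_mul μS)
    · exact (hint _ (hTmeas j)).const_mul μS
    · exact (((hint _ ((hTmeas i).inter (hTmeas j))).sub
        ((hint _ (hTmeas i)).const_mul μS)).sub ((hint _ (hTmeas j)).const_mul μS))
    · exact integrable_const _
  -- second moment
  set Y : (ℕ → (Fin d → ℝ)) → ℝ := fun ω => (∑ i : Fin N, f i ω) ^ 2 with hY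
  have hYint : Integrable Y P := by
    have : Y = fun ω => ∑ i : Fin N, ∑ j : Fin N, f i ω * f j ω := by
      funext ω
      simp only [hY]
      rw [pow_two, Finset.sum_mul_sum]
    rw [this]
    exact integrable_finset_sum _ fun i _ => integrable_finset_sum _ fun j _ => hfijint i j
  have hYval : ∫ ω, Y ω ∂P ≤ (N : ℝ) / 4 := by
    have h1 : ∫ ω, Y ω ∂P = ∑ i : Fin N, ∑ j : Fin N, ∫ ω, f i ω * f j ω ∂P := by
      have h2 : Y = fun ω => ∑ i : Fin N, ∑ j : Fin N, f i ω * f j ω := by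
        funext ω; simp only [hY]; rw [pow_two, Finset.sum_mul_sum]
      rw [h2, integral_finset_sum _ fun i _ => integrable_finset_sum _ fun j _ => hfijint i j]
      exact Finset.sum_congr rfl fun i _ =>
        integral_finset_sum _ fun j _ => hfijint i j
    have h3 : ∀ i j : Fin N, i ≠ j → ∫ ω, f i ω * f j ω ∂P = 0 := by
      intro i j hij
      rw [hfij_int_eq i j, hTTval i j hij]
      ring
    have h4 : ∀ i : Fin N, ∫ ω, f i ω * f i ω ∂P = μS - μS ^ 2 := by
      intro i
      rw [hfij_int_eq i i, Set.inter_self, hTval i]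
    have h5 : ∀ i : Fin N, ∑ j : Fin N, ∫ ω, f i ω * f j ω ∂P = μS - μS ^ 2 := by
      intro i
      rw [Finset.sum_eq_single i]
      · exact h4 i
      · intro j _ hji; exact h3 i j (Ne.symm hji)
      · intro hni; exact absurd (Finset.mem_univ i) hni
    rw [h1, Finset.sum_congr rfl fun i _ => h5 i, Finset.sum_const, Finset.card_univ,
      Fintype.card_fin, nsmul_eq_mul]
    have : μS - μS ^ 2 ≤ 1 / 4 := by nlinarith [sq_nonneg (μS - 1/2)]
    calc (N:ℝ) * (μS - μS ^ 2) ≤ (N:ℝ) * (1/4) := by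
          apply mul_le_mul_of_nonneg_left this (Nat.cast_nonneg N)
      _ = (N:ℝ)/4 := by ring
  -- Markov
  set A := {ω : ℕ → Fin d → ℝ | u ≤ |avg N (fun i => ω i.val) S - μS|} with hA
  set B := {ω : ℕ → Fin d → ℝ | ((N:ℝ) * u) ^ 2 ≤ Y ω} with hB
  have hN0 : (0:ℝ) < N := by exact_mod_cast hN
  have hAB : A ⊆ B := by
    intro ω hω
    rw [hA, Set.mem_setOf_eq] at hω
    simp only [hB, Set.mem_setOf_eq, hY]
    have hsum : (∑ i : Fin N, f i ω) = (N:ℝ) * (avg N (fun i => ω i.val) S - μS) := by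
      simp only [hf]
      rw [Finset.sum_sub_distrib, Finset.sum_const, Finset.card_univ, Fintype.card_fin,
        nsmul_eq_mul]
      have : (∑ i : Fin N, (T i).indicator (fun _ => (1:ℝ)) ω)
          = ∑ i : Fin N, ind S (ω i.val) := Finset.sum_congr rfl fun i _ => (hind i ω).symm
      rw [this]
      have havg : avg N (fun i => ω i.val) S = (∑ i : Fin N, ind S (ω i.val)) / N := rfl
      rw [havg]
      field_simp
    rw [hsum, mul_pow, mul_pow]
    have : u ^ 2 ≤ (avg N (fun i => ω i.val) S - μS) ^ 2 := by
      rw [← sq_abs (avg N (fun i => ω i.val) S - μS)]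
      exact pow_le_pow_left₀ hu.le hω 2
    have hN2 : (0:ℝ) ≤ (N:ℝ)^2 := by positivity
    exact mul_le_mul_of_nonneg_left this hN2
  have hmarkov := mul_meas_ge_le_integral_of_nonneg
    (Filter.Eventually.of_forall fun ω => sq_nonneg _) hYint (((N:ℝ) * u) ^ 2)
  have hBmeas : P A ≤ P B := measure_mono hAB
  have htoReal : (P A).toReal ≤ 1 / (4 * N * u ^ 2) := by
    have h1 : (P A).toReal ≤ (P B).toReal :=
      ENNReal.toReal_mono (measure_ne_top _ _) hBmeas
    have h2 : (((N:ℝ) * u) ^ 2) * (P B).toReal ≤ (N:ℝ)/4 := le_trans hmarkov hYval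
    have h3 : (0:ℝ) < ((N:ℝ) * u) ^ 2 := by positivity
    rw [le_div_iff₀ (by positivity : (0:ℝ) < 4 * N * u ^ 2)]
    nlinarith [ENNReal.toReal_nonneg (a := P B)]
  exact (ENNReal.le_ofReal_iff_toReal_le (measure_ne_top _ _) (by positivity)).2 htoReal

end Prob

section Interp

variable {d : ℕ}

lemma Fhat_interp (ω : ℕ → (Fin d → ℝ)) {N n : ℕ} (hNn : N ≤ n) (hN : 1 ≤ N)
    (x : Fin d → ℝ) :
    |Fhat n (fun i => ω i.val) x - Fhat N (fun i => ω i.val) x| ≤ 1 - (N:ℝ)/(n:ℝ) := by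
  have hn1 : 1 ≤ n := le_trans hN hNn
  have hN0 : (0:ℝ) < N := by exact_mod_cast hN
  have hn0 : (0:ℝ) < n := by exact_mod_cast hn1
  set g : ℕ → ℝ := fun k => ind (Quad x) (ω k) with hg
  have hg0 : ∀ k, 0 ≤ g k := fun k => ind_nonneg _ _
  have hg1 : ∀ k, g k ≤ 1 := fun k => ind_le_one _ _
  set a : ℝ := ∑ k ∈ Finset.range N, g k with ha
  set b : ℝ := ∑ k ∈ Finset.Ico N n, g k with hb
  have hEN : Fhat N (fun i => ω i.val) x = a / N := by
    show (∑ i : Fin N, ind (Quad x) (ω i.val)) / (N:ℝ) = a / N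
    rw [ha, ← Fin.sum_univ_eq_sum_range (fun k => g k) N]
  have hEn : Fhat n (fun i => ω i.val) x = (a + b) / n := by
    show (∑ i : Fin n, ind (Quad x) (ω i.val)) / (n:ℝ) = (a + b) / n
    rw [show (∑ i : Fin n, ind (Quad x) (ω i.val)) = ∑ k ∈ Finset.range n, g k from
      Fin.sum_univ_eq_sum_range (fun k => g k) n]
    congr 1
    rw [Finset.range_eq_Ico, ← Finset.sum_Ico_consecutive _ (Nat.zero_le N) hNn,
      ha, hb, Finset.range_eq_Ico]
  have ha0 : 0 ≤ a := Finset.sum_nonneg fun k _ => hg0 k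
  have haN : a ≤ N := by
    calc a ≤ ∑ _k ∈ Finset.range N, (1:ℝ) := Finset.sum_le_sum fun k _ => hg1 k
      _ = N := by simp
  have hb0 : 0 ≤ b := Finset.sum_nonneg fun k _ => hg0 k
  have hbn : b ≤ (n:ℝ) - N := by
    calc b ≤ ∑ _k ∈ Finset.Ico N n, (1:ℝ) := Finset.sum_le_sum fun k _ => hg1 k
      _ = (((Finset.Ico N n).card : ℕ) : ℝ) := by rw [Finset.sum_const]; simp
      _ = ((n - N : ℕ) : ℝ) := by rw [Nat.card_Ico]
      _ = (n:ℝ) - N := by rw [Nat.cast_sub hNn]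
  have hinv : 1/(n:ℝ) ≤ 1/(N:ℝ) := one_div_le_one_div_of_le hN0 (by exact_mod_cast hNn)
  have hid1 : a/(N:ℝ) - a/n = a * (1/N - 1/n) := by ring
  have hid2 : (N:ℝ) * (1/N - 1/n) = 1 - (N:ℝ)/n := by field_simp
  have h4 : a/(N:ℝ) - a/n ≤ 1 - (N:ℝ)/n := by
    rw [hid1, ← hid2]
    exact mul_le_mul_of_nonneg_right haN (by linarith)
  have h1 : (a+b)/(n:ℝ) = a/n + b/n := add_div _ _ _
  have h2 : b/(n:ℝ) ≤ ((n:ℝ) - N)/n := div_nat_mono hbn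
  have h6 : ((n:ℝ) - N)/n = 1 - (N:ℝ)/n := by field_simp
  have hb0n : 0 ≤ b/(n:ℝ) := div_nonneg hb0 hn0.le
  have h3 : 0 ≤ a/(N:ℝ) - a/n := by
    rw [hid1]; exact mul_nonneg ha0 (by linarith)
  rw [hEN, hEn, abs_le]
  constructor <;> linarith

end Interp

section Rate

/-- the bracketing bound at checkpoint `j` -/
noncomputable def rho (d j : ℕ) : ℝ := ((d:ℝ)+1) * (1/((j:ℝ)+2) + 1/((j:ℝ)+2))

/-- the index of the last checkpoint before time `n` -/
def Jof (d n : ℕ) : ℕ := Nat.findGreatest (fun j => (j+2)^(d+6) ≤ n) n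

/-- the universal rate sequence -/
noncomputable def rseq (d n : ℕ) : ℝ :=
  rho d (Jof d n) + (1 - (((Jof d n + 2)^(d+6) : ℕ) : ℝ)/(((Jof d n + 3)^(d+6) : ℕ) : ℝ))

lemma rho_nonneg (d j : ℕ) : 0 ≤ rho d j := by
  unfold rho; positivity

lemma Jof_spec {d n : ℕ} (hn : 2^(d+6) ≤ n) : (Jof d n + 2)^(d+6) ≤ n := by
  classical
  exact Nat.findGreatest_spec (P := fun j => (j+2)^(d+6) ≤ n) (Nat.zero_le n)
    (by simpa using hn)

lemma Jof_lt {d n : ℕ} (hn : 2^(d+6) ≤ n) : n < (Jof d n + 3)^(d+6) := by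
  classical
  by_cases h : Jof d n + 1 ≤ n
  · have h2 := Nat.findGreatest_is_greatest (P := fun j => (j+2)^(d+6) ≤ n)
      (Nat.lt_succ_self (Jof d n)) h
    have h3 : ¬ ((Jof d n + 1 + 2)^(d+6) ≤ n) := h2
    have : Jof d n + 1 + 2 = Jof d n + 3 := by omega
    rw [this] at h3
    omega
  · push_neg at h
    have hJ : n ≤ Jof d n := by omega
    have h1 : n + 3 ≤ Jof d n + 3 := by omega
    have h2 : Jof d n + 3 ≤ (Jof d n + 3)^(d+6) := Nat.le_self_pow (by omega) _
    omega

lemma Jof_ge {d j₀ n : ℕ} (hn : (j₀+2)^(d+6) ≤ n) : j₀ ≤ Jof d n := by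
  classical
  apply Nat.le_findGreatest (P := fun j => (j+2)^(d+6) ≤ n) ?_ hn
  calc j₀ ≤ j₀ + 2 := by omega
    _ ≤ (j₀+2)^(d+6) := Nat.le_self_pow (by omega) _
    _ ≤ n := hn

lemma Jof_tendsto (d : ℕ) : Filter.Tendsto (Jof d) Filter.atTop Filter.atTop := by
  apply Filter.tendsto_atTop_atTop.2
  intro j₀
  exact ⟨(j₀+2)^(d+6), fun n hn => Jof_ge hn⟩

lemma tendsto_one_div_add_two (c : ℝ) :
    Filter.Tendsto (fun j : ℕ => c * (1/((j:ℝ)+2))) Filter.atTop (nhds 0) := by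
  have h1 : Filter.Tendsto (fun j : ℕ => ((j:ℝ)+2)) Filter.atTop Filter.atTop :=
    Filter.tendsto_atTop_add_const_right _ 2 tendsto_natCast_atTop_atTop
  have h2 := h1.inv_tendsto_atTop
  have h3 : Filter.Tendsto (fun j : ℕ => 1/((j:ℝ)+2)) Filter.atTop (nhds 0) := by
    simpa [one_div, Pi.inv_def] using h2
  simpa using h3.const_mul c

lemma rho_tendsto (d : ℕ) : Filter.Tendsto (rho d) Filter.atTop (nhds 0) := by
  have h := tendsto_one_div_add_two (2*((d:ℝ)+1))
  have heq : (fun j : ℕ => 2*((d:ℝ)+1) * (1/((j:ℝ)+2))) = rho d := by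
    funext j; unfold rho; ring
  rwa [heq] at h

lemma ratio_tendsto (d : ℕ) :
    Filter.Tendsto (fun j : ℕ => 1 - (((j + 2)^(d+6) : ℕ) : ℝ)/(((j + 3)^(d+6) : ℕ) : ℝ))
      Filter.atTop (nhds 0) := by
  have heq : ∀ j : ℕ, (((j + 2)^(d+6) : ℕ) : ℝ)/(((j + 3)^(d+6) : ℕ) : ℝ)
      = (1 - 1/((j:ℝ)+3))^(d+6) := by
    intro j
    have h3 : ((j:ℝ)+3) ≠ 0 := by positivity
    have : (1 - 1/((j:ℝ)+3)) = ((j:ℝ)+2)/((j:ℝ)+3) := by field_simp; ring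
    rw [this, div_pow]
    push_cast
    ring_nf
  have h1 : Filter.Tendsto (fun j : ℕ => ((j:ℝ)+3)) Filter.atTop Filter.atTop :=
    Filter.tendsto_atTop_add_const_right _ 3 tendsto_natCast_atTop_atTop
  have h2 : Filter.Tendsto (fun j : ℕ => 1 - 1/((j:ℝ)+3)) Filter.atTop (nhds 1) := by
    have h3 : Filter.Tendsto (fun j : ℕ => 1/((j:ℝ)+3)) Filter.atTop (nhds 0) := by
      simpa [one_div, Pi.inv_def] using h1.inv_tendsto_atTop
    have := h3.const_sub 1
    simpa using this
  have h4 : Filter.Tendsto (fun j : ℕ => (1 - 1/((j:ℝ)+3))^(d+6)) Filter.atTop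
      (nhds (1^(d+6))) := h2.pow (d+6)
  rw [one_pow] at h4
  have h5 := h4.const_sub 1
  rw [sub_self] at h5
  refine h5.congr ?_
  intro j
  rw [heq j]

lemma rseq_tendsto (d : ℕ) : Filter.Tendsto (rseq d) Filter.atTop (nhds 0) := by
  have hphi : Filter.Tendsto
      (fun j : ℕ => rho d j + (1 - (((j + 2)^(d+6) : ℕ) : ℝ)/(((j + 3)^(d+6) : ℕ) : ℝ)))
      Filter.atTop (nhds 0) := by
    have := (rho_tendsto d).add (ratio_tendsto d)
    simpa using this
  exact hphi.comp (Jof_tendsto d)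

lemma rseq_nonneg (d n : ℕ) : 0 ≤ rseq d n := by
  unfold rseq
  have h1 := rho_nonneg d (Jof d n)
  have h2 : (((Jof d n + 2)^(d+6) : ℕ) : ℝ) ≤ (((Jof d n + 3)^(d+6) : ℕ) : ℝ) := by
    exact_mod_cast Nat.pow_le_pow_left (by omega) _
  have h3 : (0:ℝ) < (((Jof d n + 3)^(d+6) : ℕ) : ℝ) := by
    have : 0 < (Jof d n + 3)^(d+6) := Nat.pow_pos (by omega)
    exact_mod_cast this
  have h4 : (((Jof d n + 2)^(d+6) : ℕ) : ℝ)/(((Jof d n + 3)^(d+6) : ℕ) : ℝ) ≤ 1 :=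
    div_le_one_of_le₀ h2 h3.le
  linarith

end Rate

section MainAE

variable {d : ℕ} {P : Measure (ℕ → (Fin d → ℝ))} {p : Measure (Fin d → ℝ)}
  [IsProbabilityMeasure p]

lemma uniform_dev_ae (hP : ∀ N : ℕ, P.map (projN N) = Measure.pi (fun _ : Fin N => p)) :
    ∀ᵐ ω ∂P, ∀ᶠ n in Filter.atTop,
      ∀ x, |Fhat n (fun i => ω i.val) x - cdf p x| ≤ rseq d n := by
  classical
  -- the finite family of test sets at checkpoint j
  set Fam : (j : ℕ) → ((Fin d → Fin (j+2)) ⊕ (Fin d × Fin (j+2))) → Set (Fin d → ℝ) :=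
    fun j => Sum.elim (fun g => QsetR p (j+2) (fun i => (g i : ℕ)))
      (fun ij => SsetR p (j+2) ij.1 (ij.2 : ℕ)) with hFam
  have hFamMeas : ∀ j t, MeasurableSet (Fam j t) := by
    rintro j (g | ⟨i, jj⟩)
    · exact QsetR_measurableSet p (j+2) _
    · exact SsetR_measurableSet p (j+2) i jj
  set Nn : ℕ → ℕ := fun j => (j+2)^(d+6) with hNn
  set uu : ℕ → ℝ := fun j => 1/((j:ℝ)+2) with huu
  have huu0 : ∀ j, 0 < uu j := fun j => by simp only [huu]; positivity
  have hNn1 : ∀ j, 1 ≤ Nn j := fun j => Nat.one_le_iff_ne_zero.2 (by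
    simp only [hNn]; positivity)
  set Ej : ℕ → Set (ℕ → (Fin d → ℝ)) := fun j =>
    ⋃ t, {ω | uu j ≤ |avg (Nn j) (fun i => ω i.val) (Fam j t) - pv p (Fam j t)|} with hEj
  -- bound on the measure of each bad event
  have hEjbound : ∀ j, P (Ej j) ≤ ENNReal.ofReal (((d:ℝ)+1)/(4*((j:ℝ)+2)^3)) := by
    intro j
    have hcard : Fintype.card ((Fin d → Fin (j+2)) ⊕ (Fin d × Fin (j+2)))
        = (j+2)^d + d*(j+2) := by
      simp [Fintype.card_sum, Fintype.card_fun]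
    calc P (Ej j) ≤ ∑' t, P {ω | uu j ≤ |avg (Nn j) (fun i => ω i.val) (Fam j t)
          - pv p (Fam j t)|} := measure_iUnion_le _
      _ = ∑ t, P {ω | uu j ≤ |avg (Nn j) (fun i => ω i.val) (Fam j t)
          - pv p (Fam j t)|} := tsum_fintype _
      _ ≤ ∑ _t : ((Fin d → Fin (j+2)) ⊕ (Fin d × Fin (j+2))),
            ENNReal.ofReal (1 / (4 * (Nn j) * (uu j) ^ 2)) := by
          apply Finset.sum_le_sum
          intro t _
          exact chebyshev hP (hNn1 j) (hFamMeas j t) (huu0 j)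
      _ = (((j+2)^d + d*(j+2) : ℕ) : ℝ≥0∞) * ENNReal.ofReal (1 / (4 * (Nn j) * (uu j) ^ 2)) := by
          rw [Finset.sum_const, Finset.card_univ, hcard, nsmul_eq_mul]
      _ ≤ ENNReal.ofReal (((d:ℝ)+1)/(4*((j:ℝ)+2)^3)) := by
          rw [← ENNReal.ofReal_natCast ((j+2)^d + d*(j+2)),
            ← ENNReal.ofReal_mul (by positivity)]
          apply ENNReal.ofReal_le_ofReal
          -- the real arithmetic
          set M : ℝ := (j:ℝ)+2 with hM
          have hM2 : (2:ℝ) ≤ M := by simp only [hM]; exact_mod_cast by omega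
          have hM0 : (0:ℝ) < M := by linarith
          have hM1 : (1:ℝ) ≤ M := by linarith
          have hNcast : ((Nn j : ℕ) : ℝ) = M^(d+6) := by
            simp only [hNn, hM]; push_cast; ring
          have hucast : uu j = 1/M := by simp only [huu, hM]
          have hcc : (((j+2)^d + d*(j+2) : ℕ) : ℝ) = M^d + d*M := by
            push_cast [hM]; ring
          rw [hcc, hucast]
          have hden : 4 * ((Nn j : ℕ) : ℝ) * (1/M)^2 = 4 * M^(d+4) := by
            rw [hNcast]
            have : M^(d+6) = M^(d+4) * M^2 := by
              rw [← pow_add]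
            field_simp
            ring
          rw [hden]
          have hnum : M^d + (d:ℝ)*M ≤ ((d:ℝ)+1) * M^(d+1) := by
            have e1 : M^d ≤ M^(d+1) := pow_le_pow_right₀ hM1 (by omega)
            have e2 : M ≤ M^(d+1) := le_self_pow₀ hM1 (by omega)
            have e3 : (d:ℝ)*M ≤ (d:ℝ)*M^(d+1) :=
              mul_le_mul_of_nonneg_left e2 (Nat.cast_nonneg d)
            nlinarith
          have hsplit : M^(d+4) = M^(d+1) * M^3 := by rw [← pow_add]
          rw [mul_one_div, div_le_div_iff₀ (by positivity) (by positivity)]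
          calc (M^d + (d:ℝ)*M) * (4*M^3) ≤ (((d:ℝ)+1) * M^(d+1)) * (4*M^3) := by
                apply mul_le_mul_of_nonneg_right hnum (by positivity)
            _ = ((d:ℝ)+1) * (4 * M^(d+4)) := by rw [hsplit]; ring
  -- summability
  have hsummable : Summable (fun j : ℕ => ((d:ℝ)+1)/(4*((j:ℝ)+2)^3)) := by
    have hbase : Summable (fun n : ℕ => 1/(n:ℝ)^3) :=
      Real.summable_one_div_nat_pow.2 (by norm_num)
    have hshift : Summable (fun j : ℕ => 1/((j:ℝ)+2)^3) := by
      have := (summable_nat_add_iff (f := fun n : ℕ => 1/(n:ℝ)^3) 2).2 hbase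
      refine this.congr ?_
      intro j
      push_cast
      ring
    have := hshift.mul_left (((d:ℝ)+1)/4)
    refine this.congr ?_
    intro j
    field_simp
  have htsum : (∑' j, P (Ej j)) ≠ ⊤ := by
    have h1 : (∑' j, P (Ej j)) ≤ ∑' j : ℕ, ENNReal.ofReal (((d:ℝ)+1)/(4*((j:ℝ)+2)^3)) :=
      ENNReal.tsum_le_tsum hEjbound
    have h2 : (∑' j : ℕ, ENNReal.ofReal (((d:ℝ)+1)/(4*((j:ℝ)+2)^3)))
        = ENNReal.ofReal (∑' j : ℕ, ((d:ℝ)+1)/(4*((j:ℝ)+2)^3)) :=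
      (ENNReal.ofReal_tsum_of_nonneg (fun j => by positivity) hsummable).symm
    rw [h2] at h1
    exact ne_top_of_le_ne_top ENNReal.ofReal_ne_top h1
  -- Borel-Cantelli
  have hBC := MeasureTheory.ae_eventually_notMem htsum
  filter_upwards [hBC] with ω hω
  rw [Filter.eventually_atTop] at hω
  obtain ⟨J₀, hJ₀⟩ := hω
  rw [Filter.eventually_atTop]
  refine ⟨max ((J₀+2)^(d+6)) (2^(d+6)), fun n hn => ?_⟩
  set j := Jof d n with hj
  have h2n : 2^(d+6) ≤ n := le_trans (le_max_right _ _) hn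
  have hjJ : J₀ ≤ j := Jof_ge (le_trans (le_max_left _ _) hn)
  have hNle : (j+2)^(d+6) ≤ n := Jof_spec h2n
  have hnlt : n < (j+3)^(d+6) := Jof_lt h2n
  have hn1 : 1 ≤ n := le_trans (hNn1 j) hNle
  -- checkpoint deviation bound via bracketing
  have hnot : ω ∉ Ej j := hJ₀ j hjJ
  simp only [hEj, Set.mem_iUnion, not_exists, Set.mem_setOf_eq, not_le] at hnot
  have hcheck : ∀ x, |Fhat (Nn j) (fun i => ω i.val) x - cdf p x| ≤ rho d j := by
    have hbr := bracket p (j+2) (by omega) (Nn j) (fun i => ω i.val)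
      (u := uu j) (huu0 j).le
      (fun g => (hnot (Sum.inl g)).le)
      (fun i jj => (hnot (Sum.inr (i, jj))).le)
    intro x
    have := hbr x
    have hconv : ((d:ℝ)+1) * (uu j + 1/((j+2 : ℕ):ℝ)) = rho d j := by
      simp only [huu, rho]
      push_cast
      ring
    rw [← hconv]
    exact this
  intro x
  have hinterp := Fhat_interp ω hNle (hNn1 j) x
  have hrseq : rseq d n = rho d j + (1 - (((j + 2)^(d+6) : ℕ) : ℝ)/(((j + 3)^(d+6) : ℕ) : ℝ)) := by
    rw [rseq, ← hj]
  have hratio : 1 - ((Nn j : ℕ):ℝ)/(n:ℝ)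
      ≤ 1 - (((j + 2)^(d+6) : ℕ) : ℝ)/(((j + 3)^(d+6) : ℕ) : ℝ) := by
    have hNpos : (0:ℝ) < ((Nn j : ℕ):ℝ) := by exact_mod_cast (hNn1 j)
    have hnpos : (0:ℝ) < (n:ℝ) := by exact_mod_cast hn1
    have h1 : ((Nn j : ℕ):ℝ) = (((j + 2)^(d+6) : ℕ) : ℝ) := by rw [hNn]
    have h2 : (((j + 2)^(d+6) : ℕ) : ℝ)/(((j + 3)^(d+6) : ℕ) : ℝ) ≤ ((Nn j : ℕ):ℝ)/(n:ℝ) := by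
      rw [h1]
      apply div_le_div_of_nonneg_left (by positivity) hnpos
      exact_mod_cast hnlt.le
    linarith
  calc |Fhat n (fun i => ω i.val) x - cdf p x|
      ≤ |Fhat n (fun i => ω i.val) x - Fhat (Nn j) (fun i => ω i.val) x|
        + |Fhat (Nn j) (fun i => ω i.val) x - cdf p x| := by
        have : Fhat n (fun i => ω i.val) x - cdf p x
            = (Fhat n (fun i => ω i.val) x - Fhat (Nn j) (fun i => ω i.val) x)
              + (Fhat (Nn j) (fun i => ω i.val) x - cdf p x) := by ring
        rw [this]
        exact abs_add_le _ _
    _ ≤ (1 - ((Nn j : ℕ):ℝ)/(n:ℝ)) + rho d j := add_le_add hinterp (hcheck x)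
    _ ≤ rseq d n := by rw [hrseq]; linarith

end MainAE

section Algo

variable {d : ℕ}

open Classical in
/-- the predictor -/
noncomputable def phi (An Bn : ℕ → Set (Measure (Fin d → ℝ))) (n : ℕ)
    (s : Fin n → (Fin d → ℝ)) : Bool :=
  if h : ∃ k, (∃ q ∈ An k, DD n s q ≤ 2 * rseq d n) ∨ (∃ q ∈ Bn k, DD n s q ≤ 2 * rseq d n)
  then (if ∃ q ∈ An (Nat.find h), DD n s q ≤ 2 * rseq d n then false else true)
  else false

variable {An Bn : ℕ → Set (Measure (Fin d → ℝ))} {H₀ H₁ : Set (Measure (Fin d → ℝ))}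

lemma phi_eventually_false
    (hBc : ∀ k, KSClosed (Bn k))
    (hAmono : ∀ k, An k ⊆ An (k + 1)) (hBmono : ∀ k, Bn k ⊆ Bn (k + 1))
    (hAH : (⋃ k, An k) = H₀) (hBH : (⋃ k, Bn k) = H₁)
    (hABdisj : ∀ k, An k ∩ Bn k = ∅)
    (hprob : ∀ q ∈ H₀ ∪ H₁, IsProbabilityMeasure q)
    {p : Measure (Fin d → ℝ)} [IsProbabilityMeasure p] (hp : p ∈ H₀)
    (ω : ℕ → (Fin d → ℝ))
    (hdev : ∀ᶠ n in Filter.atTop,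
      ∀ x, |Fhat n (fun i => ω i.val) x - cdf p x| ≤ rseq d n) :
    ∀ᶠ n in Filter.atTop, phi An Bn n (fun i => ω i.val) = false := by
  classical
  have hBmono' : Monotone Bn := monotone_nat_of_le_succ hBmono
  obtain ⟨k₀, hk₀⟩ : ∃ k, p ∈ An k := by
    rw [← hAH] at hp; exact Set.mem_iUnion.1 hp
  have hpB : p ∉ Bn k₀ := fun hB =>
    Set.eq_empty_iff_forall_notMem.1 (hABdisj k₀) p ⟨hk₀, hB⟩
  have hsep : ∃ ε : ℝ, 0 < ε ∧ ∀ q ∈ Bn k₀, ε ≤ ksDist p q := by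
    by_contra hcon
    push_neg at hcon
    exact hpB (hBc k₀ p ‹_› (fun ε hε => by
      obtain ⟨q, hq1, hq2⟩ := hcon ε hε
      exact ⟨q, hq1, hq2⟩))
  obtain ⟨ε, hε0, hεB⟩ := hsep
  have hrs := (rseq_tendsto d).eventually (eventually_lt_nhds (by positivity : (0:ℝ) < ε/5))
  filter_upwards [hdev, hrs] with n hdevn hrsn
  set s : Fin n → (Fin d → ℝ) := fun i => ω i.val with hs
  set r : ℝ := rseq d n with hr
  have hr0 : 0 ≤ r := rseq_nonneg d n
  have hDp : DD n s p ≤ r := DD_le n s p hdevn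
  have hex : ∃ k, (∃ q ∈ An k, DD n s q ≤ 2 * r) ∨ (∃ q ∈ Bn k, DD n s q ≤ 2 * r) :=
    ⟨k₀, Or.inl ⟨p, hk₀, by linarith⟩⟩
  have hnotB : ∀ k ≤ k₀, ∀ q ∈ Bn k, ¬(DD n s q ≤ 2 * r) := by
    intro k hk q hq hDq
    have hqB : q ∈ Bn k₀ := hBmono' hk hq
    haveI : IsProbabilityMeasure q := hprob q (Or.inr (by rw [← hBH]; exact Set.mem_iUnion.2 ⟨k₀, hqB⟩))
    have h1 : ε ≤ ksDist p q := hεB q hqB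
    have h2 : ksDist p q ≤ DD n s p + DD n s q := ksDist_le_DD_add_DD n s p q
    linarith
  have hfind : Nat.find hex ≤ k₀ := Nat.find_le (Or.inl ⟨p, hk₀, by linarith⟩)
  have hspec := Nat.find_spec hex
  have hA : ∃ q ∈ An (Nat.find hex), DD n s q ≤ 2 * r := by
    rcases hspec with h | h
    · exact h
    · obtain ⟨q, hq1, hq2⟩ := h
      exact absurd hq2 (hnotB _ hfind q hq1)
  show phi An Bn n s = false
  unfold phi
  rw [dif_pos hex, if_pos hA]

lemma phi_eventually_true
    (hAc : ∀ k, KSClosed (An k))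
    (hAmono : ∀ k, An k ⊆ An (k + 1)) (hBmono : ∀ k, Bn k ⊆ Bn (k + 1))
    (hAH : (⋃ k, An k) = H₀) (hBH : (⋃ k, Bn k) = H₁)
    (hABdisj : ∀ k, An k ∩ Bn k = ∅)
    (hprob : ∀ q ∈ H₀ ∪ H₁, IsProbabilityMeasure q)
    {p : Measure (Fin d → ℝ)} [IsProbabilityMeasure p] (hp : p ∈ H₁)
    (ω : ℕ → (Fin d → ℝ))
    (hdev : ∀ᶠ n in Filter.atTop,
      ∀ x, |Fhat n (fun i => ω i.val) x - cdf p x| ≤ rseq d n) :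
    ∀ᶠ n in Filter.atTop, phi An Bn n (fun i => ω i.val) = true := by
  classical
  have hAmono' : Monotone An := monotone_nat_of_le_succ hAmono
  obtain ⟨k₁, hk₁⟩ : ∃ k, p ∈ Bn k := by
    rw [← hBH] at hp; exact Set.mem_iUnion.1 hp
  have hpA : p ∉ An k₁ := fun hA =>
    Set.eq_empty_iff_forall_notMem.1 (hABdisj k₁) p ⟨hA, hk₁⟩
  have hsep : ∃ ε : ℝ, 0 < ε ∧ ∀ q ∈ An k₁, ε ≤ ksDist p q := by
    by_contra hcon
    push_neg at hcon
    exact hpA (hAc k₁ p ‹_› (fun ε hε => by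
      obtain ⟨q, hq1, hq2⟩ := hcon ε hε
      exact ⟨q, hq1, hq2⟩))
  obtain ⟨ε, hε0, hεA⟩ := hsep
  have hrs := (rseq_tendsto d).eventually (eventually_lt_nhds (by positivity : (0:ℝ) < ε/5))
  filter_upwards [hdev, hrs] with n hdevn hrsn
  set s : Fin n → (Fin d → ℝ) := fun i => ω i.val with hs
  set r : ℝ := rseq d n with hr
  have hr0 : 0 ≤ r := rseq_nonneg d n
  have hDp : DD n s p ≤ r := DD_le n s p hdevn
  have hex : ∃ k, (∃ q ∈ An k, DD n s q ≤ 2 * r) ∨ (∃ q ∈ Bn k, DD n s q ≤ 2 * r) :=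
    ⟨k₁, Or.inr ⟨p, hk₁, by linarith⟩⟩
  have hnotA : ∀ k ≤ k₁, ∀ q ∈ An k, ¬(DD n s q ≤ 2 * r) := by
    intro k hk q hq hDq
    have hqA : q ∈ An k₁ := hAmono' hk hq
    haveI : IsProbabilityMeasure q := hprob q (Or.inl (by rw [← hAH]; exact Set.mem_iUnion.2 ⟨k₁, hqA⟩))
    have h1 : ε ≤ ksDist p q := hεA q hqA
    have h2 : ksDist p q ≤ DD n s p + DD n s q := ksDist_le_DD_add_DD n s p q
    linarith
  have hfind : Nat.find hex ≤ k₁ := Nat.find_le (Or.inr ⟨p, hk₁, by linarith⟩)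
  have hnA : ¬ ∃ q ∈ An (Nat.find hex), DD n s q ≤ 2 * r := by
    rintro ⟨q, hq1, hq2⟩
    exact hnotA _ hfind q hq1 hq2
  show phi An Bn n s = true
  unfold phi
  rw [dif_pos hex, if_neg hnA]

end Algo

/-- The classification error: the Bool-valued predictor `Φ` (with `false` standing for `H₀` and
`true` for `H₁`), fed the first `n` samples of `ω`, disagrees with the index of the hypothesis
class containing `p`. -/
def ClsErrAt {d : ℕ} (H₀ : Set (Measure (Fin d → ℝ))) (p : Measure (Fin d → ℝ))
    (Φ : (n : ℕ) → (Fin n → (Fin d → ℝ)) → Bool) (ω : ℕ → (Fin d → ℝ)) (n : ℕ) : Prop :=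
  (Φ n (fun i => ω i.val) = true) ↔ p ∈ H₀

/-- If `H₀` and `H₁` are disjoint collections of probability distributions on
`ℝ^d` that are `F_σ`-separable under the KS-distance, then under i.i.d. sampling and the
classification loss, `H₀ ∪ H₁` is e.a.s.-predictable. -/
theorem classification_eas_of_fSigmaSeparable {d : ℕ}
    (Proc : Measure (Fin d → ℝ) → Measure (ℕ → (Fin d → ℝ)))
    (hProc : ∀ p : Measure (Fin d → ℝ), IsProbabilityMeasure p → IsIidLaw p (Proc p))
    (H₀ H₁ : Set (Measure (Fin d → ℝ)))
    (hprob : ∀ p ∈ H₀ ∪ H₁, IsProbabilityMeasure p)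
    (hdisj : H₀ ∩ H₁ = ∅)
    (hsep : ∃ An Bn : ℕ → Set (Measure (Fin d → ℝ)),
      (∀ n, KSClosed (An n)) ∧ (∀ n, KSClosed (Bn n)) ∧
      (∀ n, An n ⊆ An (n + 1)) ∧ (∀ n, Bn n ⊆ Bn (n + 1)) ∧
      (⋃ n, An n) = H₀ ∧ (⋃ n, Bn n) = H₁ ∧ ∀ n, An n ∩ Bn n = ∅) :
    ∃ Φ : (n : ℕ) → (Fin n → (Fin d → ℝ)) → Bool,
      ∀ p ∈ H₀ ∪ H₁, Proc p {ω | {n | ClsErrAt H₀ p Φ ω n}.Finite} = 1 := by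
  classical
  obtain ⟨An, Bn, hAc, hBc, hAmono, hBmono, hAH, hBH, hABdisj⟩ := hsep
  refine ⟨phi An Bn, ?_⟩
  intro p hp
  haveI hpprob : IsProbabilityMeasure p := hprob p hp
  have hPmap : ∀ N : ℕ, (Proc p).map (projN N) = Measure.pi (fun _ : Fin N => p) :=
    hProc p hpprob
  haveI hPprob : IsProbabilityMeasure (Proc p) := P_isProb hPmap
  have hdev := uniform_dev_ae hPmap
  have herr : ∀ᵐ ω ∂(Proc p), {n | ClsErrAt H₀ p (phi An Bn) ω n}.Finite := by
    filter_upwards [hdev] with ω hω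
    rcases hp with hp0 | hp1
    · have hft := phi_eventually_false hBc hAmono hBmono hAH hBH hABdisj hprob hp0 ω hω
      rw [Filter.eventually_atTop] at hft
      obtain ⟨N, hN⟩ := hft
      apply Set.Finite.subset (Set.finite_Iio N)
      intro n hn
      rw [Set.mem_setOf_eq, ClsErrAt] at hn
      by_contra hlt
      simp only [Set.mem_Iio, not_lt] at hlt
      rw [hN n hlt] at hn
      exact absurd (hn.2 hp0) (by simp)
    · have hft := phi_eventually_true hAc hAmono hBmono hAH hBH hABdisj hprob hp1 ω hω
      rw [Filter.eventually_atTop] at hft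
      obtain ⟨N, hN⟩ := hft
      apply Set.Finite.subset (Set.finite_Iio N)
      intro n hn
      rw [Set.mem_setOf_eq, ClsErrAt] at hn
      by_contra hlt
      simp only [Set.mem_Iio, not_lt] at hlt
      rw [hN n hlt] at hn
      have hpH0 : p ∈ H₀ := hn.1 rfl
      exact Set.eq_empty_iff_forall_notMem.1 hdisj p ⟨hpH0, hp1⟩
  have h0 : Proc p {ω | ¬ ({n | ClsErrAt H₀ p (phi An Bn) ω n}.Finite)} = 0 :=
    (MeasureTheory.ae_iff).1 herr
  apply le_antisymm prob_le_one
  have hsubset : (Set.univ : Set (ℕ → (Fin d → ℝ)))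
      ⊆ {ω | {n | ClsErrAt H₀ p (phi An Bn) ω n}.Finite}
        ∪ {ω | ¬ ({n | ClsErrAt H₀ p (phi An Bn) ω n}.Finite)} := by
    intro ω _
    by_cases h : {n | ClsErrAt H₀ p (phi An Bn) ω n}.Finite
    · exact Or.inl h
    · exact Or.inr h
  calc (1:ℝ≥0∞) = Proc p Set.univ := measure_univ.symm
    _ ≤ Proc p {ω | {n | ClsErrAt H₀ p (phi An Bn) ω n}.Finite}
        + Proc p {ω | ¬ ({n | ClsErrAt H₀ p (phi An Bn) ω n}.Finite)} :=
      le_trans (measure_mono hsubset) (measure_union_le _ _)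
    _ = Proc p {ω | {n | ClsErrAt H₀ p (phi An Bn) ω n}.Finite} := by rw [h0, add_zero]


end Stmt15
end

section
/- Let X_1, …, X_n be i.i.d. real random variables with E[X_1] = u and E[|X_1|^p] = M < ∞ for some p > 1, and let X̄ = (X_1 + ⋯ + X_n)/n. Then for every ε > 0 there is a constant C (depending only on ε, M and p) such that Pr(|X̄ − u| ≥ ε) ≤ C / n^{p−1}. -/
open MeasureTheory ProbabilityTheory Real

namespace Stmt17

/-- pointwise key inequality: for `1 < q ≤ 2`, `0 ≤ b`, `x ≤ b`,
`exp x ≤ 1 + x + |x|^q * (exp b + 2)`. -/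
lemma exp_le_aux {q b x : ℝ} (hq1 : 1 < q) (hq2 : q ≤ 2) (hb : 0 ≤ b) (hx : x ≤ b) :
    Real.exp x ≤ 1 + x + |x| ^ q * (Real.exp b + 2) := by
  have hexpb : (1:ℝ) ≤ Real.exp b := Real.one_le_exp hb
  rcases le_or_gt |x| 1 with h1 | h1
  · rcases eq_or_ne x 0 with rfl | hx0
    · simp only [abs_zero]
      have : (0:ℝ) ≤ (0:ℝ) ^ q * (Real.exp b + 2) := by positivity
      simpa using this
    have hax : 0 < |x| := abs_pos.mpr hx0
    have hbound := Real.exp_bound h1 (n := 2) (by norm_num)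
    have hsum : ∑ m ∈ Finset.range 2, x ^ m / m.factorial = 1 + x := by
      simp [Finset.sum_range_succ]
    rw [hsum] at hbound
    have h2 : Real.exp x - (1 + x) ≤ |x| ^ (2:ℕ) * ((2:ℕ).succ / ((2:ℕ).factorial * 2)) :=
      (le_abs_self _).trans hbound
    have h3 : |x| ^ (2:ℕ) * ((2:ℕ).succ / ((2:ℕ).factorial * 2)) ≤ |x| ^ q * (Real.exp b + 2) := by
      have hpow : |x| ^ (2:ℕ) ≤ |x| ^ q := by
        rw [← Real.rpow_natCast |x| 2]
        exact Real.rpow_le_rpow_of_exponent_ge hax h1 (by exact_mod_cast hq2)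
      have hc : ((2:ℕ).succ / ((2:ℕ).factorial * 2) : ℝ) ≤ Real.exp b + 2 := by
        norm_num
        linarith
      have h0 : (0:ℝ) ≤ |x| ^ (2:ℕ) := by positivity
      calc |x| ^ (2:ℕ) * ((2:ℕ).succ / ((2:ℕ).factorial * 2) : ℝ)
          ≤ |x| ^ (2:ℕ) * (Real.exp b + 2) := by
            apply mul_le_mul_of_nonneg_left hc h0
        _ ≤ |x| ^ q * (Real.exp b + 2) := by
            apply mul_le_mul_of_nonneg_right hpow (by linarith)
    linarith
  · have hxq1 : (1:ℝ) ≤ |x| ^ q := Real.one_le_rpow h1.le (by linarith)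
    have hxq : |x| ≤ |x| ^ q := by
      calc |x| = |x| ^ (1:ℝ) := (Real.rpow_one _).symm
        _ ≤ |x| ^ q := Real.rpow_le_rpow_of_exponent_le h1.le hq1.le
    rcases le_or_gt 0 x with hx0 | hx0
    · have : Real.exp x ≤ Real.exp b := Real.exp_le_exp.mpr hx
      have h4 : Real.exp b ≤ |x| ^ q * Real.exp b := by
        nlinarith [Real.exp_pos b]
      nlinarith
    · have : Real.exp x ≤ 1 := Real.exp_le_one_iff.mpr hx0.le
      have habs : |x| = -x := abs_of_neg hx0
      nlinarith


lemma rpow_le_one_add_rpow {a t s : ℝ} (ha : 0 ≤ a) (ht : 0 ≤ t) (hts : t ≤ s) :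
    a ^ t ≤ 1 + a ^ s := by
  rcases le_or_gt a 1 with h | h
  · have h1 : a ^ t ≤ 1 := Real.rpow_le_one ha h ht
    have h2 : 0 ≤ a ^ s := Real.rpow_nonneg ha s
    linarith
  · have h1 : a ^ t ≤ a ^ s := Real.rpow_le_rpow_of_exponent_le h.le hts
    linarith

lemma onesided (p : ℝ) (hp : 1 < p) (K : ℝ) (hK : 0 ≤ K) (ε : ℝ) (hε : 0 < ε) :
    ∃ C : ℝ, 0 ≤ C ∧
      ∀ (Ω : Type) [MeasurableSpace Ω] (μ : Measure Ω) [IsProbabilityMeasure μ]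
        (n : ℕ) (Y : Fin n → Ω → ℝ),
        0 < n →
        (∀ i, Measurable (Y i)) →
        iIndepFun Y μ →
        (∀ i, MemLp (Y i) (ENNReal.ofReal p) μ) →
        (∀ i, ∫ ω, |Y i ω| ^ p ∂μ ≤ K) →
        (∀ i, ∫ ω, Y i ω ∂μ = 0) →
        μ {ω | ε * n ≤ ∑ i, Y i ω} ≤ ENNReal.ofReal (C / (n : ℝ) ^ (p - 1)) := by
  have hp0 : (0:ℝ) < p := by linarith
  set q := min p 2 with hq
  have hq1 : 1 < q := lt_min hp one_lt_two
  have hq2 : q ≤ 2 := min_le_right _ _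
  have hqp : q ≤ p := min_le_left _ _
  have hq0 : (0:ℝ) < q := by linarith
  set δ := (q - 1) / 2 with hδ
  have hδ0 : 0 < δ := by rw [hδ]; linarith
  set s₀ := δ / (2 * q) with hs₀
  have hs₀0 : 0 < s₀ := by rw [hs₀]; positivity
  set A := 2 * (p - 1) / ε with hA
  have hA0 : 0 < A := by rw [hA]; exact div_pos (by linarith) hε
  set β := 2 * (p - 1) / (q - 1) with hβ
  have hβ0 : 0 < β := by rw [hβ]; exact div_pos (by linarith) (by linarith)
  set K' := K + 1 with hK'
  have hK'0 : 0 < K' := by rw [hK']; linarith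
  set D := 3 * K' * A ^ q / s₀ ^ q with hD
  have hD0 : 0 ≤ D := by rw [hD]; positivity
  refine ⟨K * (2 * β / ε) ^ p + Real.exp D, by positivity, ?_⟩
  intro Ω _ μ _ n Y hn hmeas hindep hmem hmom hmean
  have hNpos : (0:ℝ) < (n:ℝ) := by exact_mod_cast hn
  have hN1 : (1:ℝ) ≤ (n:ℝ) := by exact_mod_cast hn
  set N := (n:ℝ) with hNdef
  have hlog : 0 ≤ Real.log N := Real.log_nonneg hN1
  set y := ε * N / (2 * β) with hy
  have hy0 : 0 < y := by rw [hy]; positivity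
  set lam := 2 * (p - 1) * Real.log N / (ε * N) with hlam
  have hlam0 : 0 ≤ lam := by
    rw [hlam]
    exact div_nonneg (mul_nonneg (by linarith) hlog) (by positivity)
  set Z := fun (i : Fin n) => fun ω => min (Y i ω) y with hZdef
  have hZmeas : ∀ i, Measurable (Z i) := fun i => (hmeas i).min measurable_const
  have hZle : ∀ i ω, Z i ω ≤ y := fun i ω => min_le_right _ _
  have hZleY : ∀ i ω, Z i ω ≤ Y i ω := fun i ω => min_le_left _ _
  have hZabs : ∀ i ω, |Z i ω| ≤ |Y i ω| := by
    intro i ω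
    rw [abs_le]
    refine ⟨le_min (neg_abs_le _) ((neg_nonpos.mpr (abs_nonneg _)).trans hy0.le), ?_⟩
    exact (hZleY i ω).trans (le_abs_self _)
  have hZindep : iIndepFun Z μ :=
    hindep.comp (fun _ => fun x => min x y) (fun _ => measurable_id.min measurable_const)
  -- integrability
  have hYint : ∀ i, Integrable (Y i) μ := by
    intro i
    refine (hmem i).integrable ?_
    rw [← ENNReal.ofReal_one]
    exact ENNReal.ofReal_le_ofReal hp.le
  have hYp_int : ∀ i, Integrable (fun ω => |Y i ω| ^ p) μ := by
    intro i
    have h := (hmem i).integrable_norm_rpow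
      (by simp [ENNReal.ofReal_eq_zero]; linarith) ENNReal.ofReal_ne_top
    simpa [Real.norm_eq_abs, ENNReal.toReal_ofReal hp0.le] using h
  have hZint : ∀ i, Integrable (Z i) μ := by
    intro i
    refine Integrable.mono' (hYint i).abs (hZmeas i).aestronglyMeasurable ?_
    exact Filter.Eventually.of_forall fun ω => by
      rw [Real.norm_eq_abs]; exact hZabs i ω
  have hZq_int : ∀ i, Integrable (fun ω => |Z i ω| ^ q) μ := by
    intro i
    refine Integrable.mono' ((integrable_const 1).add (hYp_int i))
      (((Real.continuous_rpow_const hq0.le).measurable.comp ((hZmeas i).abs)).aestronglyMeasurable) ?_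
    refine Filter.Eventually.of_forall fun ω => ?_
    rw [Real.norm_eq_abs, abs_of_nonneg (Real.rpow_nonneg (abs_nonneg _) _)]
    calc |Z i ω| ^ q ≤ |Y i ω| ^ q :=
          Real.rpow_le_rpow (abs_nonneg _) (hZabs i ω) hq0.le
      _ ≤ 1 + |Y i ω| ^ p := rpow_le_one_add_rpow (abs_nonneg _) hq0.le hqp
  have hZq_le : ∀ i, ∫ ω, |Z i ω| ^ q ∂μ ≤ K' := by
    intro i
    calc ∫ ω, |Z i ω| ^ q ∂μ ≤ ∫ ω, (1 + |Y i ω| ^ p) ∂μ := by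
          refine integral_mono (hZq_int i) ((integrable_const 1).add (hYp_int i)) fun ω => ?_
          calc |Z i ω| ^ q ≤ |Y i ω| ^ q :=
                Real.rpow_le_rpow (abs_nonneg _) (hZabs i ω) hq0.le
            _ ≤ 1 + |Y i ω| ^ p := rpow_le_one_add_rpow (abs_nonneg _) hq0.le hqp
      _ = 1 + ∫ ω, |Y i ω| ^ p ∂μ := by
          rw [integral_add (integrable_const 1) (hYp_int i), integral_const]
          simp
      _ ≤ 1 + K := by linarith [hmom i]
      _ = K' := by rw [hK']; ring
  have hZmean : ∀ i, ∫ ω, Z i ω ∂μ ≤ 0 := by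
    intro i
    calc ∫ ω, Z i ω ∂μ ≤ ∫ ω, Y i ω ∂μ :=
          integral_mono (hZint i) (hYint i) (hZleY i)
      _ = 0 := hmean i
  -- Markov tail bound
  have htail : ∀ i, μ {ω | y < Y i ω} ≤ ENNReal.ofReal (K / y ^ p) := by
    intro i
    have hyp0 : (0:ℝ) < y ^ p := by positivity
    have hsub : {ω | y < Y i ω} ⊆ {ω | y ^ p ≤ |Y i ω| ^ p} := by
      intro ω hω
      exact Real.rpow_le_rpow hy0.le ((le_of_lt hω).trans (le_abs_self _)) hp0.le
    have hmark := mul_meas_ge_le_integral_of_nonneg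
      (μ := μ) (f := fun ω => |Y i ω| ^ p)
      (Filter.Eventually.of_forall fun ω => Real.rpow_nonneg (abs_nonneg _) p)
      (hYp_int i) (y ^ p)
    have hmono : (μ {ω | y < Y i ω}).toReal ≤ (μ {x | y ^ p ≤ |Y i x| ^ p}).toReal :=
      ENNReal.toReal_mono (measure_ne_top _ _) (measure_mono hsub)
    have h1 : (μ {ω | y < Y i ω}).toReal ≤ K / y ^ p := by
      rw [le_div_iff₀ hyp0]
      calc (μ {ω | y < Y i ω}).toReal * y ^ p
          ≤ (μ {x | y ^ p ≤ |Y i x| ^ p}).toReal * y ^ p := by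
            exact mul_le_mul_of_nonneg_right hmono hyp0.le
        _ ≤ ∫ ω, |Y i ω| ^ p ∂μ := by rw [mul_comm]; exact hmark
        _ ≤ K := hmom i
    exact (ENNReal.le_ofReal_iff_toReal_le (measure_ne_top _ _) (by positivity)).mpr h1
  -- mgf bounds
  have hby : 0 ≤ lam * y := by positivity
  have hexp_int : ∀ i, Integrable (fun ω => Real.exp (lam * Z i ω)) μ := by
    intro i
    refine Integrable.mono' (integrable_const (Real.exp (lam * y)))
      (((hZmeas i).const_mul lam).exp.aestronglyMeasurable) ?_
    refine Filter.Eventually.of_forall fun ω => ?_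
    rw [Real.norm_eq_abs, Real.abs_exp]
    exact Real.exp_le_exp.mpr (mul_le_mul_of_nonneg_left (hZle i ω) hlam0)
  set c := lam ^ q * (Real.exp (lam * y) + 2) with hc
  have hc0 : 0 ≤ c := by
    rw [hc]
    have := Real.exp_pos (lam * y)
    have := Real.rpow_nonneg hlam0 q
    positivity
  have hmgf_le : ∀ i, mgf (Z i) μ lam ≤ Real.exp (c * K') := by
    intro i
    have hpt : ∀ ω, Real.exp (lam * Z i ω) ≤ 1 + lam * Z i ω + c * |Z i ω| ^ q := by
      intro ω
      have h := exp_le_aux hq1 hq2 hby (mul_le_mul_of_nonneg_left (hZle i ω) hlam0)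
      rw [abs_mul, abs_of_nonneg hlam0, Real.mul_rpow hlam0 (abs_nonneg _)] at h
      have heq : lam ^ q * |Z i ω| ^ q * (Real.exp (lam * y) + 2) = c * |Z i ω| ^ q := by
        rw [hc]; ring
      linarith [h, heq.le]
    have hf1 : Integrable (fun ω => lam * Z i ω) μ := (hZint i).const_mul lam
    have hf2 : Integrable (fun ω => c * |Z i ω| ^ q) μ := (hZq_int i).const_mul c
    have hf3 : Integrable (fun ω => 1 + lam * Z i ω) μ := (integrable_const 1).add hf1
    have hint_rhs : Integrable (fun ω => 1 + lam * Z i ω + c * |Z i ω| ^ q) μ := hf3.add hf2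
    have hI : mgf (Z i) μ lam ≤ ∫ ω, (1 + lam * Z i ω + c * |Z i ω| ^ q) ∂μ :=
      integral_mono (hexp_int i) hint_rhs hpt
    have h2 : ∫ ω, (1 + lam * Z i ω + c * |Z i ω| ^ q) ∂μ
        = 1 + lam * (∫ ω, Z i ω ∂μ) + c * (∫ ω, |Z i ω| ^ q ∂μ) := by
      rw [integral_add hf3 hf2, integral_add (integrable_const 1) hf1,
        integral_const, integral_const_mul, integral_const_mul]
      simp
    have h3 : lam * (∫ ω, Z i ω ∂μ) ≤ 0 := mul_nonpos_of_nonneg_of_nonpos hlam0 (hZmean i)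
    have h4 : c * (∫ ω, |Z i ω| ^ q ∂μ) ≤ c * K' := mul_le_mul_of_nonneg_left (hZq_le i) hc0
    have h5 : c * K' + 1 ≤ Real.exp (c * K') := Real.add_one_le_exp _
    calc mgf (Z i) μ lam ≤ 1 + lam * (∫ ω, Z i ω ∂μ) + c * (∫ ω, |Z i ω| ^ q ∂μ) := by
          rw [← h2]; exact hI
      _ ≤ 1 + 0 + c * K' := by linarith
      _ ≤ Real.exp (c * K') := by linarith
  -- Chernoff
  set S := ∑ i, Z i with hS
  have hSint : Integrable (fun ω => Real.exp (lam * S ω)) μ :=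
    hZindep.integrable_exp_mul_sum hZmeas (fun i _ => hexp_int i)
  have hchern := measure_ge_le_exp_mul_mgf (μ := μ) (X := S) (ε * N) hlam0 hSint
  have hprod : mgf S μ lam = ∏ i, mgf (Z i) μ lam := hZindep.mgf_sum hZmeas Finset.univ
  have hprod_le : mgf S μ lam ≤ Real.exp (N * (c * K')) := by
    rw [hprod]
    calc ∏ i, mgf (Z i) μ lam ≤ ∏ _i : Fin n, Real.exp (c * K') :=
          Finset.prod_le_prod (fun i _ => mgf_nonneg) (fun i _ => hmgf_le i)
      _ = Real.exp (c * K') ^ n := by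
          rw [Finset.prod_const, Finset.card_univ, Fintype.card_fin]
      _ = Real.exp (n * (c * K')) := by rw [← Real.exp_nat_mul]
  -- exponent computations
  have hq1' : q - 1 ≠ 0 := by linarith
  have hp1' : p - 1 ≠ 0 := by linarith
  have hlamy : lam * y = δ * Real.log N := by
    rw [hlam, hy, hβ, hδ]
    field_simp
  have hexp_lamy : Real.exp (lam * y) = N ^ δ := by
    rw [hlamy, Real.rpow_def_of_pos hNpos, mul_comm]
  have hmid : N * (c * K') ≤ D := by
    have hlam_eq : lam = A * (Real.log N / N) := by
      rw [hlam, hA]; field_simp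
    have hlamq : lam ^ q = A ^ q * (Real.log N / N) ^ q := by
      rw [hlam_eq, Real.mul_rpow hA0.le (by positivity)]
    have hdivq : (Real.log N / N) ^ q = Real.log N ^ q / N ^ q :=
      Real.div_rpow hlog hNpos.le q
    have e1 : Real.log N ^ q ≤ N ^ (δ / 2) / s₀ ^ q := by
      have h1 : Real.log N ≤ N ^ s₀ / s₀ := Real.log_le_rpow_div hNpos.le hs₀0
      have h2 : Real.log N ^ q ≤ (N ^ s₀ / s₀) ^ q := Real.rpow_le_rpow hlog h1 hq0.le
      have h3 : (N ^ s₀ / s₀ : ℝ) ^ q = N ^ (s₀ * q) / s₀ ^ q := by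
        rw [Real.div_rpow (Real.rpow_nonneg hNpos.le _) hs₀0.le, ← Real.rpow_mul hNpos.le]
      have h4 : s₀ * q = δ / 2 := by
        rw [hs₀]; field_simp
      rwa [h3, h4] at h2
    have e2 : Real.exp (lam * y) + 2 ≤ 3 * N ^ δ := by
      have := Real.one_le_rpow hN1 hδ0.le
      rw [hexp_lamy]; linarith
    have hAq : (0:ℝ) ≤ A ^ q := Real.rpow_nonneg hA0.le _
    have hNq : (0:ℝ) < N ^ q := Real.rpow_pos_of_pos hNpos _
    calc N * (c * K')
        = N * (A ^ q * (Real.log N ^ q / N ^ q) * (Real.exp (lam * y) + 2) * K') := by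
          rw [hc, hlamq, hdivq]
      _ ≤ N * (A ^ q * ((N ^ (δ / 2) / s₀ ^ q) / N ^ q) * (3 * N ^ δ) * K') := by
          have hexp2 : (0:ℝ) ≤ Real.exp (lam * y) + 2 := by positivity
          gcongr
      _ = 3 * K' * A ^ q / s₀ ^ q * (N * N ^ (δ / 2) * N ^ δ / N ^ q) := by ring
      _ = D * N ^ (1 + δ / 2 + δ - q) := by
          rw [hD]; congr 1
          rw [Real.rpow_sub hNpos, Real.rpow_add hNpos, Real.rpow_add hNpos, Real.rpow_one]
      _ ≤ D * 1 := by
          refine mul_le_mul_of_nonneg_left ?_ hD0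
          refine Real.rpow_le_one_of_one_le_of_nonpos hN1 ?_
          rw [hδ]; linarith
      _ = D := mul_one D
  have hlamεN : lam * (ε * N) = 2 * (p - 1) * Real.log N := by
    rw [hlam]; field_simp
  have hchern2 : (μ {ω | ε * N ≤ S ω}).toReal ≤ Real.exp D / N ^ (p - 1) := by
    have step1 : (μ {ω | ε * N ≤ S ω}).toReal
        ≤ Real.exp (-lam * (ε * N)) * Real.exp (N * (c * K')) :=
      hchern.trans (mul_le_mul_of_nonneg_left hprod_le (Real.exp_pos _).le)
    have step2 : Real.exp (-lam * (ε * N)) * Real.exp (N * (c * K'))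
        ≤ Real.exp (-(2 * (p - 1) * Real.log N) + D) := by
      rw [← Real.exp_add]
      apply Real.exp_le_exp.mpr
      have : -lam * (ε * N) = -(2 * (p - 1) * Real.log N) := by rw [← hlamεN]; ring
      linarith [hmid, this.le, this.ge]
    have step3 : Real.exp (-(2 * (p - 1) * Real.log N) + D)
        = N ^ (-(2 * (p - 1))) * Real.exp D := by
      rw [Real.exp_add]; congr 1
      rw [Real.rpow_def_of_pos hNpos]; ring_nf
    have step4 : N ^ (-(2 * (p - 1))) ≤ N ^ (-(p - 1)) :=
      Real.rpow_le_rpow_of_exponent_le hN1 (by linarith)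
    have step5 : N ^ (-(p - 1)) * Real.exp D = Real.exp D / N ^ (p - 1) := by
      rw [Real.rpow_neg hNpos.le]; ring
    calc (μ {ω | ε * N ≤ S ω}).toReal
        ≤ Real.exp (-lam * (ε * N)) * Real.exp (N * (c * K')) := step1
      _ ≤ Real.exp (-(2 * (p - 1) * Real.log N) + D) := step2
      _ = N ^ (-(2 * (p - 1))) * Real.exp D := step3
      _ ≤ N ^ (-(p - 1)) * Real.exp D :=
          mul_le_mul_of_nonneg_right step4 (Real.exp_pos _).le
      _ = Real.exp D / N ^ (p - 1) := step5
  have hNp1 : (0:ℝ) < N ^ (p - 1) := Real.rpow_pos_of_pos hNpos _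
  have hchernE : μ {ω | ε * N ≤ S ω} ≤ ENNReal.ofReal (Real.exp D / N ^ (p - 1)) :=
    (ENNReal.le_ofReal_iff_toReal_le (measure_ne_top _ _) (by positivity)).mpr hchern2
  -- event inclusion
  have hsub : {ω | ε * N ≤ ∑ i, Y i ω}
      ⊆ (⋃ i, {ω | y < Y i ω}) ∪ {ω | ε * N ≤ S ω} := by
    intro ω hω
    by_cases hall : ∀ i, Y i ω ≤ y
    · right
      have hSω : S ω = ∑ i, Y i ω := by
        calc S ω = ∑ i, Z i ω := Finset.sum_apply _ _ _
          _ = ∑ i, Y i ω := Finset.sum_congr rfl fun i _ => min_eq_left (hall i)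
      simp only [Set.mem_setOf_eq] at hω ⊢
      rw [hSω]
      exact hω
    · left
      push_neg at hall
      obtain ⟨i, hi⟩ := hall
      exact Set.mem_iUnion.mpr ⟨i, hi⟩
  have htail_tot : μ (⋃ i, {ω | y < Y i ω}) ≤ ENNReal.ofReal (N * (K / y ^ p)) := by
    calc μ (⋃ i, {ω | y < Y i ω}) ≤ ∑ i, μ {ω | y < Y i ω} :=
          measure_iUnion_fintype_le _ _
      _ ≤ ∑ _ : Fin n, ENNReal.ofReal (K / y ^ p) :=
          Finset.sum_le_sum fun i _ => htail i
      _ = (n : ENNReal) * ENNReal.ofReal (K / y ^ p) := by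
          rw [Finset.sum_const, Finset.card_univ, Fintype.card_fin, nsmul_eq_mul]
      _ = ENNReal.ofReal (N * (K / y ^ p)) := by
          rw [← ENNReal.ofReal_natCast n, ← ENNReal.ofReal_mul (Nat.cast_nonneg n)]
  have hyeq : N * (K / y ^ p) = K * (2 * β / ε) ^ p / N ^ (p - 1) := by
    have hy2 : y = ε / (2 * β) * N := by rw [hy]; ring
    have hb0 : (0:ℝ) < ε / (2 * β) := by positivity
    have hbp : (0:ℝ) < (ε / (2 * β)) ^ p := Real.rpow_pos_of_pos hb0 _
    have hNp : (0:ℝ) < N ^ p := Real.rpow_pos_of_pos hNpos _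
    rw [hy2, Real.mul_rpow hb0.le hNpos.le,
      show (2 * β / ε) = (ε / (2 * β))⁻¹ by rw [inv_div],
      Real.inv_rpow hb0.le, Real.rpow_sub hNpos, Real.rpow_one]
    field_simp
  calc μ {ω | ε * N ≤ ∑ i, Y i ω}
      ≤ μ ((⋃ i, {ω | y < Y i ω}) ∪ {ω | ε * N ≤ S ω}) := measure_mono hsub
    _ ≤ μ (⋃ i, {ω | y < Y i ω}) + μ {ω | ε * N ≤ S ω} := measure_union_le _ _
    _ ≤ ENNReal.ofReal (N * (K / y ^ p)) + ENNReal.ofReal (Real.exp D / N ^ (p - 1)) :=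
        add_le_add htail_tot hchernE
    _ = ENNReal.ofReal (N * (K / y ^ p) + Real.exp D / N ^ (p - 1)) :=
        (ENNReal.ofReal_add (by positivity) (by positivity)).symm
    _ = ENNReal.ofReal ((K * (2 * β / ε) ^ p + Real.exp D) / N ^ (p - 1)) := by
        rw [hyeq, ← add_div]


/-- If `X_1, …, X_n` are i.i.d. real random variables with mean `u` and finite
`p`-th absolute moment `M` (for some `p > 1`), then `Pr(|X̄ − u| ≥ ε) ≤ C / n^{p−1}`, where the
constant `C` depends only on `ε`, `M` and `p`. -/
theorem pth_moment_concentration (p : ℝ) (hp : 1 < p) (M : ℝ) (ε : ℝ) (hε : 0 < ε) :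
    ∃ C : ℝ,
      ∀ (Ω : Type) [MeasurableSpace Ω] (μ : Measure Ω) [IsProbabilityMeasure μ]
        (n : ℕ) (X : Fin n → Ω → ℝ) (u : ℝ),
        0 < n →
        (∀ i, Measurable (X i)) →
        iIndepFun X μ →
        (∀ i j, IdentDistrib (X i) (X j) μ μ) →
        (∀ i, MemLp (X i) (ENNReal.ofReal p) μ) →
        (∀ i, ∫ ω, |X i ω| ^ p ∂μ = M) →
        (∀ i, ∫ ω, X i ω ∂μ = u) →
        μ {ω | ε ≤ |(∑ i, X i ω) / (n : ℝ) - u|} ≤ ENNReal.ofReal (C / (n : ℝ) ^ (p - 1)) := by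
  have hp0 : (0:ℝ) < p := by linarith
  set M₀ := max M 0 with hM₀
  have hM₀0 : (0:ℝ) ≤ M₀ := le_max_right _ _
  set K := (2:ℝ) ^ p * (M₀ + (1 + M₀) ^ p) with hKdef
  have hK0 : 0 ≤ K := by positivity
  obtain ⟨C₁, hC₁0, hC₁⟩ := onesided p hp K hK0 ε hε
  refine ⟨2 * C₁, ?_⟩
  intro Ω _ μ _ n X u hn hmeas hindep _hident hmem hmom hmean
  have hNpos : (0:ℝ) < (n:ℝ) := by exact_mod_cast hn
  set i0 : Fin n := ⟨0, hn⟩ with hi0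
  have hXint : ∀ i, Integrable (X i) μ := by
    intro i
    refine (hmem i).integrable ?_
    rw [← ENNReal.ofReal_one]
    exact ENNReal.ofReal_le_ofReal hp.le
  have hXp_int : ∀ i, Integrable (fun ω => |X i ω| ^ p) μ := by
    intro i
    have h := (hmem i).integrable_norm_rpow
      (by simp [ENNReal.ofReal_eq_zero]; linarith) ENNReal.ofReal_ne_top
    simpa [Real.norm_eq_abs, ENNReal.toReal_ofReal hp0.le] using h
  have hM0 : 0 ≤ M := by
    rw [← hmom i0]
    exact integral_nonneg fun ω => Real.rpow_nonneg (abs_nonneg _) _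
  have hM₀M : M₀ = M := max_eq_left hM0
  -- bound on |u|
  have hu : |u| ≤ 1 + M₀ := by
    rw [← hmean i0]
    calc |∫ ω, X i0 ω ∂μ| ≤ ∫ ω, |X i0 ω| ∂μ := by
          simpa [Real.norm_eq_abs] using norm_integral_le_integral_norm (μ := μ) (X i0)
      _ ≤ ∫ ω, (1 + |X i0 ω| ^ p) ∂μ := by
          refine integral_mono (hXint i0).abs ((integrable_const 1).add (hXp_int i0)) fun ω => ?_
          have h := rpow_le_one_add_rpow (abs_nonneg (X i0 ω)) zero_le_one hp.le
          rwa [Real.rpow_one] at h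
      _ = 1 + ∫ ω, |X i0 ω| ^ p ∂μ := by
          rw [integral_add (integrable_const 1) (hXp_int i0), integral_const]
          simp
      _ = 1 + M₀ := by rw [hmom i0, hM₀M]
  -- centered variables
  have hu_pow : |u| ^ p ≤ (1 + M₀) ^ p :=
    Real.rpow_le_rpow (abs_nonneg _) hu hp0.le
  have hpt_mom : ∀ (i : Fin n) ω, |X i ω - u| ^ p ≤ 2 ^ p * (|X i ω| ^ p + (1 + M₀) ^ p) := by
    intro i ω
    set a := |X i ω|
    have ha : 0 ≤ a := abs_nonneg _
    have h1 : |X i ω - u| ≤ a + |u| := abs_sub _ _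
    have h2 : a + |u| ≤ 2 * max a |u| := by
      rcases le_total a |u| with h | h
      · rw [max_eq_right h]; linarith
      · rw [max_eq_left h]; linarith
    have h3 : |X i ω - u| ^ p ≤ (2 * max a |u|) ^ p :=
      Real.rpow_le_rpow (abs_nonneg _) (h1.trans h2) hp0.le
    have h4 : (2 * max a |u|) ^ p = 2 ^ p * (max a |u|) ^ p :=
      Real.mul_rpow (by norm_num) (le_max_of_le_left ha)
    have h5 : (max a |u|) ^ p ≤ a ^ p + (1 + M₀) ^ p := by
      rcases max_cases a |u| with ⟨hm, _⟩ | ⟨hm, _⟩ <;> rw [hm]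
      · have : (0:ℝ) ≤ (1 + M₀) ^ p := by positivity
        linarith
      · have : (0:ℝ) ≤ a ^ p := Real.rpow_nonneg ha _
        linarith [hu_pow]
    calc |X i ω - u| ^ p ≤ 2 ^ p * (max a |u|) ^ p := by rw [← h4]; exact h3
      _ ≤ 2 ^ p * (a ^ p + (1 + M₀) ^ p) := by
          have : (0:ℝ) ≤ (2:ℝ) ^ p := by positivity
          exact mul_le_mul_of_nonneg_left h5 this
  have hYmem : ∀ i, MemLp (fun ω => X i ω - u) (ENNReal.ofReal p) μ := by
    intro i
    exact (hmem i).sub (memLp_const u)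
  have hYp_int : ∀ i, Integrable (fun ω => |X i ω - u| ^ p) μ := by
    intro i
    have h := (hYmem i).integrable_norm_rpow
      (by simp [ENNReal.ofReal_eq_zero]; linarith) ENNReal.ofReal_ne_top
    simpa [Real.norm_eq_abs, ENNReal.toReal_ofReal hp0.le] using h
  have hmomY : ∀ i, ∫ ω, |X i ω - u| ^ p ∂μ ≤ K := by
    intro i
    calc ∫ ω, |X i ω - u| ^ p ∂μ
        ≤ ∫ ω, 2 ^ p * (|X i ω| ^ p + (1 + M₀) ^ p) ∂μ := by
          refine integral_mono (hYp_int i) ?_ (hpt_mom i)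
          exact (((hXp_int i).add (integrable_const _)).const_mul _)
      _ = 2 ^ p * ((∫ ω, |X i ω| ^ p ∂μ) + (1 + M₀) ^ p) := by
          rw [integral_const_mul, integral_add (hXp_int i) (integrable_const _), integral_const]
          simp
      _ = K := by rw [hmom i, hKdef, hM₀M]
  have hmeanY : ∀ i, ∫ ω, (X i ω - u) ∂μ = 0 := by
    intro i
    rw [integral_sub (hXint i) (integrable_const u), integral_const, hmean i]
    simp
  -- apply onesided to Y := X - u
  have hA := hC₁ Ω μ n (fun i => fun ω => X i ω - u) hn
    (fun i => (hmeas i).sub measurable_const)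
    (hindep.comp (fun _ => fun x => x - u) (fun _ => measurable_id.sub measurable_const))
    hYmem hmomY hmeanY
  -- apply onesided to Y' := u - X
  have hY'mem : ∀ i, MemLp (fun ω => u - X i ω) (ENNReal.ofReal p) μ := by
    intro i
    exact (memLp_const u).sub (hmem i)
  have habs' : ∀ (i : Fin n) ω, |u - X i ω| = |X i ω - u| := fun i ω => abs_sub_comm _ _
  have hB := hC₁ Ω μ n (fun i => fun ω => u - X i ω) hn
    (fun i => measurable_const.sub (hmeas i))
    (hindep.comp (fun _ => fun x => u - x) (fun _ => measurable_const.sub measurable_id))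
    hY'mem
    (fun i => by
      have : (fun ω => |u - X i ω| ^ p) = fun ω => |X i ω - u| ^ p := by
        funext ω; rw [habs' i ω]
      rw [this]; exact hmomY i)
    (fun i => by
      rw [integral_sub (integrable_const u) (hXint i), integral_const, hmean i]
      simp)
  -- event inclusion
  have hsub : {ω | ε ≤ |(∑ i, X i ω) / (n : ℝ) - u|}
      ⊆ {ω | ε * n ≤ ∑ i, (X i ω - u)} ∪ {ω | ε * n ≤ ∑ i, (u - X i ω)} := by
    intro ω hω
    simp only [Set.mem_setOf_eq] at hω
    have hsum : ∑ i, (X i ω - u) = (∑ i, X i ω) - n * u := by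
      rw [Finset.sum_sub_distrib, Finset.sum_const, Finset.card_univ, Fintype.card_fin,
        nsmul_eq_mul]
    have hsum' : ∑ i, (u - X i ω) = -((∑ i, X i ω) - n * u) := by
      rw [Finset.sum_sub_distrib, Finset.sum_const, Finset.card_univ, Fintype.card_fin,
        nsmul_eq_mul]
      ring
    have hdiv : (∑ i, X i ω) / (n : ℝ) - u = ((∑ i, X i ω) - n * u) / n := by
      field_simp
    have habs : ε * n ≤ |(∑ i, X i ω) - n * u| := by
      have h1 : |((∑ i, X i ω) - n * u) / (n:ℝ)| = |(∑ i, X i ω) - n * u| / n := by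
        rw [abs_div, abs_of_pos hNpos]
      rw [hdiv, h1, le_div_iff₀ hNpos] at hω
      linarith
    rcases le_or_gt 0 ((∑ i, X i ω) - n * u) with h | h
    · left
      simp only [Set.mem_setOf_eq]
      rw [hsum]
      rwa [abs_of_nonneg h] at habs
    · right
      simp only [Set.mem_setOf_eq]
      rw [hsum']
      rwa [abs_of_neg h] at habs
  calc μ {ω | ε ≤ |(∑ i, X i ω) / (n : ℝ) - u|}
      ≤ μ ({ω | ε * n ≤ ∑ i, (X i ω - u)} ∪ {ω | ε * n ≤ ∑ i, (u - X i ω)}) :=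
        measure_mono hsub
    _ ≤ μ {ω | ε * n ≤ ∑ i, (X i ω - u)} + μ {ω | ε * n ≤ ∑ i, (u - X i ω)} :=
        measure_union_le _ _
    _ ≤ ENNReal.ofReal (C₁ / (n : ℝ) ^ (p - 1)) + ENNReal.ofReal (C₁ / (n : ℝ) ^ (p - 1)) :=
        add_le_add hA hB
    _ = ENNReal.ofReal (2 * C₁ / (n : ℝ) ^ (p - 1)) := by
        rw [← ENNReal.ofReal_add (by positivity) (by positivity)]
        congr 1
        ring


end Stmt17
end

section
/- Let {A_n} and {B_n} be countable collections of closed sets of a metric space, and set A = ⋃_n A_n, B = ⋃_n B_n. If A ∩ B = ∅, then there exist collections {A'_n} and {B'_n} of sets, nested (A'_n ⊆ A'_{n+1}, B'_n ⊆ B'_{n+1}), with A = ⋃_n A'_n, B = ⋃_n B'_n, and inf{d(x, y) : x ∈ A'_n, y ∈ B'_n} > 0 for every n. -/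
open Set

namespace Stmt19

/-- Let `{A_n}` and `{B_n}` be countable collections of closed sets of a
metric space with `(⋃_n A_n) ∩ (⋃_n B_n) = ∅`. Then there are nested collections `{A'_n}`,
`{B'_n}` with the same unions such that for every `n` the sets `A'_n` and `B'_n` are at positive
distance from each other. -/
theorem exists_nested_positively_separated {S : Type*} [MetricSpace S]
    (A B : ℕ → Set S) (hA : ∀ n, IsClosed (A n)) (hB : ∀ n, IsClosed (B n))
    (hdisj : (⋃ n, A n) ∩ (⋃ n, B n) = ∅) :
    ∃ A' B' : ℕ → Set S,
      (∀ n, A' n ⊆ A' (n + 1)) ∧ (∀ n, B' n ⊆ B' (n + 1)) ∧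
      (⋃ n, A' n) = (⋃ n, A n) ∧ (⋃ n, B' n) = (⋃ n, B n) ∧
      ∀ n, ∃ δ : ℝ, 0 < δ ∧ ∀ x ∈ A' n, ∀ y ∈ B' n, δ ≤ dist x y := by
  -- A point of `⋃ A` is in no `B j`, and vice versa.
  have hnotB : ∀ k j, ∀ x ∈ A k, x ∉ B j := by
    intro k j x hx hxB
    have : x ∈ (⋃ n, A n) ∩ (⋃ n, B n) :=
      ⟨mem_iUnion.2 ⟨k, hx⟩, mem_iUnion.2 ⟨j, hxB⟩⟩
    simp [hdisj] at this
  have hnotA : ∀ k j, ∀ y ∈ B k, y ∉ A j := by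
    intro k j y hy hyA
    have : y ∈ (⋃ n, A n) ∩ (⋃ n, B n) :=
      ⟨mem_iUnion.2 ⟨j, hyA⟩, mem_iUnion.2 ⟨k, hy⟩⟩
    simp [hdisj] at this
  -- a point of a closed set's complement is at positive distance from it
  have hsep : ∀ (C : Set S), IsClosed C → ∀ x ∉ C, ∃ ε : ℝ, 0 < ε ∧
      ∀ y ∈ C, ε ≤ dist x y := by
    intro C hC x hx
    have hxo : x ∈ Cᶜ := hx
    obtain ⟨ε, hε, hball⟩ := Metric.isOpen_iff.1 hC.isOpen_compl x hxo
    refine ⟨ε, hε, fun y hy => ?_⟩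
    by_contra h
    push_neg at h
    exact hball (by simpa [Metric.mem_ball, dist_comm] using h) hy
  set A' : ℕ → Set S :=
    fun n => {x | ∃ k ≤ n, x ∈ A k ∧ ∀ j ≤ k, ∀ y ∈ B j, 1 / (n + 1 : ℝ) ≤ dist x y}
    with hA'
  set B' : ℕ → Set S :=
    fun n => {y | ∃ k ≤ n, y ∈ B k ∧ ∀ j ≤ k, ∀ x ∈ A j, 1 / (n + 1 : ℝ) ≤ dist y x}
    with hB'
  have hthresh : ∀ n : ℕ, (0:ℝ) < 1 / (n + 1 : ℝ) := by
    intro n; positivity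
  have hmono : ∀ n : ℕ, 1 / ((n:ℝ) + 1 + 1) ≤ 1 / ((n:ℝ) + 1) := by
    intro n
    apply one_div_le_one_div_of_le
    · positivity
    · linarith
  refine ⟨A', B', ?_, ?_, ?_, ?_, ?_⟩
  · -- A' nested
    rintro n x ⟨k, hk, hxA, hcond⟩
    refine ⟨k, hk.trans (Nat.le_succ n), hxA, fun j hj y hy => ?_⟩
    have h1 := hmono n
    have h2 := hcond j hj y hy
    push_cast
    linarith
  · -- B' nested
    rintro n y ⟨k, hk, hyB, hcond⟩
    refine ⟨k, hk.trans (Nat.le_succ n), hyB, fun j hj x hx => ?_⟩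
    have h1 := hmono n
    have h2 := hcond j hj x hx
    push_cast
    linarith
  · -- ⋃ A' = ⋃ A
    apply Subset.antisymm
    · rintro x hx
      obtain ⟨n, k, _, hxA, _⟩ := mem_iUnion.1 hx
      exact mem_iUnion.2 ⟨k, hxA⟩
    · rintro x hx
      obtain ⟨k, hxA⟩ := mem_iUnion.1 hx
      -- for each j ≤ k, positive distance ε j to B j
      choose ε hε hεd using fun j : Fin (k+1) =>
        hsep (B j) (hB j) x (hnotB k j x hxA)
      obtain ⟨e, he, hed⟩ : ∃ e : ℝ, 0 < e ∧ ∀ j : Fin (k+1), e ≤ ε j := by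
        obtain ⟨j0, hj0⟩ := Finset.exists_min_image Finset.univ ε ⟨⟨0, Nat.succ_pos k⟩, Finset.mem_univ _⟩
        exact ⟨ε j0, hε j0, fun j => hj0.2 j (Finset.mem_univ j)⟩
      obtain ⟨m, hm⟩ := exists_nat_one_div_lt he
      refine mem_iUnion.2 ⟨max k m, k, le_max_left _ _, hxA, fun j hj y hy => ?_⟩
      have h1 : 1 / ((max k m : ℕ) + 1 : ℝ) ≤ 1 / ((m : ℝ) + 1) := by
        apply one_div_le_one_div_of_le
        · positivity
        · have : (m:ℝ) ≤ ((max k m : ℕ) : ℝ) := by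
            exact_mod_cast le_max_right k m
          linarith
      calc 1 / ((max k m : ℕ) + 1 : ℝ) ≤ 1 / ((m : ℝ) + 1) := h1
        _ ≤ e := le_of_lt hm
        _ ≤ ε ⟨j, Nat.lt_succ_of_le hj⟩ := hed _
        _ ≤ dist x y := hεd ⟨j, Nat.lt_succ_of_le hj⟩ y hy
  · -- ⋃ B' = ⋃ B
    apply Subset.antisymm
    · rintro y hy
      obtain ⟨n, k, _, hyB, _⟩ := mem_iUnion.1 hy
      exact mem_iUnion.2 ⟨k, hyB⟩
    · rintro y hy
      obtain ⟨k, hyB⟩ := mem_iUnion.1 hy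
      choose ε hε hεd using fun j : Fin (k+1) =>
        hsep (A j) (hA j) y (hnotA k j y hyB)
      obtain ⟨e, he, hed⟩ : ∃ e : ℝ, 0 < e ∧ ∀ j : Fin (k+1), e ≤ ε j := by
        obtain ⟨j0, hj0⟩ := Finset.exists_min_image Finset.univ ε ⟨⟨0, Nat.succ_pos k⟩, Finset.mem_univ _⟩
        exact ⟨ε j0, hε j0, fun j => hj0.2 j (Finset.mem_univ j)⟩
      obtain ⟨m, hm⟩ := exists_nat_one_div_lt he
      refine mem_iUnion.2 ⟨max k m, k, le_max_left _ _, hyB, fun j hj x hx => ?_⟩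
      have h1 : 1 / ((max k m : ℕ) + 1 : ℝ) ≤ 1 / ((m : ℝ) + 1) := by
        apply one_div_le_one_div_of_le
        · positivity
        · have : (m:ℝ) ≤ ((max k m : ℕ) : ℝ) := by
            exact_mod_cast le_max_right k m
          linarith
      calc 1 / ((max k m : ℕ) + 1 : ℝ) ≤ 1 / ((m : ℝ) + 1) := h1
        _ ≤ e := le_of_lt hm
        _ ≤ ε ⟨j, Nat.lt_succ_of_le hj⟩ := hed _
        _ ≤ dist y x := hεd ⟨j, Nat.lt_succ_of_le hj⟩ x hx
  · -- positive separation
    intro n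
    refine ⟨1 / (n + 1 : ℝ), hthresh n, ?_⟩
    rintro x ⟨k, hk, hxA, hxcond⟩ y ⟨l, hl, hyB, hycond⟩
    rcases le_total l k with h | h
    · exact hxcond l h y hyB
    · calc (1 : ℝ) / (n + 1 : ℝ) ≤ dist y x := hycond k h x hxA
        _ = dist x y := dist_comm y x

end Stmt19
end
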